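/- arXiv:2110.00049 — 11 statements merged into one kernel-verified Lean document; each statement's English description precedes it below -/
import Mathlib

section
/- Let G be a compact group with normalized Haar measure μ, let r ≥ 1, and let X be a closed symmetric subset of G containing the identity. If μ(X) > 1/(r+1), then the closed subgroup generated by X equals X^{3r}, the set of products of 3r elements of X. -/
open MeasureTheory
open scoped ENNReal Pointwise

theorem stmt2 {G : Type*} [Group G] [TopologicalSpace G] [IsTopologicalGroup G]
    [CompactSpace G] [T2Space G] [MeasurableSpace G] [BorelSpace G]
    (μ : Measure G) [μ.IsHaarMeasure] [IsProbabilityMeasure μ]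
    (r : ℕ) (hr : 1 ≤ r) (X : Set G) (hX : IsClosed X) (hsym : X⁻¹ = X)
    (h1 : (1 : G) ∈ X) (hμ : ((r : ℝ≥0∞) + 1)⁻¹ < μ X) :
    ((Subgroup.closure X).topologicalClosure : Set G) = X ^ (3 * r) := by
  have hmono : ∀ {a b : ℕ}, a ≤ b → X ^ a ⊆ X ^ b := fun hab =>
    Set.pow_subset_pow_right h1 hab
  -- Step 1: find a stabilization index
  have key : ∃ j, 1 ≤ j ∧ j ≤ r ∧ X ^ (3 * j) ⊆ X ^ (3 * j - 1) := by
    by_contra hcon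
    push_neg at hcon
    have hch : ∀ j : ℕ, ∃ x : G, (j ≤ r → x ∈ X ^ (3 * j)) ∧
        (1 ≤ j → j ≤ r → x ∉ X ^ (3 * j - 1)) := by
      intro j
      rcases Nat.lt_or_ge r j with hj | hj
      · exact ⟨1, fun h => absurd h (by omega), fun _ h => absurd h (by omega)⟩
      rcases Nat.eq_zero_or_pos j with h0 | h1j
      · exact ⟨1, fun _ => by simp [h0], fun h => by omega⟩
      · obtain ⟨x, hx1, hx2⟩ := Set.not_subset.1 (hcon j h1j hj)
        exact ⟨x, fun _ => hx1, fun _ _ => hx2⟩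
    choose g hg1 hg2 using hch
    have hdj : ∀ i j, i < j → j ≤ r → Disjoint (g i • X) (g j • X) := by
      intro i j hij hjr
      rw [Set.disjoint_left]
      rintro x ⟨a, ha, rfl⟩ ⟨b, hb, hEq⟩
      simp only [smul_eq_mul] at hEq ⊢
      have hb' : b⁻¹ ∈ X := by rw [← hsym]; exact Set.inv_mem_inv.2 hb
      have hgi : g i ∈ X ^ (3 * i) := hg1 i (by omega)
      have hmem : g i * a * b⁻¹ ∈ X ^ (3 * i) * X * X :=
        Set.mul_mem_mul (Set.mul_mem_mul hgi ha) hb'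
      have hgj : g j = g i * a * b⁻¹ := by
        rw [← hEq, mul_inv_cancel_right]
      have hsub : X ^ (3 * i) * X * X ⊆ X ^ (3 * j - 1) := by
        rw [← pow_succ, ← pow_succ]
        exact hmono (by omega)
      exact hg2 j (by omega) hjr (hgj ▸ hsub hmem)
    have hpd : (↑(Finset.range (r + 1)) : Set ℕ).PairwiseDisjoint (fun j => g j • X) := by
      intro i hi j hj hne
      simp only [Finset.coe_range, Set.mem_Iio] at hi hj
      rcases lt_or_gt_of_ne hne with h | h
      · exact hdj i j h (by omega)
      · exact (hdj j i h (by omega)).symm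
    have hms : ∀ j ∈ Finset.range (r + 1), MeasurableSet (g j • X) := fun j _ =>
      (hX.smul (g j)).measurableSet
    have hsum : ∑ j ∈ Finset.range (r + 1), μ (g j • X) ≤ 1 := by
      rw [← measure_biUnion_finset hpd hms]
      exact (measure_mono (Set.subset_univ _)).trans_eq measure_univ
    have hval : ∀ j : ℕ, μ (g j • X) = μ X := fun j => MeasureTheory.measure_smul (μ := μ) (g j) X
    rw [Finset.sum_congr rfl (fun j _ => hval j), Finset.sum_const, Finset.card_range,
      nsmul_eq_mul] at hsum
    have h0 : ((r : ℝ≥0∞) + 1) ≠ 0 := by simp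
    have htop : ((r : ℝ≥0∞) + 1) ≠ ⊤ := by
      simp [ENNReal.add_ne_top]
    have hlt : (1 : ℝ≥0∞) < ((r : ℝ≥0∞) + 1) * μ X := by
      calc (1 : ℝ≥0∞) = ((r : ℝ≥0∞) + 1) * ((r : ℝ≥0∞) + 1)⁻¹ :=
            (ENNReal.mul_inv_cancel h0 htop).symm
        _ < ((r : ℝ≥0∞) + 1) * μ X := ENNReal.mul_lt_mul_right h0 htop hμ
    have : ((r : ℝ≥0∞) + 1) = ((r + 1 : ℕ) : ℝ≥0∞) := by push_cast; ring
    rw [this] at hlt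
    exact absurd hsum (not_le.2 hlt)
  obtain ⟨j, hj1, hjr, hkey⟩ := key
  set n : ℕ := 3 * j - 1 with hn
  have hn1 : 3 * j = n + 1 := by omega
  have hsucc : X ^ (n + 1) = X ^ n :=
    subset_antisymm (hn1 ▸ hkey) (hmono (Nat.le_succ n))
  have hstab : ∀ m : ℕ, X ^ (n + m) = X ^ n := by
    intro m
    induction m with
    | zero => rfl
    | succ m ih =>
      have : n + (m + 1) = (n + m) + 1 := by omega
      rw [this, pow_succ, ih, ← pow_succ, hsucc]
  -- X ^ n is a subgroup
  have hone : ∀ k : ℕ, (1 : G) ∈ X ^ k := by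
    intro k
    exact hmono (Nat.zero_le k) (by simp [Set.mem_one])
  have hmul : ∀ a b : G, a ∈ X ^ n → b ∈ X ^ n → a * b ∈ X ^ n := by
    intro a b ha hb
    have : a * b ∈ X ^ n * X ^ n := Set.mul_mem_mul ha hb
    rwa [← pow_add, hstab n] at this
  have hinv : ∀ a : G, a ∈ X ^ n → a⁻¹ ∈ X ^ n := by
    intro a ha
    have h' : (X ^ n)⁻¹ = X ^ n := by rw [← inv_pow, hsym]
    rw [← h']
    exact Set.inv_mem_inv.2 ha
  let K : Subgroup G :=
    { carrier := X ^ n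
      one_mem' := hone n
      mul_mem' := fun ha hb => hmul _ _ ha hb
      inv_mem' := fun ha => hinv _ ha }
  have hXK : X ⊆ (K : Set G) := by
    have : X ^ 1 ⊆ X ^ n := hmono (by omega)
    exact fun x hx => this (by simpa using hx)
  have hle : (Subgroup.closure X : Set G) ⊆ X ^ n :=
    (Subgroup.closure_le K).2 hXK
  have hge : ∀ k : ℕ, X ^ k ⊆ (Subgroup.closure X : Set G) := by
    intro k
    induction k with
    | zero =>
      rintro x hx
      rw [pow_zero] at hx
      rw [Set.mem_one.1 hx]
      exact one_mem _
    | succ k ih =>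
      rw [pow_succ]
      rintro x ⟨a, ha, b, hb, rfl⟩
      exact mul_mem (ih ha) (Subgroup.subset_closure hb)
  have hEq : (Subgroup.closure X : Set G) = X ^ n := subset_antisymm hle (hge n)
  have hcomp : ∀ k : ℕ, IsCompact (X ^ k) := by
    intro k
    induction k with
    | zero =>
      rw [pow_zero]
      exact isCompact_singleton
    | succ k ih =>
      rw [pow_succ]
      exact ih.mul hX.isCompact
  have hclosed : IsClosed (X ^ n) := (hcomp n).isClosed
  have hfinal : X ^ (3 * r) = X ^ n := by
    have h3r : 3 * r = n + (3 * r - n) := by omega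
    rw [h3r, hstab]
  rw [Subgroup.topologicalClosure_coe, hEq, hclosed.closure_eq, hfinal]
end

section
/- Let G be a compact Hausdorff topological group and n a positive integer. Then the set X = {x ∈ G : the conjugacy class of x in G has at most n elements} is a closed subset of G. -/
theorem stmt3 {G : Type*} [Group G] [TopologicalSpace G] [IsTopologicalGroup G]
    [CompactSpace G] [T2Space G] (n : ℕ) (hn : 0 < n) :
    IsClosed {x : G | {y : G | ∃ g : G, g⁻¹ * x * g = y}.Finite ∧
      {y : G | ∃ g : G, g⁻¹ * x * g = y}.ncard ≤ n} := by
  have key : {x : G | {y : G | ∃ g : G, g⁻¹ * x * g = y}.Finite ∧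
      {y : G | ∃ g : G, g⁻¹ * x * g = y}.ncard ≤ n} =
      ⋂ g : Fin (n+1) → G, {x : G | ∃ i j, i ≠ j ∧
        (g i)⁻¹ * x * (g i) = (g j)⁻¹ * x * (g j)} := by
    ext x
    simp only [Set.mem_setOf_eq, Set.mem_iInter]
    constructor
    · rintro ⟨hfin, hcard⟩ g
      haveI := hfin.fintype
      have hlt : Fintype.card {y : G | ∃ g : G, g⁻¹ * x * g = y} <
          Fintype.card (Fin (n+1)) := by
        rw [Fintype.card_fin, ← Set.toFinset_card, ← Set.ncard_eq_toFinset_card']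
        omega
      obtain ⟨i, j, hne, heq⟩ := Fintype.exists_ne_map_eq_of_card_lt
        (fun i : Fin (n+1) =>
          (⟨(g i)⁻¹ * x * (g i), ⟨g i, rfl⟩⟩ : {y : G | ∃ g : G, g⁻¹ * x * g = y})) hlt
      exact ⟨i, j, hne, congrArg Subtype.val heq⟩
    · intro h
      by_contra hcon
      obtain ⟨t, hts, htfin, htcard⟩ : ∃ t ⊆ {y : G | ∃ g : G, g⁻¹ * x * g = y},
          t.Finite ∧ t.ncard = n + 1 := by
        rcases Set.finite_or_infinite {y : G | ∃ g : G, g⁻¹ * x * g = y} with hf | hf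
        · have hgt : n + 1 ≤ {y : G | ∃ g : G, g⁻¹ * x * g = y}.ncard := by
            by_contra hle
            exact hcon ⟨hf, by omega⟩
          obtain ⟨t, hts, htcard⟩ := Set.exists_subset_card_eq hgt
          exact ⟨t, hts, (hf.subset hts), htcard⟩
        · obtain ⟨t, hts, htfin, htcard⟩ := hf.exists_subset_ncard_eq (n + 1)
          exact ⟨t, hts, htfin, htcard⟩
      haveI := htfin.fintype
      have hcardt : Fintype.card t = n + 1 := by
        rw [← Set.toFinset_card, ← Set.ncard_eq_toFinset_card']; exact htcard
      let e := (Fintype.equivFinOfCardEq hcardt).symm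
      have hmem : ∀ i : Fin (n+1), ∃ g : G, g⁻¹ * x * g = (e i : G) := fun i =>
        hts (e i).2
      choose g hg using hmem
      obtain ⟨i, j, hne, heq⟩ := h g
      apply hne
      have : (e i : G) = (e j : G) := by rw [← hg i, ← hg j, heq]
      exact e.injective.eq_iff.mp (Subtype.ext this) ▸ rfl
  rw [key]
  refine isClosed_iInter fun g => ?_
  have : {x : G | ∃ i j, i ≠ j ∧ (g i)⁻¹ * x * (g i) = (g j)⁻¹ * x * (g j)} =
      ⋃ i, ⋃ j, ⋃ (_ : i ≠ j), {x : G | (g i)⁻¹ * x * (g i) = (g j)⁻¹ * x * (g j)} := by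
    ext x; simp [Set.mem_setOf_eq]
  rw [this]
  refine isClosed_iUnion_of_finite fun i => isClosed_iUnion_of_finite fun j =>
    isClosed_iUnion_of_finite fun _ => isClosed_eq ?_ ?_ <;> continuity
end

section
/- Let G be a topological group, S an arbitrary subset of G, and n a positive integer. Then the set {x ∈ G : the set of S-conjugates x^S = {s⁻¹xs : s ∈ S} has at most n elements} is closed in G, provided G is Hausdorff. -/
lemma aux_card {α : Type*} (s : Set α) (n : ℕ)
    (h : ∀ g : Fin (n+1) → α, (∀ i, g i ∈ s) → ∃ i j, i ≠ j ∧ g i = g j) :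
    s.Finite ∧ s.ncard ≤ n := by
  by_cases hfin : s.Finite
  · refine ⟨hfin, ?_⟩
    by_contra hlt
    push_neg at hlt
    obtain ⟨t, hts, htc⟩ := Set.exists_subset_card_eq (show n + 1 ≤ s.ncard from hlt)
    have htf : t.Finite := hfin.subset hts
    haveI : Fintype t := htf.fintype
    have hcard : Fintype.card t = n + 1 := by
      rw [Set.ncard_eq_toFinset_card'] at htc; rwa [Set.toFinset_card] at htc
    have e : Fin (n+1) ≃ t := (Fintype.equivFinOfCardEq hcard).symm
    obtain ⟨i, j, hij, hgij⟩ := h (fun i => (e i : α)) (fun i => hts (e i).2)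
    exact hij (e.injective (Subtype.ext hgij))
  · exfalso
    have emb := Set.Infinite.natEmbedding s hfin
    obtain ⟨i, j, hij, hgij⟩ := h (fun i => (emb i : α)) (fun i => (emb i).2)
    exact hij (Fin.val_injective (emb.injective (Subtype.ext hgij)))

lemma aux_card' {α : Type*} (s : Set α) (n : ℕ) (hfin : s.Finite) (hle : s.ncard ≤ n)
    (g : Fin (n+1) → α) (hg : ∀ i, g i ∈ s) : ∃ i j, i ≠ j ∧ g i = g j := by
  by_contra hcon
  push_neg at hcon
  have hinj : Function.Injective g := fun i j hij => by
    by_contra hne; exact hcon i j hne hij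
  have h1 : (Set.range g).ncard = n + 1 := by
    rw [← Nat.card_coe_set_eq, Nat.card_range_of_injective hinj, Nat.card_eq_fintype_card, Fintype.card_fin]
  have h2 : (Set.range g).ncard ≤ s.ncard :=
    Set.ncard_le_ncard (Set.range_subset_iff.2 hg) hfin
  omega

theorem stmt4 {G : Type*} [Group G] [TopologicalSpace G] [IsTopologicalGroup G]
    [CompactSpace G] [T2Space G] (S : Set G) (n : ℕ) (hn : 0 < n) :
    IsClosed {x : G | {y : G | ∃ s ∈ S, s⁻¹ * x * s = y}.Finite ∧
      {y : G | ∃ s ∈ S, s⁻¹ * x * s = y}.ncard ≤ n} := by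
  have hset : {x : G | {y : G | ∃ s ∈ S, s⁻¹ * x * s = y}.Finite ∧
      {y : G | ∃ s ∈ S, s⁻¹ * x * s = y}.ncard ≤ n} =
      ⋂ (f : Fin (n+1) → S),
        ⋃ (i : Fin (n+1)) (j : Fin (n+1)) (_ : i ≠ j),
          {x : G | (f i : G)⁻¹ * x * (f i : G) = (f j : G)⁻¹ * x * (f j : G)} := by
    ext x
    simp only [Set.mem_setOf_eq, Set.mem_iInter, Set.mem_iUnion]
    constructor
    · rintro ⟨hfin, hle⟩ f
      obtain ⟨i, j, hij, heq⟩ := aux_card' _ n hfin hle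
        (fun i => (f i : G)⁻¹ * x * (f i : G)) (fun i => ⟨f i, (f i).2, rfl⟩)
      exact ⟨i, j, hij, heq⟩
    · intro h
      apply aux_card
      intro g hg
      choose s hsS hseq using hg
      obtain ⟨i, j, hij, heq⟩ := h (fun i => ⟨s i, hsS i⟩)
      exact ⟨i, j, hij, by rw [← hseq i, ← hseq j]; exact heq⟩
  rw [hset]
  refine isClosed_iInter fun f => ?_
  refine isClosed_iUnion_of_finite fun i => ?_
  refine isClosed_iUnion_of_finite fun j => ?_
  refine isClosed_iUnion_of_finite fun _ => ?_
  exact isClosed_eq (by fun_prop) (by fun_prop)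
end

section
/- Let H and K be closed subgroups of a compact group G with H ≤ K. Then Pr(K,G) ≤ Pr(H,G) ≤ Pr(H,K). In particular, Pr(G,G) ≤ Pr(K,G) ≤ Pr(K,K). -/
open MeasureTheory
open scoped ENNReal Pointwise

/-- The commuting probability `Pr(K, G)`: the measure, with respect to the
product of the given (normalized Haar) measures on `K` and `G`, of the set of
commuting pairs in `K × G`. -/
noncomputable def haarCommProb {G : Type*} [Group G] [MeasurableSpace G]
    (K : Subgroup G) (ν : Measure K) (μ : Measure G) : ℝ≥0∞ :=
  (ν.prod μ) {p : K × G | (p.1 : G) * p.2 = p.2 * (p.1 : G)}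

section Aux

/-- The subgroup of elements commuting with a fixed element `y`. -/
def commSG {G : Type*} [Group G] (y : G) : Subgroup G where
  carrier := {g | g * y = y * g}
  one_mem' := by simp
  mul_mem' := by
    intro a b ha hb
    simp only [Set.mem_setOf_eq] at *
    rw [mul_assoc, hb, ← mul_assoc, ha, mul_assoc]
  inv_mem' := by
    intro a ha
    simp only [Set.mem_setOf_eq] at *
    have h := congrArg (fun z => a⁻¹ * z * a⁻¹) ha
    simpa [mul_assoc] using h.symm

lemma commSG_coe {G : Type*} [Group G] (y : G) :
    (commSG y : Set G) = {g | g * y = y * g} := rfl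

lemma commSG_coe' {G : Type*} [Group G] (y : G) :
    (commSG y : Set G) = {g | y * g = g * y} := Set.ext fun _ => eq_comm

lemma commSG_isClosed {G : Type*} [Group G] [TopologicalSpace G] [IsTopologicalGroup G]
    [T2Space G] (y : G) : IsClosed (commSG y : Set G) :=
  isClosed_eq (continuous_id.mul continuous_const) (continuous_const.mul continuous_id)

variable {G : Type*} [Group G] [TopologicalSpace G] [IsTopologicalGroup G]
  [CompactSpace G] [MeasurableSpace G] [BorelSpace G]

/-- An open subgroup of a compact group has measure `1 / index` for a
left-invariant probability measure. -/
lemma meas_open_subgroup (μ : Measure G) [μ.IsMulLeftInvariant] [IsProbabilityMeasure μ]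
    (L : Subgroup G) (hLo : IsOpen (L : Set G)) :
    μ (L : Set G) = (L.index : ℝ≥0∞)⁻¹ := by
  have hfin : Finite (G ⧸ L) := L.quotient_finite_of_isOpen hLo
  haveI : L.FiniteIndex := L.finiteIndex_of_finite_quotient
  haveI : Fintype (G ⧸ L) := Fintype.ofFinite _
  have hset : ∀ q : G ⧸ L,
      ((QuotientGroup.mk : G → G ⧸ L) ⁻¹' {q}) = (fun x => (Quotient.out q)⁻¹ * x) ⁻¹' L := by
    intro q
    ext x
    simp only [Set.mem_preimage, Set.mem_singleton_iff, SetLike.mem_coe]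
    constructor
    · intro hx
      exact QuotientGroup.eq.mp (by rw [QuotientGroup.out_eq', hx])
    · intro hx
      have : ((Quotient.out q : G) : G ⧸ L) = (x : G ⧸ L) := QuotientGroup.eq.mpr hx
      rw [← this, QuotientGroup.out_eq']
  have hmeas : ∀ q : G ⧸ L, MeasurableSet ((QuotientGroup.mk : G → G ⧸ L) ⁻¹' {q}) := by
    intro q
    rw [hset q]
    exact (measurable_const_mul _) (hLo.measurableSet)
  have hval : ∀ q : G ⧸ L, μ ((QuotientGroup.mk : G → G ⧸ L) ⁻¹' {q}) = μ (L : Set G) := by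
    intro q
    rw [hset q]
    exact measure_preimage_mul μ _ _
  have hcover : (Set.univ : Set G) = ⋃ q : G ⧸ L, (QuotientGroup.mk : G → G ⧸ L) ⁻¹' {q} := by
    ext x
    simp
  have hdisj : Pairwise (Function.onFun Disjoint
      fun q : G ⧸ L => (QuotientGroup.mk : G → G ⧸ L) ⁻¹' {q}) := by
    intro a b hab
    refine Set.disjoint_left.mpr ?_
    intro x hxa hxb
    exact hab (hxa.symm.trans hxb)
  have h1 : (1 : ℝ≥0∞) = ∑' q : G ⧸ L, μ ((QuotientGroup.mk : G → G ⧸ L) ⁻¹' {q}) := by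
    rw [← measure_iUnion hdisj hmeas, ← hcover, measure_univ]
  rw [tsum_fintype] at h1
  simp only [hval, Finset.sum_const, Finset.card_univ, nsmul_eq_mul] at h1
  have hcard : (Fintype.card (G ⧸ L) : ℝ≥0∞) = (L.index : ℝ≥0∞) := by
    norm_cast
    rw [Subgroup.index_eq_card, Nat.card_eq_fintype_card]
  rw [hcard] at h1
  have hn0 : (L.index : ℝ≥0∞) ≠ 0 := by
    simp [Subgroup.FiniteIndex.index_ne_zero]
  have hnt : (L.index : ℝ≥0∞) ≠ ⊤ := ENNReal.natCast_ne_top _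
  calc μ (L : Set G) = (L.index : ℝ≥0∞)⁻¹ * ((L.index : ℝ≥0∞) * μ (L : Set G)) := by
        rw [← mul_assoc, ENNReal.inv_mul_cancel hn0 hnt, one_mul]
    _ = (L.index : ℝ≥0∞)⁻¹ := by rw [← h1, mul_one]

/-- A closed subgroup of positive Haar measure in a compact group is open. -/
lemma isOpen_of_measure_ne_zero [T2Space G] (μ : Measure G) [μ.IsHaarMeasure]
    [IsProbabilityMeasure μ] (L : Subgroup G) (hLc : IsClosed (L : Set G))
    (h : μ (L : Set G) ≠ 0) : IsOpen (L : Set G) := by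
  have hpos : 0 < μ (L : Set G) := pos_iff_ne_zero.mpr h
  have hnhds : (L : Set G) / (L : Set G) ∈ nhds (1 : G) :=
    μ.div_mem_nhds_one_of_haar_pos (L : Set G) hLc.measurableSet hpos
  have hdiv : (L : Set G) / (L : Set G) = (L : Set G) := by
    ext x
    constructor
    · rintro ⟨a, ha, b, hb, rfl⟩
      exact div_mem ha hb
    · intro hx
      exact ⟨x, hx, 1, one_mem L, by simp⟩
  rw [hdiv] at hnhds
  exact Subgroup.isOpen_of_mem_nhds L hnhds

end Aux

/-- The key comparison: for a continuous homomorphism `φ : K →* G` of compact groups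
with Haar probability measures, and a closed subgroup `L ≤ G`,
`μ L ≤ ν (φ ⁻¹' L)`. -/
lemma key_comparison {K G : Type*}
    [Group K] [TopologicalSpace K] [IsTopologicalGroup K] [CompactSpace K] [T2Space K]
    [MeasurableSpace K] [BorelSpace K]
    [Group G] [TopologicalSpace G] [IsTopologicalGroup G] [CompactSpace G] [T2Space G]
    [MeasurableSpace G] [BorelSpace G]
    (μ : Measure G) [μ.IsHaarMeasure] [IsProbabilityMeasure μ]
    (ν : Measure K) [ν.IsHaarMeasure] [IsProbabilityMeasure ν]
    (φ : K →* G) (hφ : Continuous φ)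
    (L : Subgroup G) (hLc : IsClosed (L : Set G)) :
    μ (L : Set G) ≤ ν (φ ⁻¹' (L : Set G)) := by
  by_cases h : μ (L : Set G) = 0
  · rw [h]; exact zero_le
  · have hLo : IsOpen (L : Set G) := isOpen_of_measure_ne_zero μ L hLc h
    have hcoe : (φ ⁻¹' (L : Set G)) = ((L.comap φ : Subgroup K) : Set K) := rfl
    have hKo : IsOpen ((L.comap φ : Subgroup K) : Set K) := by
      rw [← hcoe]; exact hLo.preimage hφ
    rw [meas_open_subgroup μ L hLo, hcoe, meas_open_subgroup ν _ hKo]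
    -- index comparison
    have hfin : Finite (G ⧸ L) := L.quotient_finite_of_isOpen hLo
    haveI : L.FiniteIndex := L.finiteIndex_of_finite_quotient
    have hidx : (L.comap φ).index ≤ L.index := by
      rw [Subgroup.index_comap, ← Subgroup.relIndex_top_right]
      exact Subgroup.relIndex_le_of_le_right le_top
        (by rw [Subgroup.relIndex_top_right]; exact Subgroup.FiniteIndex.index_ne_zero)
    exact ENNReal.inv_le_inv.mpr (by exact_mod_cast hidx)


section RectApprox

variable {X Y : Type*} [TopologicalSpace X] [MeasurableSpace X] [OpensMeasurableSpace X]
  [TopologicalSpace Y] [MeasurableSpace Y] [OpensMeasurableSpace Y]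

/-- A countable union of open rectangles. -/
def IsOpenRectUnion (O : Set (X × Y)) : Prop :=
  ∃ f : ℕ → Set X × Set Y, (∀ n, IsOpen (f n).1 ∧ IsOpen (f n).2) ∧ O = ⋃ n, (f n).1 ×ˢ (f n).2

lemma IsOpenRectUnion.measurableSet {O : Set (X × Y)} (h : IsOpenRectUnion O) :
    MeasurableSet O := by
  obtain ⟨f, hf, rfl⟩ := h
  exact MeasurableSet.iUnion fun n => ((hf n).1.measurableSet).prod ((hf n).2.measurableSet)

lemma isOpenRectUnion_rect {U : Set X} {V : Set Y} (hU : IsOpen U) (hV : IsOpen V) :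
    IsOpenRectUnion (U ×ˢ V) :=
  ⟨fun _ => (U, V), fun _ => ⟨hU, hV⟩, (Set.iUnion_const _).symm⟩

lemma isOpenRectUnion_empty : IsOpenRectUnion (∅ : Set (X × Y)) := by
  have h := isOpenRectUnion_rect (isOpen_empty (X := X)) (isOpen_empty (X := Y))
  simpa using h

lemma isOpenRectUnion_univ : IsOpenRectUnion (Set.univ : Set (X × Y)) := by
  have h := isOpenRectUnion_rect (isOpen_univ (X := X)) (isOpen_univ (X := Y))
  rwa [Set.univ_prod_univ] at h

lemma IsOpenRectUnion.iUnion {g : ℕ → Set (X × Y)} (h : ∀ n, IsOpenRectUnion (g n)) :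
    IsOpenRectUnion (⋃ n, g n) := by
  choose f hf hfeq using h
  have e : ℕ ≃ ℕ × ℕ := (Denumerable.eqv (ℕ × ℕ)).symm
  refine ⟨fun n => f (e n).1 (e n).2, fun n => hf _ _, ?_⟩
  have : ⋃ n, g n = ⋃ p : ℕ × ℕ, (f p.1 p.2).1 ×ˢ (f p.1 p.2).2 := by
    simp_rw [hfeq]
    ext q
    simp only [Set.mem_iUnion, Prod.exists]
  rw [this]
  exact (e.surjective.iUnion_comp _).symm

lemma IsOpenRectUnion.union {O₁ O₂ : Set (X × Y)} (h₁ : IsOpenRectUnion O₁)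
    (h₂ : IsOpenRectUnion O₂) : IsOpenRectUnion (O₁ ∪ O₂) := by
  have : O₁ ∪ O₂ = ⋃ n : ℕ, if n = 0 then O₁ else O₂ := by
    ext p
    simp only [Set.mem_union, Set.mem_iUnion]
    constructor
    · rintro (hp | hp)
      exacts [⟨0, by simpa⟩, ⟨1, by simpa⟩]
    · rintro ⟨n, hn⟩
      by_cases h : n = 0 <;> simp [h] at hn <;> [exact Or.inl hn; exact Or.inr hn]
  rw [this]
  exact IsOpenRectUnion.iUnion fun n => by by_cases h : n = 0 <;> simp [h, h₁, h₂]

lemma IsOpenRectUnion.inter {O₁ O₂ : Set (X × Y)} (h₁ : IsOpenRectUnion O₁)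
    (h₂ : IsOpenRectUnion O₂) : IsOpenRectUnion (O₁ ∩ O₂) := by
  obtain ⟨f, hf, rfl⟩ := h₁
  obtain ⟨g, hg, rfl⟩ := h₂
  have e : ℕ ≃ ℕ × ℕ := (Denumerable.eqv (ℕ × ℕ)).symm
  refine ⟨fun n => ((f (e n).1).1 ∩ (g (e n).2).1, (f (e n).1).2 ∩ (g (e n).2).2),
    fun n => ⟨(hf _).1.inter (hg _).1, (hf _).2.inter (hg _).2⟩, ?_⟩
  have : (⋃ n, (f n).1 ×ˢ (f n).2) ∩ ⋃ n, (g n).1 ×ˢ (g n).2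
      = ⋃ p : ℕ × ℕ, ((f p.1).1 ∩ (g p.2).1) ×ˢ ((f p.1).2 ∩ (g p.2).2) := by
    ext ⟨x, y⟩
    simp only [Set.mem_inter_iff, Set.mem_iUnion, Set.mem_prod]
    constructor
    · rintro ⟨⟨n, hn1, hn2⟩, ⟨m, hm1, hm2⟩⟩
      exact ⟨(n, m), ⟨hn1, hm1⟩, ⟨hn2, hm2⟩⟩
    · rintro ⟨⟨n, m⟩, ⟨hn1, hm1⟩, ⟨hn2, hm2⟩⟩
      exact ⟨⟨n, hn1, hn2⟩, ⟨m, hm1, hm2⟩⟩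
  rw [this]
  exact (e.surjective.iUnion_comp _).symm

lemma IsOpenRectUnion.biInter_le {g : ℕ → Set (X × Y)} (h : ∀ n, IsOpenRectUnion (g n)) :
    ∀ N : ℕ, IsOpenRectUnion (⋂ n ∈ Finset.range (N + 1), g n) := by
  intro N
  induction N with
  | zero => simpa using h 0
  | succ N ih =>
      have : (⋂ n ∈ Finset.range (N + 2), g n)
          = (⋂ n ∈ Finset.range (N + 1), g n) ∩ g (N + 1) := by
        rw [Finset.range_add_one]
        simp [Set.biInter_insert, Set.inter_comm]
      rw [this]
      exact ih.inter (h (N + 1))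

end RectApprox

section OuterApprox

variable {X Y : Type*} [TopologicalSpace X] [MeasurableSpace X] [OpensMeasurableSpace X]
  [TopologicalSpace Y] [MeasurableSpace Y] [OpensMeasurableSpace Y]
  (μX : Measure X) (μY : Measure Y) [IsFiniteMeasure μX] [IsFiniteMeasure μY]
  [μX.OuterRegular] [μY.OuterRegular]

/-- Outer approximation of product-measurable sets by countable unions of open
rectangles, for products of finite outer regular measures. -/
theorem prod_outer_approx {T : Set (X × Y)} (hT : MeasurableSet T) {ε : ℝ≥0∞} (hε : ε ≠ 0) :
    ∃ O, IsOpenRectUnion O ∧ T ⊆ O ∧ (μX.prod μY) O ≤ (μX.prod μY) T + ε := by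
  set ρ := μX.prod μY with hρ
  -- the strengthened statement, proven by induction on the σ-algebra
  suffices h : ∀ s : Set (X × Y), MeasurableSet s → ∀ δ : ℝ≥0∞, δ ≠ 0 →
      (∃ O, IsOpenRectUnion O ∧ s ⊆ O ∧ ρ (O \ s) ≤ δ) ∧
      (∃ O, IsOpenRectUnion O ∧ sᶜ ⊆ O ∧ ρ (O \ sᶜ) ≤ δ) by
    obtain ⟨⟨O, hO, hTO, hOd⟩, -⟩ := h T hT ε hε
    refine ⟨O, hO, hTO, ?_⟩
    calc ρ O ≤ ρ (O ∩ T) + ρ (O \ T) := measure_le_inter_add_diff ρ O T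
      _ ≤ ρ T + ε := add_le_add (measure_mono Set.inter_subset_right) hOd
  intro s hs
  -- reduce to the generated-from form
  have hs' : MeasurableSet[MeasurableSpace.generateFrom
      (Set.image2 (· ×ˢ ·) { s : Set X | MeasurableSet s } { t : Set Y | MeasurableSet t })] s := by
    rwa [generateFrom_prod]
  clear hs
  induction s, hs' using MeasurableSpace.generateFrom_induction with
  | hC t ht _ =>
      intro δ hδ
      obtain ⟨A, hA, B, hB, rfl⟩ := ht
      simp only [Set.mem_setOf_eq] at hA hB
      by_cases hδtop : δ = ∞
      · subst hδtop
        exact ⟨⟨Set.univ, isOpenRectUnion_univ, Set.subset_univ _, le_top⟩,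
          ⟨Set.univ, isOpenRectUnion_univ, Set.subset_univ _, le_top⟩⟩
      -- finite positive δ
      set c : ℝ≥0∞ := μX Set.univ + μY Set.univ + 1 with hc
      have hcX : μX Set.univ ≤ c := le_add_right le_self_add
      have hcY : μY Set.univ ≤ c := le_add_right le_add_self
      have hctop : c ≠ ∞ := by
        simp only [hc]
        exact ENNReal.add_ne_top.mpr ⟨ENNReal.add_ne_top.mpr
          ⟨measure_ne_top _ _, measure_ne_top _ _⟩, ENNReal.one_ne_top⟩
      set η : ℝ≥0∞ := δ / 2 / c with hη
      have hη0 : η ≠ 0 := by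
        simp only [hη, ne_eq, ENNReal.div_eq_zero_iff, not_or]
        exact ⟨by simp [hδ], hctop⟩
      have hηc : η * c ≤ δ / 2 := ENNReal.mul_le_of_le_div le_rfl
      have hfin : η * c + c * η ≤ δ := by
        rw [mul_comm c η]
        calc η * c + η * c ≤ δ / 2 + δ / 2 := add_le_add hηc hηc
          _ = δ := ENNReal.add_halves δ
      constructor
      · -- outer approx of A ×ˢ B
        obtain ⟨U, hAU, hUo, hU⟩ := Set.exists_isOpen_lt_add A (measure_ne_top μX A) hη0
        obtain ⟨V, hBV, hVo, hV⟩ := Set.exists_isOpen_lt_add B (measure_ne_top μY B) hη0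
        have hUA : μX (U \ A) ≤ η :=
          (measure_diff_lt_of_lt_add hA.nullMeasurableSet hAU (measure_ne_top μX A) hU).le
        have hVB : μY (V \ B) ≤ η :=
          (measure_diff_lt_of_lt_add hB.nullMeasurableSet hBV (measure_ne_top μY B) hV).le
        refine ⟨U ×ˢ V, isOpenRectUnion_rect hUo hVo, Set.prod_mono hAU hBV, ?_⟩
        have hsub : (U ×ˢ V) \ (A ×ˢ B) ⊆ ((U \ A) ×ˢ V) ∪ (U ×ˢ (V \ B)) := by
          rintro ⟨x, y⟩ ⟨⟨hxU, hyV⟩, hxy⟩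
          by_cases hx : x ∈ A
          · exact Or.inr ⟨hxU, hyV, fun hy => hxy ⟨hx, hy⟩⟩
          · exact Or.inl ⟨⟨hxU, hx⟩, hyV⟩
        calc ρ ((U ×ˢ V) \ (A ×ˢ B)) ≤ ρ ((U \ A) ×ˢ V) + ρ (U ×ˢ (V \ B)) :=
              (measure_mono hsub).trans (measure_union_le _ _)
          _ ≤ η * c + c * η := by
              rw [hρ, Measure.prod_prod, Measure.prod_prod]
              exact add_le_add
                (mul_le_mul hUA ((measure_mono (Set.subset_univ V)).trans hcY)
                  (zero_le) (zero_le))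
                (mul_le_mul ((measure_mono (Set.subset_univ U)).trans hcX) hVB
                  (zero_le) (zero_le))
          _ ≤ δ := hfin
      · -- outer approx of (A ×ˢ B)ᶜ
        obtain ⟨U, hAU, hUo, hU⟩ := Set.exists_isOpen_lt_add Aᶜ (measure_ne_top μX _) hη0
        obtain ⟨V, hBV, hVo, hV⟩ := Set.exists_isOpen_lt_add Bᶜ (measure_ne_top μY _) hη0
        have hUA : μX (U \ Aᶜ) ≤ η :=
          (measure_diff_lt_of_lt_add hA.compl.nullMeasurableSet hAU (measure_ne_top μX _) hU).le
        have hVB : μY (V \ Bᶜ) ≤ η :=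
          (measure_diff_lt_of_lt_add hB.compl.nullMeasurableSet hBV (measure_ne_top μY _) hV).le
        refine ⟨(U ×ˢ Set.univ) ∪ (Set.univ ×ˢ V),
          (isOpenRectUnion_rect hUo isOpen_univ).union
            (isOpenRectUnion_rect isOpen_univ hVo), ?_, ?_⟩
        · rintro ⟨x, y⟩ hxy
          simp only [Set.mem_compl_iff, Set.mem_prod, not_and] at hxy
          by_cases hx : x ∈ A
          · exact Or.inr ⟨Set.mem_univ x, hBV (hxy hx)⟩
          · exact Or.inl ⟨hAU hx, Set.mem_univ y⟩
        · have hsub : ((U ×ˢ Set.univ) ∪ (Set.univ ×ˢ V)) \ (A ×ˢ B)ᶜ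
              ⊆ ((U \ Aᶜ) ×ˢ Set.univ) ∪ (Set.univ ×ˢ (V \ Bᶜ)) := by
            rintro ⟨x, y⟩ ⟨hxy, hmem⟩
            simp only [Set.mem_compl_iff, not_not] at hmem
            rcases hxy with h | h
            · exact Or.inl ⟨⟨h.1, fun hx => hx hmem.1⟩, Set.mem_univ y⟩
            · exact Or.inr ⟨Set.mem_univ x, h.2, fun hy => hy hmem.2⟩
          calc ρ _ ≤ ρ ((U \ Aᶜ) ×ˢ Set.univ) + ρ (Set.univ ×ˢ (V \ Bᶜ)) :=
                (measure_mono hsub).trans (measure_union_le _ _)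
            _ ≤ η * c + c * η := by
                rw [hρ, Measure.prod_prod, Measure.prod_prod]
                exact add_le_add (mul_le_mul hUA hcY (zero_le) (zero_le))
                  (mul_le_mul hcX hVB (zero_le) (zero_le))
            _ ≤ δ := hfin
  | empty =>
      intro δ hδ
      refine ⟨⟨∅, isOpenRectUnion_empty, le_rfl, by simp⟩,
        ⟨Set.univ, isOpenRectUnion_univ, by simp, by simp⟩⟩
  | compl t ht iht =>
      intro δ hδ
      obtain ⟨h1, h2⟩ := iht δ hδ
      refine ⟨h2, ?_⟩
      rw [compl_compl]
      exact h1
  | iUnion f hfm ihf =>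
      intro δ hδ
      have hδ2 : δ / 2 ≠ 0 := by simp [ENNReal.div_eq_zero_iff, hδ]
      constructor
      · -- outer approx of the union
        obtain ⟨δ', hδ'pos, hδ'sum⟩ := ENNReal.exists_pos_sum_of_countable hδ2 ℕ
        have hO : ∀ n, ∃ O, IsOpenRectUnion O ∧ f n ⊆ O ∧ ρ (O \ f n) ≤ δ' n :=
          fun n => (ihf n (δ' n) (by exact_mod_cast (hδ'pos n).ne')).1
        choose O hO1 hO2 hO3 using hO
        refine ⟨⋃ n, O n, IsOpenRectUnion.iUnion hO1, Set.iUnion_mono hO2, ?_⟩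
        have : (⋃ n, O n) \ (⋃ n, f n) ⊆ ⋃ n, O n \ f n := by
          rintro p ⟨hp, hnp⟩
          obtain ⟨n, hn⟩ := Set.mem_iUnion.mp hp
          exact Set.mem_iUnion.mpr ⟨n, hn, fun h => hnp (Set.mem_iUnion.mpr ⟨n, h⟩)⟩
        calc ρ _ ≤ ∑' n, ρ (O n \ f n) := (measure_mono this).trans (measure_iUnion_le _)
          _ ≤ ∑' n, (δ' n : ℝ≥0∞) := ENNReal.tsum_le_tsum hO3
          _ ≤ δ / 2 := hδ'sum.le
          _ ≤ δ := ENNReal.half_le_self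
      · -- outer approx of the complement of the union
        -- the measurable sets in the product σ-algebra
        have hfm' : ∀ n, MeasurableSet (f n) := by
          intro n
          have := hfm n
          rwa [generateFrom_prod] at this
        set D : ℕ → Set (X × Y) := fun N => ⋂ n ∈ Finset.range (N + 1), (f n)ᶜ with hD
        have hDmeas : ∀ N, MeasurableSet (D N) := fun N =>
          MeasurableSet.biInter (Finset.range (N + 1)).countable_toSet
            fun n _ => (hfm' n).compl
        have hanti : Antitone D := by
          intro a b hab p hp
          simp only [hD, Set.mem_iInter, Finset.mem_range] at hp ⊢
          intro n hn
          exact hp n (by omega)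
        have hDint : ⋂ N, D N = (⋃ n, f n)ᶜ := by
          rw [Set.compl_iUnion]
          ext p
          simp only [Set.mem_iInter, hD, Finset.mem_range]
          exact ⟨fun h n => h n n (by omega), fun h N n _ => h n⟩
        have htend : Filter.Tendsto (fun N => ρ (D N)) Filter.atTop (nhds (ρ (⋂ N, D N))) :=
          tendsto_measure_iInter_atTop (fun N => (hDmeas N).nullMeasurableSet) hanti
            ⟨0, measure_ne_top _ _⟩
        have hlt : ρ (⋂ N, D N) < ρ (⋂ N, D N) + δ / 2 :=
          ENNReal.lt_add_right (measure_ne_top _ _) hδ2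
        have hev : ∀ᶠ N in Filter.atTop, ρ (D N) < ρ (⋂ N, D N) + δ / 2 :=
          htend.eventually_lt_const hlt
        obtain ⟨N, hN⟩ := hev.exists
        -- choose good open covers for each (f n)ᶜ, n ≤ N
        have hδN : (δ / 2) / (N + 1 : ℕ) ≠ 0 := by
          simp only [ne_eq, ENNReal.div_eq_zero_iff, not_or]
          refine ⟨⟨hδ, by norm_num⟩, by simp⟩
        have hO : ∀ n, ∃ O, IsOpenRectUnion O ∧ (f n)ᶜ ⊆ O ∧ ρ (O \ (f n)ᶜ) ≤ (δ / 2) / (N + 1 : ℕ) :=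
          fun n => (ihf n _ hδN).2
        choose O hO1 hO2 hO3 using hO
        refine ⟨⋂ n ∈ Finset.range (N + 1), O n, IsOpenRectUnion.biInter_le hO1 N, ?_, ?_⟩
        · rw [Set.compl_iUnion]
          intro p hp
          simp only [Set.mem_iInter] at hp ⊢
          exact fun n _ => hO2 n (hp n)
        · have hsub : (⋂ n ∈ Finset.range (N + 1), O n) \ (⋃ n, f n)ᶜ
              ⊆ (⋃ n ∈ Finset.range (N + 1), (O n \ (f n)ᶜ)) ∪ (D N \ (⋃ n, f n)ᶜ) := by
            rintro p ⟨hp, hnp⟩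
            simp only [Set.mem_iInter] at hp
            by_cases hD' : p ∈ D N
            · exact Or.inr ⟨hD', hnp⟩
            · simp only [hD, Set.mem_iInter, not_forall] at hD'
              obtain ⟨n, hn, hpn⟩ := hD'
              exact Or.inl (Set.mem_biUnion hn ⟨hp n hn, hpn⟩)
          have h1 : ρ (⋃ n ∈ Finset.range (N + 1), (O n \ (f n)ᶜ)) ≤ δ / 2 := by
            calc ρ _ ≤ ∑ n ∈ Finset.range (N + 1), ρ (O n \ (f n)ᶜ) :=
                  measure_biUnion_finset_le _ _
              _ ≤ ∑ _n ∈ Finset.range (N + 1), (δ / 2) / (N + 1 : ℕ) :=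
                  Finset.sum_le_sum fun n _ => hO3 n
              _ = (N + 1 : ℕ) * ((δ / 2) / (N + 1 : ℕ)) := by
                  rw [Finset.sum_const, Finset.card_range, nsmul_eq_mul]
              _ ≤ δ / 2 := by
                  rw [mul_comm]
                  exact ENNReal.mul_le_of_le_div le_rfl
          have h2 : ρ (D N \ (⋃ n, f n)ᶜ) ≤ δ / 2 := by
            have hsub2 : (⋃ n, f n)ᶜ ⊆ D N := by
              rw [← hDint]
              exact Set.iInter_subset _ N
            rw [measure_diff hsub2 (MeasurableSet.compl
              (MeasurableSet.iUnion hfm')).nullMeasurableSet (measure_ne_top _ _)]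
            rw [hDint] at hN
            exact tsub_le_iff_left.mpr (le_of_lt hN)
          calc ρ _ ≤ ρ (⋃ n ∈ Finset.range (N + 1), (O n \ (f n)ᶜ)) + ρ (D N \ (⋃ n, f n)ᶜ) :=
                (measure_mono hsub).trans (measure_union_le _ _)
            _ ≤ δ / 2 + δ / 2 := add_le_add h1 h2
            _ = δ := ENNReal.add_halves δ

/-- For a compact set `S` inside a measurable set `T`, there is a finite union of open
rectangles containing `S` whose product measure is close to that of `T`. -/
theorem compact_rect_cover {S T : Set (X × Y)} (hS : IsCompact S) (hT : MeasurableSet T)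
    (hST : S ⊆ T) {ε : ℝ≥0∞} (hε : ε ≠ 0) :
    ∃ (t : Finset ℕ) (f : ℕ → Set X × Set Y), (∀ n, IsOpen (f n).1 ∧ IsOpen (f n).2) ∧
      S ⊆ (⋃ n ∈ t, (f n).1 ×ˢ (f n).2) ∧ MeasurableSet (⋃ n ∈ t, (f n).1 ×ˢ (f n).2) ∧
      (μX.prod μY) (⋃ n ∈ t, (f n).1 ×ˢ (f n).2) ≤ (μX.prod μY) T + ε := by
  obtain ⟨O, hO, hTO, hOv⟩ := prod_outer_approx μX μY hT hε
  obtain ⟨f, hf, rfl⟩ := hO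
  obtain ⟨t, ht⟩ := hS.elim_finite_subcover (fun n => (f n).1 ×ˢ (f n).2)
    (fun n => ((hf n).1).prod ((hf n).2)) (hST.trans hTO)
  refine ⟨t, f, hf, ht, ?_, ?_⟩
  · exact MeasurableSet.biUnion t.countable_toSet fun n _ =>
      ((hf n).1.measurableSet).prod ((hf n).2.measurableSet)
  · exact le_trans (measure_mono (Set.iUnion₂_subset fun n _ =>
      Set.subset_iUnion (fun m => (f m).1 ×ˢ (f m).2) n)) hOv

end OuterApprox

section Master

/-- If a closed relation forces containment in an open set, the set of "good" parameters is
open (upper semicontinuity of slices of closed relations over compact spaces). -/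
lemma isOpen_forall_mem {X Y : Type*} [TopologicalSpace X] [TopologicalSpace Y]
    [CompactSpace X] [CompactSpace Y] [T2Space X] {S : Set (X × Y)} (hS : IsClosed S)
    {O : Set Y} (hO : IsOpen O) : IsOpen {x : X | ∀ y : Y, (x, y) ∈ S → y ∈ O} := by
  rw [← isClosed_compl_iff]
  have h : {x : X | ∀ y : Y, (x, y) ∈ S → y ∈ O}ᶜ = Prod.fst '' (S ∩ (Set.univ ×ˢ Oᶜ)) := by
    ext x
    simp only [Set.mem_compl_iff, Set.mem_setOf_eq, not_forall, Set.mem_image, Set.mem_inter_iff,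
      Set.mem_prod, Set.mem_univ, true_and, Prod.exists]
    constructor
    · rintro ⟨y, hy, hyO⟩
      exact ⟨x, y, ⟨hy, hyO⟩, rfl⟩
    · rintro ⟨a, b, ⟨hab, hbO⟩, rfl⟩
      exact ⟨b, hab, hbO⟩
  rw [h]
  exact (((hS.inter (isClosed_univ.prod hO.isClosed_compl)).isCompact).image
    continuous_fst).isClosed

variable {P A B : Type*}
  [TopologicalSpace P] [CompactSpace P] [T2Space P] [MeasurableSpace P] [OpensMeasurableSpace P]
  [TopologicalSpace A] [CompactSpace A] [T2Space A] [MeasurableSpace A] [OpensMeasurableSpace A]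
  [TopologicalSpace B] [CompactSpace B] [T2Space B] [MeasurableSpace B] [OpensMeasurableSpace B]
  [Nonempty P]

/-- The master comparison lemma: if for each parameter `p` the `α`-measure of the slice
`CA p` is at most the `β`-measure of the slice `CB p`, and the slice families are closed
as relations, then the (outer) product measures of the two relations compare. -/
theorem master_compare (π : Measure P) [IsProbabilityMeasure π] [π.OuterRegular]
    (α : Measure A) [IsProbabilityMeasure α] [α.OuterRegular]
    (β : Measure B) [IsProbabilityMeasure β] [β.OuterRegular]
    (CA : P → Set A) (CB : P → Set B)
    (hSA : IsClosed {q : P × A | q.2 ∈ CA q.1})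
    (hSB : IsClosed {q : P × B | q.2 ∈ CB q.1})
    (hpoint : ∀ p, α (CA p) ≤ β (CB p)) :
    (π.prod α) {q : P × A | q.2 ∈ CA q.1} ≤ (π.prod β) {q : P × B | q.2 ∈ CB q.1} := by
  classical
  set SA := {q : P × A | q.2 ∈ CA q.1} with hSAdef
  set SB := {q : P × B | q.2 ∈ CB q.1} with hSBdef
  rw [show (π.prod β) SB = ⨅ (t) (_ : SB ⊆ t) (_ : MeasurableSet t), (π.prod β) t from
    measure_eq_iInf SB]
  refine le_iInf fun T => le_iInf fun hT => le_iInf fun hTm => ?_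
  refine ENNReal.le_of_forall_pos_le_add fun ε hε hfin => ?_
  have hε2 : ((ε : ℝ≥0∞) / 2) ≠ 0 := by
    simp [ENNReal.div_eq_zero_iff, hε.ne']
  -- cover SB by a finite union of open rectangles, close in measure to T
  have hSBcompact : IsCompact SB := hSB.isCompact
  obtain ⟨t, f, hf, hcov, hRm, hRval⟩ := compact_rect_cover π β hSBcompact hTm hT hε2
  set R := ⋃ n ∈ t, (f n).1 ×ˢ (f n).2 with hRdef
  -- for each parameter, choose a good open superset of `CA p`
  have hOex : ∀ p : P, ∃ O : Set A, CA p ⊆ O ∧ IsOpen O ∧ α O ≤ α (CA p) + ε / 2 := by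
    intro p
    obtain ⟨O, hO1, hO2, hO3⟩ := Set.exists_isOpen_lt_add (CA p) (measure_ne_top α _) hε2
    exact ⟨O, hO1, hO2, hO3.le⟩
  choose O hO1 hO2 hO3 using hOex
  -- the neighbourhoods
  set W : P → Set P := fun p₀ =>
    {p : P | ∀ a : A, (p, a) ∈ SA → a ∈ O p₀} ∩
      ⋂ n ∈ t.filter (fun n => p₀ ∈ (f n).1), (f n).1 with hWdef
  have hWopen : ∀ p₀, IsOpen (W p₀) := by
    intro p₀
    refine (isOpen_forall_mem hSA (hO2 p₀)).inter (isOpen_biInter_finset fun n hn => ?_)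
    exact (hf n).1
  have hWmem : ∀ p₀, p₀ ∈ W p₀ := by
    intro p₀
    refine ⟨fun a ha => hO1 p₀ ha, ?_⟩
    simp only [Set.mem_iInter]
    intro n hn
    exact (Finset.mem_filter.mp hn).2
  -- finite subcover
  obtain ⟨u, hu⟩ := isCompact_univ.elim_finite_subcover W hWopen
    (fun p _ => Set.mem_iUnion.mpr ⟨p, hWmem p⟩)
  set l := u.toList with hldef
  set c : ℕ → P := fun i => if h : i < l.length then l.get ⟨i, h⟩ else Classical.arbitrary P
    with hcdef
  set g : ℕ → Set P := fun i => if i < l.length then W (c i) else ∅ with hgdef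
  have hgopen : ∀ i, MeasurableSet (g i) := by
    intro i
    by_cases h : i < l.length <;> simp only [hgdef, h, if_true, if_false]
    · exact (hWopen _).measurableSet
    · exact MeasurableSet.empty
  have hgcov : (Set.univ : Set P) ⊆ ⋃ i, g i := by
    intro p _
    obtain ⟨q, hq, hpq⟩ := Set.mem_iUnion₂.mp (hu (Set.mem_univ p))
    obtain ⟨⟨i, hi⟩, hget⟩ := List.mem_iff_get.mp (Finset.mem_toList.mpr hq)
    refine Set.mem_iUnion.mpr ⟨i, ?_⟩
    have hci : c i = q := by simp only [hcdef, hldef, hi, dif_pos]; exact hget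
    simp only [hgdef, hldef, hi, if_pos]
    rw [hci]
    exact hpq
  set Md : ℕ → Set P := disjointed g with hMddef
  have hMdmeas : ∀ i, MeasurableSet (Md i) := MeasurableSet.disjointed hgopen
  have hMdcov : (Set.univ : Set P) ⊆ ⋃ i, Md i := by
    rw [hMddef, iUnion_disjointed]
    exact hgcov
  have hMdsub : ∀ i, Md i ⊆ g i := disjointed_subset g
  have hMddisj : Pairwise (Function.onFun Disjoint Md) := disjoint_disjointed g
  -- the candidate superset of SA
  set R' := ⋃ i, Md i ×ˢ O (c i) with hR'def
  have hR'meas : MeasurableSet R' :=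
    MeasurableSet.iUnion fun i => (hMdmeas i).prod (hO2 (c i)).measurableSet
  have hSAR' : SA ⊆ R' := by
    rintro ⟨p, a⟩ hpa
    obtain ⟨i, hi⟩ := Set.mem_iUnion.mp (hMdcov (Set.mem_univ p))
    have hpg : p ∈ g i := hMdsub i hi
    have hilen : i < l.length := by
      by_contra h
      simp only [hgdef, h, if_false] at hpg
      exact hpg
    have hpW : p ∈ W (c i) := by
      simp only [hgdef, hilen, if_pos] at hpg
      exact hpg
    exact Set.mem_iUnion.mpr ⟨i, hi, hpW.1 a hpa⟩
  -- pointwise slice comparison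
  have hslice : ∀ p : P, α (Prod.mk p ⁻¹' R') ≤ β (Prod.mk p ⁻¹' R) + ε / 2 := by
    intro p
    obtain ⟨i₀, hi₀⟩ := Set.mem_iUnion.mp (hMdcov (Set.mem_univ p))
    have hpg : p ∈ g i₀ := hMdsub i₀ hi₀
    have hilen : i₀ < l.length := by
      by_contra h
      simp only [hgdef, h, if_false] at hpg
      exact hpg
    have hpW : p ∈ W (c i₀) := by
      simp only [hgdef, hilen, if_pos] at hpg
      exact hpg
    have hsliceR' : Prod.mk p ⁻¹' R' = O (c i₀) := by
      ext a
      simp only [Set.mem_preimage, hR'def, Set.mem_iUnion, Set.mem_prod]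
      constructor
      · rintro ⟨i, hpi, hai⟩
        have : i = i₀ := by
          by_contra hne
          exact Set.disjoint_left.mp (hMddisj hne) hpi hi₀
        rwa [this] at hai
      · intro ha
        exact ⟨i₀, hi₀, ha⟩
    rw [hsliceR']
    calc α (O (c i₀)) ≤ α (CA (c i₀)) + ε / 2 := hO3 (c i₀)
      _ ≤ β (CB (c i₀)) + ε / 2 := add_le_add_left (hpoint _) _
      _ ≤ β (Prod.mk (c i₀) ⁻¹' R) + ε / 2 := by
          refine add_le_add_left (measure_mono ?_) _
          intro b hb
          exact hcov (show ((c i₀), b) ∈ SB from hb)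
      _ ≤ β (Prod.mk p ⁻¹' R) + ε / 2 := by
          refine add_le_add_left (measure_mono ?_) _
          intro b hb
          simp only [Set.mem_preimage, hRdef, Set.mem_iUnion, Set.mem_prod] at hb ⊢
          obtain ⟨n, hn, hcn, hbn⟩ := hb
          refine ⟨n, hn, ?_, hbn⟩
          have hnf : n ∈ t.filter (fun n => (c i₀) ∈ (f n).1) :=
            Finset.mem_filter.mpr ⟨hn, hcn⟩
          have := hpW.2
          simp only [Set.mem_iInter] at this
          exact this n hnf
  -- put everything together
  calc (π.prod α) SA ≤ (π.prod α) R' := measure_mono hSAR'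
    _ = ∫⁻ p, α (Prod.mk p ⁻¹' R') ∂π := Measure.prod_apply hR'meas
    _ ≤ ∫⁻ p, (β (Prod.mk p ⁻¹' R) + ε / 2) ∂π := lintegral_mono hslice
    _ = (∫⁻ p, β (Prod.mk p ⁻¹' R) ∂π) + ε / 2 := by
        rw [lintegral_add_right _ measurable_const]
        simp
    _ = (π.prod β) R + ε / 2 := by rw [Measure.prod_apply hRm]
    _ ≤ ((π.prod β) T + ε / 2) + ε / 2 := add_le_add_left hRval _
    _ = (π.prod β) T + ε := by rw [add_assoc, ENNReal.add_halves]

end Master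

theorem stmt5 {G : Type*} [Group G] [TopologicalSpace G] [IsTopologicalGroup G]
    [CompactSpace G] [T2Space G] [MeasurableSpace G] [BorelSpace G]
    (μ : Measure G) [μ.IsHaarMeasure] [IsProbabilityMeasure μ]
    (H K : Subgroup G) (hHK : H ≤ K)
    (hHc : IsClosed (H : Set G)) (hKc : IsClosed (K : Set G))
    (ν : Measure K) [ν.IsHaarMeasure] [IsProbabilityMeasure ν]
    (lam : Measure H) [lam.IsHaarMeasure] [IsProbabilityMeasure lam]
    (lam' : Measure (H.subgroupOf K)) [lam'.IsHaarMeasure]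
    [IsProbabilityMeasure lam'] :
    haarCommProb K ν μ ≤ haarCommProb H lam μ ∧
      haarCommProb H lam μ ≤ haarCommProb (H.subgroupOf K) lam' ν := by
  haveI : CompactSpace K := isCompact_iff_compactSpace.mp hKc.isCompact
  haveI : CompactSpace H := isCompact_iff_compactSpace.mp hHc.isCompact
  haveI : BorelSpace K := Subtype.borelSpace (K : Set G)
  haveI : BorelSpace H := Subtype.borelSpace (H : Set G)
  have hHKc : IsClosed ((H.subgroupOf K : Subgroup K) : Set K) :=
    hHc.preimage continuous_subtype_val
  haveI : CompactSpace (H.subgroupOf K) := isCompact_iff_compactSpace.mp hHKc.isCompact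
  haveI : BorelSpace (H.subgroupOf K) :=
    Subtype.borelSpace ((H.subgroupOf K : Subgroup K) : Set K)
  haveI : Nonempty G := ⟨1⟩
  haveI : Nonempty (↥K) := ⟨1⟩
  haveI : Nonempty (↥H) := ⟨1⟩
  constructor
  · -- Pr(K,G) ≤ Pr(H,G)
    show (ν.prod μ) {p : K × G | (p.1 : G) * p.2 = p.2 * (p.1 : G)}
      ≤ (lam.prod μ) {p : H × G | (p.1 : G) * p.2 = p.2 * (p.1 : G)}
    have e1 : (ν.prod μ) {p : K × G | (p.1 : G) * p.2 = p.2 * (p.1 : G)}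
        = (μ.prod ν) {q : G × K | ((q.2 : G)) * q.1 = q.1 * (q.2 : G)} := by
      rw [← Measure.prod_swap]
      exact (MeasurableEquiv.prodComm (α := G) (β := ↥K)).map_apply _
    have e2 : (lam.prod μ) {p : H × G | (p.1 : G) * p.2 = p.2 * (p.1 : G)}
        = (μ.prod lam) {q : G × H | ((q.2 : G)) * q.1 = q.1 * (q.2 : G)} := by
      rw [← Measure.prod_swap]
      exact (MeasurableEquiv.prodComm (α := G) (β := ↥H)).map_apply _
    rw [e1, e2]
    have hSA : IsClosed {q : G × K | ((q.2 : G)) * q.1 = q.1 * (q.2 : G)} :=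
      isClosed_eq ((continuous_subtype_val.comp continuous_snd).mul continuous_fst)
        (continuous_fst.mul (continuous_subtype_val.comp continuous_snd))
    have hSB : IsClosed {q : G × H | ((q.2 : G)) * q.1 = q.1 * (q.2 : G)} :=
      isClosed_eq ((continuous_subtype_val.comp continuous_snd).mul continuous_fst)
        (continuous_fst.mul (continuous_subtype_val.comp continuous_snd))
    have hpoint : ∀ y : G, ν {x : K | (x : G) * y = y * (x : G)}
        ≤ lam {x : H | (x : G) * y = y * (x : G)} := by
      intro y
      have hcl : IsClosed (((commSG y).comap K.subtype : Subgroup K) : Set K) :=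
        (commSG_isClosed y).preimage continuous_subtype_val
      exact key_comparison ν lam (Subgroup.inclusion hHK) (continuous_inclusion hHK)
        ((commSG y).comap K.subtype) hcl
    exact master_compare μ ν lam
      (fun y => {x : K | (x : G) * y = y * (x : G)})
      (fun y => {x : H | (x : G) * y = y * (x : G)}) hSA hSB hpoint
  · -- Pr(H,G) ≤ Pr(H.subgroupOf K, K)
    show (lam.prod μ) {p : H × G | (p.1 : G) * p.2 = p.2 * (p.1 : G)}
      ≤ (lam'.prod ν) {p : (H.subgroupOf K) × K | (p.1 : K) * p.2 = p.2 * (p.1 : K)}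
    -- the isomorphism between `H.subgroupOf K` and `H`
    set e : (H.subgroupOf K) ≃* H := Subgroup.subgroupOfEquivOfLe hHK with he_def
    have he : Continuous e :=
      (continuous_subtype_val.comp continuous_subtype_val).subtype_mk _
    have he' : Continuous e.symm :=
      (continuous_subtype_val.subtype_mk _).subtype_mk _
    let ehom : (H.subgroupOf K) ≃ₜ H :=
      { toEquiv := e.toEquiv, continuous_toFun := he, continuous_invFun := he' }
    let em : (H.subgroupOf K) ≃ᵐ H := ehom.toMeasurableEquiv
    haveI h1 : (Measure.map e lam').IsHaarMeasure := e.isHaarMeasure_map lam' he he'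
    haveI h2 : IsProbabilityMeasure (Measure.map (⇑e) lam') :=
      Measure.isProbabilityMeasure_map he.measurable.aemeasurable
    have hmap : lam = Measure.map (⇑em) lam' := by
      have h3 : Measure.map (⇑e) lam' = lam :=
        Measure.isHaarMeasure_eq_of_isProbabilityMeasure _ _
      rw [← h3]
      rfl
    -- transfer of the right-hand side
    have etransfer : (lam.prod ν) {q : H × K | ((q.1 : G)) * ((q.2 : K) : G)
          = ((q.2 : K) : G) * ((q.1 : G))}
        = (lam'.prod ν) {p : (H.subgroupOf K) × K | (p.1 : K) * p.2 = p.2 * (p.1 : K)} := by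
      have hmap2 : lam.prod ν = Measure.map (Prod.map (⇑em) id) (lam'.prod ν) := by
        rw [hmap, ← Measure.map_prod_map _ _ em.measurable measurable_id, Measure.map_id]
      rw [hmap2]
      have hcoe : (Prod.map (⇑em) (id : ↥K → ↥K))
          = ⇑(em.prodCongr (MeasurableEquiv.refl ↥K)) := rfl
      rw [hcoe, MeasurableEquiv.map_apply]
      congr 1
      ext ⟨h', k⟩
      simp only [Set.mem_preimage, Set.mem_setOf_eq, MeasurableEquiv.prodCongr,
        MeasurableEquiv.coe_mk, Equiv.prodCongr_apply, Prod.map]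
      constructor
      · intro hh
        apply Subtype.ext
        exact hh
      · intro hh
        have := congrArg (fun z : K => (z : G)) hh
        exact this
    have hSA : IsClosed {q : H × G | ((q.1 : G)) * q.2 = q.2 * ((q.1 : G))} :=
      isClosed_eq ((continuous_subtype_val.comp continuous_fst).mul continuous_snd)
        (continuous_snd.mul (continuous_subtype_val.comp continuous_fst))
    have hSB : IsClosed {q : H × K | ((q.1 : G)) * ((q.2 : K) : G)
        = ((q.2 : K) : G) * ((q.1 : G))} :=
      isClosed_eq ((continuous_subtype_val.comp continuous_fst).mul
          (continuous_subtype_val.comp continuous_snd))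
        ((continuous_subtype_val.comp continuous_snd).mul
          (continuous_subtype_val.comp continuous_fst))
    have hpoint : ∀ h : H, μ {y : G | ((h : G)) * y = y * ((h : G))}
        ≤ ν {k : K | ((h : G)) * ((k : K) : G) = ((k : K) : G) * ((h : G))} := by
      intro h
      have hs1 : {y : G | ((h : G)) * y = y * ((h : G))} = (commSG ((h : G)) : Set G) :=
        Set.ext fun g => eq_comm
      have hs2 : (K.subtype) ⁻¹' (commSG ((h : G)) : Set G)
          = {k : K | ((h : G)) * ((k : K) : G) = ((k : K) : G) * ((h : G))} :=
        Set.ext fun k => eq_comm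
      rw [hs1, ← hs2]
      exact key_comparison μ ν K.subtype continuous_subtype_val (commSG ((h : G)))
        (commSG_isClosed _)
    calc (lam.prod μ) {p : H × G | (p.1 : G) * p.2 = p.2 * (p.1 : G)}
        ≤ (lam.prod ν) {q : H × K | ((q.1 : G)) * ((q.2 : K) : G)
            = ((q.2 : K) : G) * ((q.1 : G))} :=
          master_compare lam μ ν
            (fun h => {y : G | ((h : G)) * y = y * ((h : G))})
            (fun h => {k : K | ((h : G)) * ((k : K) : G) = ((k : K) : G) * ((h : G))})
            hSA hSB hpoint
      _ = (lam'.prod ν) {p : (H.subgroupOf K) × K | (p.1 : K) * p.2 = p.2 * (p.1 : K)} :=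
          etransfer
end

section
/- Let m ≥ 1 and let G be a group containing a normal subgroup A and a subgroup B such that [A : C_A(y)] ≤ m and [B : C_B(x)] ≤ m for all x ∈ A and y ∈ B. If the normal closure ⟨B^G⟩ of B in G is abelian, then the subgroup [A,B] is finite of m-bounded order (i.e., there is a function f such that |[A,B]| ≤ f(m)). -/
universe u

open Subgroup Pointwise
open scoped commutatorElement
open scoped IsMulCommutative

section CommCard

variable {C : Type*} [CommGroup C]

lemma sup_card_le (H K : Subgroup C) (hH : (H : Set C).Finite) (hK : (K : Set C).Finite) :
    ((H ⊔ K : Subgroup C) : Set C).Finite ∧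
      Nat.card (H ⊔ K : Subgroup C) ≤ Nat.card H * Nat.card K := by
  have hset : ((H ⊔ K : Subgroup C) : Set C) = (H : Set C) * (K : Set C) :=
    Subgroup.mul_normal H K
  constructor
  · rw [hset]; exact hH.mul hK
  · have h1 : Nat.card (H ⊔ K : Subgroup C) =
        Nat.card ((H : Set C) * (K : Set C) : Set C) := by
      exact Nat.card_congr (Equiv.setCongr hset)
    rw [h1]
    exact Set.natCard_mul_le

lemma closure_finite_card_le (m : ℕ) (X : Set C) (hX : X.Finite)
    (hord : ∀ x ∈ X, 0 < orderOf x ∧ orderOf x ≤ m) :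
    ((closure X : Subgroup C) : Set C).Finite ∧ Nat.card (closure X) ≤ m ^ X.ncard := by
  refine Set.Finite.induction_on
    (motive := fun X _ => (∀ x ∈ X, 0 < orderOf x ∧ orderOf x ≤ m) →
      ((closure X : Subgroup C) : Set C).Finite ∧ Nat.card (closure X) ≤ m ^ X.ncard)
    X hX ?_ ?_ hord
  · intro _
    simp only [Subgroup.closure_empty]
    constructor
    · simpa using Set.finite_singleton (1 : C)
    · simp [Subgroup.card_bot]
  · intro a s ha hs ih hord
    have hords : ∀ x ∈ s, 0 < orderOf x ∧ orderOf x ≤ m := fun x hx =>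
      hord x (Set.mem_insert_of_mem _ hx)
    obtain ⟨ihfin, ihcard⟩ := ih hords
    have horda := hord a (Set.mem_insert _ _)
    have hz : closure (insert a s) = Subgroup.zpowers a ⊔ closure s := by
      rw [Set.insert_eq, Subgroup.closure_union, Subgroup.zpowers_eq_closure]
    have hzfin : ((Subgroup.zpowers a : Subgroup C) : Set C).Finite := by
      have : (0:ℕ) < Nat.card (Subgroup.zpowers a) := by
        rw [Nat.card_zpowers]; exact horda.1
      have := Nat.finite_of_card_ne_zero this.ne'
      exact Set.finite_coe_iff.mp this
    obtain ⟨hfin, hcard⟩ := sup_card_le (Subgroup.zpowers a) (closure s) hzfin ihfin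
    rw [hz]
    refine ⟨hfin, ?_⟩
    have hncard : (insert a s).ncard = s.ncard + 1 := Set.ncard_insert_of_notMem ha hs
    calc Nat.card (Subgroup.zpowers a ⊔ closure s : Subgroup C)
        ≤ Nat.card (Subgroup.zpowers a) * Nat.card (closure s) := hcard
      _ ≤ m * m ^ s.ncard := by
          refine Nat.mul_le_mul ?_ ihcard
          rw [Nat.card_zpowers]; exact horda.2
      _ = m ^ (insert a s).ncard := by rw [hncard, pow_succ, mul_comm]

lemma mem_foldr_sup_le (l : List (Subgroup C)) (H : Subgroup C) (h : H ∈ l) :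
    H ≤ l.foldr (· ⊔ ·) ⊥ := by
  induction l with
  | nil => simp at h
  | cons K l ih =>
      rcases List.mem_cons.mp h with rfl | h'
      · exact le_sup_left
      · exact (ih h').trans le_sup_right

lemma foldr_sup_card_le (c : ℕ) (l : List (Subgroup C))
    (h : ∀ H ∈ l, (H : Set C).Finite ∧ Nat.card H ≤ c) :
    ((l.foldr (· ⊔ ·) ⊥ : Subgroup C) : Set C).Finite ∧
      Nat.card (l.foldr (· ⊔ ·) ⊥ : Subgroup C) ≤ c ^ l.length := by
  induction l with
  | nil =>
      constructor
      · simpa using Set.finite_singleton (1 : C)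
      · simp [Subgroup.card_bot]
  | cons K l ih =>
      obtain ⟨ihfin, ihcard⟩ := ih (fun H hH => h H (List.mem_cons_of_mem _ hH))
      obtain ⟨hKfin, hKcard⟩ := h K (List.mem_cons_self)
      obtain ⟨hfin, hcard⟩ := sup_card_le K (l.foldr (· ⊔ ·) ⊥) hKfin ihfin
      refine ⟨hfin, ?_⟩
      calc Nat.card (K ⊔ l.foldr (· ⊔ ·) ⊥ : Subgroup C)
          ≤ Nat.card K * Nat.card (l.foldr (· ⊔ ·) ⊥ : Subgroup C) := hcard
        _ ≤ c * c ^ l.length := Nat.mul_le_mul hKcard ihcard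
        _ = c ^ (K :: l).length := by rw [List.length_cons, pow_succ, mul_comm]

end CommCard

section Setup

variable {G : Type u} [Group G]

/-- The normal closure of `B`. -/
def NB (B : Subgroup G) : Subgroup G := Subgroup.normalClosure (B : Set G)

lemma mem_NB_of_mem {B : Subgroup G} {b : G} (hb : b ∈ B) : b ∈ NB B :=
  Subgroup.subset_normalClosure hb

lemma conj_mem_NB {B : Subgroup G} {x : G} (g : G) (hx : x ∈ NB B) : g * x * g⁻¹ ∈ NB B :=
  Subgroup.normalClosure_normal.conj_mem x hx g

lemma commEl_mem_NB {B : Subgroup G} (a : G) {b : G} (hb : b ∈ B) : ⁅a, b⁆ ∈ NB B := by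
  have h : ⁅a, b⁆ = (a * b * a⁻¹) * b⁻¹ := by group
  rw [h]
  exact mul_mem (conj_mem_NB a (mem_NB_of_mem hb)) (inv_mem (mem_NB_of_mem hb))

variable (B : Subgroup G) [hNc : IsMulCommutative (NB B)]

lemma NB_comm {x y : G} (hx : x ∈ NB B) (hy : y ∈ NB B) : x * y = y * x :=
  congrArg Subtype.val (mul_comm (⟨x, hx⟩ : NB B) (⟨y, hy⟩ : NB B))

/-- For fixed `a`, the map `b ↦ ⁅a, b⁆` is a homomorphism `B →* NB B`. -/
def phi (a : G) : ↥B →* ↥(NB B) where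
  toFun b := ⟨⁅a, (b : G)⁆, commEl_mem_NB a b.2⟩
  map_one' := by
    ext
    simp [commutatorElement_one_right]
  map_mul' b₁ b₂ := by
    ext
    show ⁅a, (b₁ : G) * (b₂ : G)⁆ = ⁅a, (b₁ : G)⁆ * ⁅a, (b₂ : G)⁆
    have h1 : ⁅a, (b₁ : G) * (b₂ : G)⁆
        = ⁅a, (b₁ : G)⁆ * ((b₁ : G) * ⁅a, (b₂ : G)⁆ * (b₁ : G)⁻¹) := by
      simp only [commutatorElement_def]
      group
    have h2 : (b₁ : G) * ⁅a, (b₂ : G)⁆ = ⁅a, (b₂ : G)⁆ * (b₁ : G) :=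
      NB_comm B (mem_NB_of_mem b₁.2) (commEl_mem_NB a b₂.2)
    rw [h1, h2]
    group

lemma phi_apply (a : G) (b : ↥B) : ((phi B a b : ↥(NB B)) : G) = ⁅a, (b : G)⁆ := rfl

lemma comm_mul_right_eq (a c b : G) (hc : b * c = c * b) : ⁅a * c, b⁆ = ⁅a, b⁆ := by
  have h : c * b * c⁻¹ = b := by rw [← hc]; group
  calc ⁅a * c, b⁆ = a * (c * b * c⁻¹) * a⁻¹ * b⁻¹ := by
        simp only [commutatorElement_def]; group
    _ = a * b * a⁻¹ * b⁻¹ := by rw [h]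
    _ = ⁅a, b⁆ := (commutatorElement_def a b).symm

variable (A : Subgroup G)

/-- The set of commutators `⁅a, b⁆` for `a ∈ A`, viewed inside `NB B`. -/
def Trow (b : ↥B) : Set ↥(NB B) := Set.range fun a : ↥A => phi B (a : G) b

lemma ker_phi (a : G) : (phi B a).ker = (Subgroup.centralizer {a}).subgroupOf B := by
  ext b
  constructor
  · intro hb
    have : ⁅a, (b : G)⁆ = 1 := congrArg Subtype.val hb
    have h2 := commutatorElement_eq_one_iff_mul_comm.mp this
    simp only [Subgroup.mem_subgroupOf, Subgroup.mem_centralizer_iff]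
    intro h hh
    rw [Set.mem_singleton_iff] at hh
    subst hh
    exact h2
  · intro hb
    simp only [Subgroup.mem_subgroupOf, Subgroup.mem_centralizer_iff] at hb
    have h2 : a * (b : G) = (b : G) * a := hb a rfl
    have : ⁅a, (b : G)⁆ = 1 := commutatorElement_eq_one_iff_mul_comm.mpr h2
    exact Subtype.ext this

lemma card_range_phi (a : G) :
    Nat.card (phi B a).range = (Subgroup.centralizer {a}).relIndex B := by
  rw [← Subgroup.index_ker, ker_phi]
  rfl

/-- order bound for commutator values. -/
lemma orderOf_phi {m : ℕ} (a : G)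
    (ha : (Subgroup.centralizer {a}).relIndex B ≠ 0 ∧ (Subgroup.centralizer {a}).relIndex B ≤ m)
    (b : ↥B) : 0 < orderOf (phi B a b) ∧ orderOf (phi B a b) ≤ m := by
  have hcard : Nat.card (phi B a).range = (Subgroup.centralizer {a}).relIndex B :=
    card_range_phi B a
  have hfin : Finite (phi B a).range := by
    apply Nat.finite_of_card_ne_zero
    rw [hcard]; exact ha.1
  have hmem : phi B a b ∈ (phi B a).range := ⟨b, rfl⟩
  have hdvd : orderOf (phi B a b) ∣ Nat.card (phi B a).range :=
    Subgroup.orderOf_dvd_natCard _ hmem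
  constructor
  · have : orderOf (⟨phi B a b, hmem⟩ : (phi B a).range) ≠ 0 := by
      have : IsOfFinOrder (⟨phi B a b, hmem⟩ : (phi B a).range) := by
        exact isOfFinOrder_of_finite _
      exact this.orderOf_pos.ne'
    rw [Subgroup.orderOf_mk] at this
    exact Nat.pos_of_ne_zero this
  · refine le_trans (Nat.le_of_dvd ?_ hdvd) ?_
    · rw [hcard]; exact Nat.pos_of_ne_zero ha.1
    · rw [hcard]; exact ha.2

/-- Row sets are small: at most `relindex (centralizer {b}) A` elements. -/
lemma Trow_finite_card {m : ℕ} (b : ↥B)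
    (hb : (Subgroup.centralizer {(b : G)}).relIndex A ≠ 0 ∧
      (Subgroup.centralizer {(b : G)}).relIndex A ≤ m) :
    (Trow B A b).Finite ∧ Nat.card (Trow B A b) ≤ m := by
  set H : Subgroup ↥A := (Subgroup.centralizer {(b : G)}).subgroupOf A with hH
  have hfinq : Finite (↥A ⧸ H) := by
    apply Nat.finite_of_card_ne_zero
    exact hb.1
  have hwd : ∀ a₁ a₂ : ↥A, (QuotientGroup.leftRel H) a₁ a₂ →
      phi B (a₁ : G) b = phi B (a₂ : G) b := by
    intro a₁ a₂ h12
    rw [QuotientGroup.leftRel_apply] at h12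
    have hc : ((a₁⁻¹ * a₂ : ↥A) : G) ∈ Subgroup.centralizer {(b : G)} := h12
    have hcomm : (b : G) * ((a₁⁻¹ * a₂ : ↥A) : G) = ((a₁⁻¹ * a₂ : ↥A) : G) * (b : G) :=
      Subgroup.mem_centralizer_iff.mp hc (b : G) rfl
    apply Subtype.ext
    rw [phi_apply, phi_apply]
    have ha2 : (a₂ : G) = (a₁ : G) * ((a₁⁻¹ * a₂ : ↥A) : G) := by
      push_cast
      group
    rw [ha2]
    exact (comm_mul_right_eq (a₁ : G) _ (b : G) hcomm).symm
  let g : (↥A ⧸ H) → ↥(NB B) := Quotient.lift (fun a : ↥A => phi B (a : G) b) hwd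
  have hrange : Trow B A b = Set.range g := by
    ext x
    constructor
    · rintro ⟨a, rfl⟩
      exact ⟨QuotientGroup.mk a, rfl⟩
    · rintro ⟨q, rfl⟩
      obtain ⟨a, rfl⟩ := Quotient.exists_rep q
      exact ⟨a, rfl⟩
  have hfin : (Trow B A b).Finite := by
    rw [hrange]
    exact Set.finite_range g
  refine ⟨hfin, ?_⟩
  have h1 : Nat.card (Trow B A b) ≤ Nat.card (↥A ⧸ H) := by
    rw [hrange, ← Set.image_univ]
    calc Nat.card (g '' Set.univ) ≤ Nat.card (Set.univ : Set (↥A ⧸ H)) :=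
          Nat.card_image_le Set.finite_univ
      _ = Nat.card (↥A ⧸ H) := Nat.card_univ
  refine h1.trans ?_
  have h2 : Nat.card (↥A ⧸ H) = (Subgroup.centralizer {(b : G)}).relIndex A := by
    rw [Subgroup.relIndex, ← hH, Subgroup.index]
  rw [h2]
  exact hb.2


def Wl (M : List (↥B × ↥A)) : Subgroup ↥(NB B) :=
  Subgroup.closure (⋃ p ∈ M, Trow B A p.1)

def Dl : List (↥B × ↥A) → Subgroup ↥B
  | [] => ⊤
  | p :: M => (Subgroup.comap (phi B (p.2 : G)) (Wl B A M)) ⊓ Dl M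

def Adm : List (↥B × ↥A) → Prop
  | [] => True
  | p :: M => Adm M ∧ phi B (p.2 : G) p.1 ∉ Wl B A M ∧ p.1 ∈ Dl B A M

lemma Dl_cons (p : ↥B × ↥A) (M : List (↥B × ↥A)) :
    Dl B A (p :: M) = (Subgroup.comap (phi B (p.2 : G)) (Wl B A M)) ⊓ Dl B A M := rfl

lemma Adm_cons (p : ↥B × ↥A) (M : List (↥B × ↥A)) :
    Adm B A (p :: M) =
      (Adm B A M ∧ phi B (p.2 : G) p.1 ∉ Wl B A M ∧ p.1 ∈ Dl B A M) := rfl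

lemma Trow_subset_Wl {p : ↥B × ↥A} {M : List (↥B × ↥A)} (hp : p ∈ M) :
    Trow B A p.1 ⊆ Wl B A M := fun x hx =>
  Subgroup.subset_closure (Set.mem_iUnion₂.mpr ⟨p, hp, hx⟩)

lemma Wl_mono {M M' : List (↥B × ↥A)} (h : M <:+ M') : Wl B A M ≤ Wl B A M' := by
  apply Subgroup.closure_mono
  intro x hx
  obtain ⟨p, hp, hx⟩ := Set.mem_iUnion₂.mp hx
  exact Set.mem_iUnion₂.mpr ⟨p, h.sublist.mem hp, hx⟩

lemma Dl_le_comap {p : ↥B × ↥A} {M' M : List (↥B × ↥A)} (h : (p :: M') <:+ M) :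
    Dl B A M ≤ Subgroup.comap (phi B (p.2 : G)) (Wl B A M') := by
  induction M with
  | nil =>
      exfalso
      have := List.eq_nil_of_suffix_nil h
      simp at this
  | cons q M₀ ih =>
      rcases List.suffix_cons_iff.mp h with heq | h'
      · obtain ⟨rfl, rfl⟩ : p = q ∧ M' = M₀ := by
          constructor <;> [exact (List.cons.injEq _ _ _ _ ▸ heq).1; exact (List.cons.injEq _ _ _ _ ▸ heq).2]
        rw [Dl_cons]
        exact inf_le_left
      · rw [Dl_cons]
        exact inf_le_right.trans (ih h')

lemma Adm_suffix {M L : List (↥B × ↥A)} (h : M <:+ L) (hAdm : Adm B A L) : Adm B A M := by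
  induction L with
  | nil =>
      have := List.eq_nil_of_suffix_nil h
      rw [this]
      trivial
  | cons q L₀ ih =>
      rcases List.suffix_cons_iff.mp h with heq | h'
      · rw [heq]; exact hAdm
      · exact ih h' ((Adm_cons B A q L₀ ▸ hAdm).1)


lemma Dl_index {m : ℕ}
    (hB : ∀ x ∈ A, (Subgroup.centralizer {x}).relIndex B ≠ 0 ∧
      (Subgroup.centralizer {x}).relIndex B ≤ m)
    (hker : ∀ a : ↥A, (phi B (a : G)).ker.index = (Subgroup.centralizer {(a : G)}).relIndex B)
    (M : List (↥B × ↥A)) :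
    (Dl B A M).index ≠ 0 ∧ (Dl B A M).index ≤ m ^ M.length := by
  induction M with
  | nil =>
      constructor
      · rw [show Dl B A [] = ⊤ from rfl, Subgroup.index_top]; exact one_ne_zero
      · rw [show Dl B A [] = ⊤ from rfl, Subgroup.index_top]; simp
  | cons p M ih =>
      set X : Subgroup ↥B := Subgroup.comap (phi B (p.2 : G)) (Wl B A M) with hX
      have hkle : (phi B (p.2 : G)).ker ≤ X := by
        intro x hx
        rw [hX, Subgroup.mem_comap]
        have : phi B (p.2 : G) x = 1 := hx
        rw [this]
        exact one_mem _
      have hrel := hB (p.2 : G) p.2.2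
      have hdvd : X.index ∣ (Subgroup.centralizer {((p.2 : ↥A) : G)}).relIndex B := by
        rw [← hker p.2]
        exact Subgroup.index_dvd_of_le hkle
      have hXne : X.index ≠ 0 := by
        intro h0
        rw [h0] at hdvd
        exact hrel.1 (Nat.eq_zero_of_zero_dvd hdvd)
      have hXle : X.index ≤ m :=
        le_trans (Nat.le_of_dvd (Nat.pos_of_ne_zero hrel.1) hdvd) hrel.2
      have hie : (X ⊓ Dl B A M).index ≠ 0 := by
        haveI : X.FiniteIndex := ⟨hXne⟩
        haveI : (Dl B A M).FiniteIndex := ⟨ih.1⟩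
        exact Subgroup.FiniteIndex.index_ne_zero
      constructor
      · rw [Dl_cons]; exact hie
      · rw [Dl_cons]
        calc (X ⊓ Dl B A M).index ≤ X.index * (Dl B A M).index := Subgroup.index_inf_le
          _ ≤ m * m ^ M.length := Nat.mul_le_mul hXle ih.2
          _ = m ^ (p :: M).length := by rw [List.length_cons, pow_succ, mul_comm]

lemma adm_length {m : ℕ}
    (hA : ∀ y ∈ B, (Subgroup.centralizer {y}).relIndex A ≠ 0 ∧
      (Subgroup.centralizer {y}).relIndex A ≤ m)
    (hTrow : ∀ b : ↥B, (Trow B A b).Finite ∧ Nat.card (Trow B A b) ≤ m)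
    (L : List (↥B × ↥A)) (hAdm : Adm B A L) : L.length ≤ m := by
  classical
  set bstar : ↥B := (L.map Prod.fst).prod with hbstar
  have key : ∀ i, (hi : i < L.length) →
      phi B ((L[i]'hi).2 : G) bstar ∈ Wl B A (L.drop i) ∧
      phi B ((L[i]'hi).2 : G) bstar ∉ Wl B A (L.drop (i + 1)) := by
    intro i hi
    set p := L[i]'hi with hp
    set a : G := (p.2 : G) with ha
    have hsplit : L = L.take i ++ (p :: L.drop (i + 1)) := by
      conv_lhs => rw [← List.take_append_drop i L]
      rw [List.drop_eq_getElem_cons hi]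
    have hdropi : L.drop i = p :: L.drop (i + 1) := List.drop_eq_getElem_cons hi
    have hAdmi : Adm B A (p :: L.drop (i + 1)) := by
      rw [← hdropi]
      exact Adm_suffix B A (List.drop_suffix i L) hAdm
    have hsufii : L.drop (i+1) <:+ L.drop i := by
      have h1 : (L.drop i).drop 1 = L.drop (i + 1) := by
        rw [List.drop_drop]
      rw [← h1]
      exact List.drop_suffix 1 (L.drop i)
    -- product decomposition
    have hprod : phi B a bstar =
        ((L.take i).map ((phi B a) ∘ Prod.fst)).prod *
          (phi B a p.1 * ((L.drop (i + 1)).map ((phi B a) ∘ Prod.fst)).prod) := by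
      rw [hbstar, MonoidHom.map_list_prod, List.map_map]
      conv_lhs => rw [hsplit]
      rw [List.map_append, List.prod_append, List.map_cons, List.prod_cons]
      rfl
    have hmem_drop : ∀ x ∈ (L.drop (i + 1)).map ((phi B a) ∘ Prod.fst),
        x ∈ Wl B A (L.drop (i + 1)) := by
      intro x hx
      rw [List.mem_map] at hx
      obtain ⟨q, hq, rfl⟩ := hx
      exact Trow_subset_Wl B A hq ⟨p.2, rfl⟩
    have hmem_take : ∀ x ∈ (L.take i).map ((phi B a) ∘ Prod.fst),
        x ∈ Wl B A (L.drop (i + 1)) := by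
      intro x hx
      rw [List.mem_map] at hx
      obtain ⟨q, hq, rfl⟩ := hx
      obtain ⟨j, hj, hq'⟩ := List.mem_iff_getElem.mp hq
      have hjlen : j < L.length := lt_of_lt_of_le hj (by simp [List.length_take])
      have hji : j < i := lt_of_lt_of_le hj (by simp [List.length_take])
      have hqL : q = L[j]'hjlen := by
        rw [← hq']
        exact List.getElem_take
      -- Adm at position j gives L[j].1 ∈ Dl (L.drop (j+1))
      have hdropj : L.drop j = (L[j]'hjlen) :: L.drop (j + 1) := List.drop_eq_getElem_cons hjlen
      have hAdmj : Adm B A ((L[j]'hjlen) :: L.drop (j + 1)) := by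
        rw [← hdropj]
        exact Adm_suffix B A (List.drop_suffix j L) hAdm
      have hD : (L[j]'hjlen).1 ∈ Dl B A (L.drop (j + 1)) :=
        (Adm_cons B A _ _ ▸ hAdmj).2.2
      have hsuf : (p :: L.drop (i + 1)) <:+ L.drop (j + 1) := by
        rw [← hdropi]
        have harith : (L.drop (j+1)).drop (i - (j+1)) = L.drop i := by
          rw [List.drop_drop]
          congr 1
          omega
        rw [← harith]
        exact List.drop_suffix _ _
      have := Dl_le_comap B A hsuf hD
      rw [Subgroup.mem_comap] at this
      rw [hqL]
      exact this
    have hP1 : ((L.take i).map ((phi B a) ∘ Prod.fst)).prod ∈ Wl B A (L.drop (i + 1)) :=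
      list_prod_mem hmem_take
    have hP2 : ((L.drop (i + 1)).map ((phi B a) ∘ Prod.fst)).prod ∈ Wl B A (L.drop (i + 1)) :=
      list_prod_mem hmem_drop
    have hc_notin : phi B a p.1 ∉ Wl B A (L.drop (i + 1)) := (Adm_cons B A _ _ ▸ hAdmi).2.1
    have hc_in : phi B a p.1 ∈ Wl B A (L.drop i) :=
      Trow_subset_Wl B A (by rw [hdropi]; exact List.mem_cons_self) ⟨p.2, rfl⟩
    constructor
    · rw [hprod]
      exact mul_mem (Wl_mono B A hsufii hP1)
        (mul_mem hc_in (Wl_mono B A hsufii hP2))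
    · intro hin
      apply hc_notin
      have heq : phi B a p.1 =
          (((L.take i).map ((phi B a) ∘ Prod.fst)).prod)⁻¹ * phi B a bstar *
            (((L.drop (i + 1)).map ((phi B a) ∘ Prod.fst)).prod)⁻¹ := by
        rw [hprod]
        group
      rw [heq]
      exact mul_mem (mul_mem (inv_mem hP1) hin) (inv_mem hP2)
  -- injectivity into the row of bstar
  have hTfin := hTrow bstar
  haveI : Finite ↥(Trow B A bstar) := hTfin.1.to_subtype
  set F : Fin L.length → ↥(Trow B A bstar) := fun i =>
    ⟨phi B ((L[i.1]'i.2).2 : G) bstar, ⟨(L[i.1]'i.2).2, rfl⟩⟩ with hF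
  have hne : ∀ i j : Fin L.length, i.1 < j.1 → F i ≠ F j := by
    intro i j hij hFeq
    have hvi : phi B ((L[i.1]'i.2).2 : G) bstar = phi B ((L[j.1]'j.2).2 : G) bstar :=
      congrArg Subtype.val hFeq
    have hj_in : phi B ((L[j.1]'j.2).2 : G) bstar ∈ Wl B A (L.drop (i.1 + 1)) := by
      have hsuf : L.drop j.1 <:+ L.drop (i.1 + 1) := by
        have harith : (L.drop (i.1+1)).drop (j.1 - (i.1+1)) = L.drop j.1 := by
          rw [List.drop_drop]
          congr 1
          omega
        rw [← harith]
        exact List.drop_suffix _ _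
      exact Wl_mono B A hsuf ((key j.1 j.2).1)
    rw [← hvi] at hj_in
    exact (key i.1 i.2).2 hj_in
  have hinj : Function.Injective F := by
    intro i j hij
    by_contra hne'
    rcases lt_trichotomy i.1 j.1 with h | h | h
    · exact hne i j h hij
    · exact hne' (Fin.ext h)
    · exact hne j i h hij.symm
  calc L.length = Nat.card (Fin L.length) := by simp
    _ ≤ Nat.card ↥(Trow B A bstar) := Nat.card_le_card_of_injective F hinj
    _ ≤ m := hTfin.2

end Setup


theorem stmt7 :
    ∃ f : ℕ → ℕ, ∀ (m : ℕ), 1 ≤ m →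
      ∀ (G : Type u) [Group G] (A B : Subgroup G), A.Normal →
        (∀ y ∈ B, (Subgroup.centralizer {y}).relIndex A ≠ 0 ∧
          (Subgroup.centralizer {y}).relIndex A ≤ m) →
        (∀ x ∈ A, (Subgroup.centralizer {x}).relIndex B ≠ 0 ∧
          (Subgroup.centralizer {x}).relIndex B ≤ m) →
        IsMulCommutative (Subgroup.normalClosure (B : Set G)) →
        Nat.card (⁅A, B⁆ : Subgroup G) ≠ 0 ∧ Nat.card (⁅A, B⁆ : Subgroup G) ≤ f m := by
  classical
  refine ⟨fun m => (m ^ m) ^ (m + m ^ m), ?_⟩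
  intro m hm G _ A B _hAnorm hA hB hNc'
  haveI hNc : IsMulCommutative (NB B) := hNc'
  -- rows are finite and small
  have hTrow : ∀ b : ↥B, (Trow B A b).Finite ∧ Nat.card (Trow B A b) ≤ m :=
    fun b => Trow_finite_card B A b (hA (b : G) b.2)
  -- kernels of the column homomorphisms
  have hker : ∀ a : ↥A, (phi B (a : G)).ker.index
      = (Subgroup.centralizer {(a : G)}).relIndex B := by
    intro a
    rw [ker_phi]
    rfl
  -- maximal admissible list
  set S : Set ℕ := {k | ∃ L : List (↥B × ↥A), Adm B A L ∧ L.length = k} with hS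
  have hS0 : (0 : ℕ) ∈ S := ⟨[], trivial, rfl⟩
  have hSbdd : ∀ k ∈ S, k ≤ m := by
    rintro k ⟨L, hAdm, rfl⟩
    exact adm_length B A hA hTrow L hAdm
  have hmem := Nat.sSup_mem ⟨0, hS0⟩ ⟨m, hSbdd⟩
  obtain ⟨L, hAdmL, hlenL⟩ := hmem
  have hLlen : L.length ≤ m := adm_length B A hA hTrow L hAdmL
  -- maximality
  have hmax : ∀ b : ↥B, b ∈ Dl B A L → ∀ a : ↥A, phi B (a : G) b ∈ Wl B A L := by
    intro b hbD a
    by_contra hnot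
    have hAdm' : Adm B A ((b, a) :: L) := ⟨hAdmL, hnot, hbD⟩
    have : L.length + 1 ∈ S := ⟨(b, a) :: L, hAdm', rfl⟩
    have hle : L.length + 1 ≤ sSup S := le_csSup ⟨m, hSbdd⟩ this
    omega
  -- the quotient by Dl L is small
  have hDind := Dl_index B A hB hker L
  have hQcard : Nat.card (↥B ⧸ Dl B A L) = (Dl B A L).index := rfl
  haveI : Finite (↥B ⧸ Dl B A L) := by
    apply Nat.finite_of_card_ne_zero
    rw [hQcard]
    exact hDind.1
  haveI : Fintype (↥B ⧸ Dl B A L) := Fintype.ofFinite _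
  -- the list of small subgroups
  set lsub : List (Subgroup ↥(NB B)) :=
    (L.map fun p => Subgroup.closure (Trow B A p.1)) ++
      ((Finset.univ : Finset (↥B ⧸ Dl B A L)).toList.map
        fun q => Subgroup.closure (Trow B A q.out)) with hlsub
  set BIG : Subgroup ↥(NB B) := lsub.foldr (· ⊔ ·) ⊥ with hBIG
  -- each entry of lsub is finite, of order at most m^m
  have hVsub : ∀ b : ↥B, ((Subgroup.closure (Trow B A b) : Subgroup ↥(NB B)) : Set ↥(NB B)).Finite ∧
      Nat.card (Subgroup.closure (Trow B A b)) ≤ m ^ m := by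
    intro b
    have hord : ∀ x ∈ Trow B A b, 0 < orderOf x ∧ orderOf x ≤ m := by
      rintro x ⟨a, rfl⟩
      exact orderOf_phi B (a : G) (hB (a : G) a.2) b
    obtain ⟨hfin, hcard⟩ := closure_finite_card_le m (Trow B A b) (hTrow b).1 hord
    refine ⟨hfin, hcard.trans ?_⟩
    apply Nat.pow_le_pow_right hm
    rw [← Nat.card_coe_set_eq]
    exact (hTrow b).2
  have hsub : ∀ H ∈ lsub, (H : Set ↥(NB B)).Finite ∧ Nat.card H ≤ m ^ m := by
    intro H hH
    rcases List.mem_append.mp hH with h | h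
    · obtain ⟨p, _, rfl⟩ := List.mem_map.mp h
      exact hVsub p.1
    · obtain ⟨q, _, rfl⟩ := List.mem_map.mp h
      exact hVsub q.out
  obtain ⟨hBIGfin, hBIGcard⟩ := foldr_sup_card_le (m ^ m) lsub hsub
  -- bound the length of lsub
  have hlsublen : lsub.length ≤ m + m ^ m := by
    rw [hlsub, List.length_append, List.length_map, List.length_map, Finset.length_toList]
    have h1 : (Finset.univ : Finset (↥B ⧸ Dl B A L)).card = Nat.card (↥B ⧸ Dl B A L) := by
      rw [Nat.card_eq_fintype_card, Finset.card_univ]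
    have h2 : Nat.card (↥B ⧸ Dl B A L) ≤ m ^ m := by
      rw [hQcard]
      exact hDind.2.trans (Nat.pow_le_pow_right hm hLlen)
    omega
  have hBIGcard' : Nat.card BIG ≤ (m ^ m) ^ (m + m ^ m) := by
    refine hBIGcard.trans ?_
    exact Nat.pow_le_pow_right (Nat.one_le_pow _ _ hm) hlsublen
  -- W L is inside BIG
  have hWle : Wl B A L ≤ BIG := by
    rw [Wl]
    rw [Subgroup.closure_le]
    intro x hx
    obtain ⟨p, hp, hxp⟩ := Set.mem_iUnion₂.mp hx
    have hmem : Subgroup.closure (Trow B A p.1) ∈ lsub := by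
      rw [hlsub]
      exact List.mem_append.mpr (Or.inl (List.mem_map.mpr ⟨p, hp, rfl⟩))
    exact mem_foldr_sup_le lsub _ hmem (Subgroup.subset_closure hxp)
  -- the commutator subgroup is trapped
  have hKle : ⁅A, B⁆ ≤ Subgroup.map (NB B).subtype BIG := by
    rw [Subgroup.commutator_le]
    intro g₁ h₁ g₂ h₂
    set aA : ↥A := ⟨g₁, h₁⟩ with haA
    set bB : ↥B := ⟨g₂, h₂⟩ with hbB
    set q : ↥B ⧸ Dl B A L := QuotientGroup.mk bB with hq
    set t : ↥B := q.out with ht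
    have hmkt : (QuotientGroup.mk t : ↥B ⧸ Dl B A L) = QuotientGroup.mk bB :=
      Quotient.out_eq q
    have hd : t⁻¹ * bB ∈ Dl B A L := QuotientGroup.eq.mp hmkt
    have hsplit : bB = t * (t⁻¹ * bB) := by group
    have hphis : phi B g₁ bB = phi B g₁ t * phi B g₁ (t⁻¹ * bB) := by
      conv_lhs => rw [hsplit]
      rw [map_mul]
    have hmem1 : phi B g₁ t ∈ BIG := by
      have hclmem : Subgroup.closure (Trow B A t) ∈ lsub := by
        rw [hlsub]
        refine List.mem_append.mpr (Or.inr (List.mem_map.mpr ⟨q, ?_, rfl⟩))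
        rw [Finset.mem_toList]
        exact Finset.mem_univ q
      exact mem_foldr_sup_le lsub _ hclmem (Subgroup.subset_closure ⟨aA, rfl⟩)
    have hmem2 : phi B g₁ (t⁻¹ * bB) ∈ BIG := hWle (hmax _ hd aA)
    have hmemBIG : phi B g₁ bB ∈ BIG := by
      rw [hphis]
      exact mul_mem hmem1 hmem2
    exact ⟨phi B g₁ bB, hmemBIG, rfl⟩
  -- conclude
  have himfin : ((Subgroup.map (NB B).subtype BIG : Subgroup G) : Set G).Finite := by
    rw [Subgroup.coe_map]
    exact hBIGfin.image _
  have hKfin : ((⁅A, B⁆ : Subgroup G) : Set G).Finite :=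
    himfin.subset (SetLike.coe_subset_coe.mpr hKle)
  haveI : Finite ↥(⁅A, B⁆ : Subgroup G) := hKfin.to_subtype
  haveI : Nonempty ↥(⁅A, B⁆ : Subgroup G) := ⟨⟨1, one_mem _⟩⟩
  constructor
  · exact Nat.card_pos.ne'
  · have h1 : Nat.card ↥(⁅A, B⁆ : Subgroup G)
        ≤ Nat.card ↥(Subgroup.map (NB B).subtype BIG) := by
      exact Nat.card_mono himfin (SetLike.coe_subset_coe.mpr hKle)
    have h2 : Nat.card ↥(Subgroup.map (NB B).subtype BIG) = Nat.card BIG := by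
      have : ((Subgroup.map (NB B).subtype BIG : Subgroup G) : Set G)
          = (NB B).subtype '' (BIG : Set ↥(NB B)) := Subgroup.coe_map _ _
      rw [show (Nat.card ↥(Subgroup.map (NB B).subtype BIG) : ℕ)
          = Nat.card ↥((NB B).subtype '' (BIG : Set ↥(NB B))) from Nat.card_congr
            (Equiv.setCongr this)]
      exact Nat.card_image_of_injective (Subgroup.subtype_injective _) _
    rw [h2] at h1
    exact h1.trans hBIGcard'
end

section
/- Let G be a group and X a subset of G closed under G-conjugation, and let H = ⟨X⟩. Suppose m is a positive integer such that [H : C_H(x)] ≤ m for every x ∈ X. Then for every x ∈ X, the subgroup [H,x] = ⟨[h,x] : h ∈ H⟩ has finite order bounded by a function of m only. -/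
universe u

open Subgroup Function
open scoped Pointwise
open scoped commutatorElement

section OrbitStab
variable {G : Type u} [Group G]

/-- conjugates of y by elements of H -/
def conjSet (H : Subgroup G) (y : G) : Set G := {g : G | ∃ h ∈ H, g = h * y * h⁻¹}

lemma conjSet_finite_card (H : Subgroup G) (y : G)
    (hne : (Subgroup.centralizer {y}).relIndex H ≠ 0) :
    (conjSet H y).Finite ∧ (conjSet H y).ncard ≤ (Subgroup.centralizer {y}).relIndex H := by
  set Z := (Subgroup.centralizer {y}).subgroupOf H with hZ
  have hcard : Nat.card (↥H ⧸ Z) = (Subgroup.centralizer {y}).relIndex H := rfl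
  have hfinQ : Finite (↥H ⧸ Z) := Nat.finite_of_card_ne_zero (by rw [hcard]; exact hne)
  have wd : ∀ a b : ↥H, (QuotientGroup.leftRel Z) a b →
      (a : G) * y * (a : G)⁻¹ = (b : G) * y * (b : G)⁻¹ := by
    intro a b hab
    have h1 : (a : G)⁻¹ * b ∈ Subgroup.centralizer {y} := by
      have := QuotientGroup.leftRel_apply.mp hab
      rw [Subgroup.mem_subgroupOf] at this
      simpa using this
    have h' : y * ((a : G)⁻¹ * b) = ((a : G)⁻¹ * b) * y :=
      (Subgroup.mem_centralizer_iff.mp h1) y rfl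
    calc (a : G) * y * (a : G)⁻¹
        = (a : G) * (y * ((a : G)⁻¹ * (b : G))) * (b : G)⁻¹ := by group
      _ = (a : G) * (((a : G)⁻¹ * (b : G)) * y) * (b : G)⁻¹ := by rw [h']
      _ = (b : G) * y * (b : G)⁻¹ := by group
  let f : (↥H ⧸ Z) → G := Quotient.lift (fun h : ↥H => (h : G) * y * (h : G)⁻¹) wd
  have hrange : conjSet H y = Set.range f := by
    ext g
    constructor
    · rintro ⟨h, hh, rfl⟩
      exact ⟨QuotientGroup.mk (⟨h, hh⟩ : ↥H), rfl⟩
    · rintro ⟨q, rfl⟩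
      induction q using Quotient.inductionOn with
      | h a => exact ⟨a, a.2, rfl⟩
  constructor
  · rw [hrange]; exact Set.finite_range f
  · rw [hrange, ← hcard, ← Nat.card_coe_set_eq]
    exact Finite.card_range_le f
end OrbitStab

section IndexBound
variable {K : Type u} [Group K]

lemma centralizer_zpowers_eq (t : K) :
    Subgroup.centralizer ((Subgroup.zpowers t : Subgroup K) : Set K)
      = Subgroup.centralizer {t} := by
  apply le_antisymm
  · exact Subgroup.centralizer_le (by simpa using Subgroup.mem_zpowers t)
  · intro z hz
    rw [Subgroup.mem_centralizer_iff] at hz ⊢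
    rintro g ⟨n, rfl⟩
    have h : Commute t z := hz t rfl
    simpa using (h.zpow_left n).eq

/-- full conjugacy class in K -/
def conjClassK (t : K) : Set K := {g : K | ∃ h : K, g = h * t * h⁻¹}

lemma index_centralizer_le (t : K) (hfin : (conjClassK t).Finite) :
    (Subgroup.centralizer {t}).index ≠ 0 ∧
      (Subgroup.centralizer {t}).index ≤ (conjClassK t).ncard := by
  set Z := Subgroup.centralizer ({t} : Set K) with hZdef
  have wd : ∀ a b : K, (QuotientGroup.leftRel Z) a b →
      a * t * a⁻¹ = b * t * b⁻¹ := by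
    intro a b hab
    have h1 : a⁻¹ * b ∈ Z := QuotientGroup.leftRel_apply.mp hab
    have h' : t * (a⁻¹ * b) = (a⁻¹ * b) * t := (Subgroup.mem_centralizer_iff.mp h1) t rfl
    calc a * t * a⁻¹ = a * (t * (a⁻¹ * b)) * b⁻¹ := by group
      _ = a * ((a⁻¹ * b) * t) * b⁻¹ := by rw [h']
      _ = b * t * b⁻¹ := by group
  let f : (K ⧸ Z) → K := Quotient.lift (fun h : K => h * t * h⁻¹) wd
  have hmemf : ∀ q, f q ∈ conjClassK t := by
    intro q
    induction q using Quotient.inductionOn with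
    | h a => exact ⟨a, rfl⟩
  let f' : (K ⧸ Z) → (conjClassK t) := fun q => ⟨f q, hmemf q⟩
  have hinj : Injective f' := by
    intro q₁ q₂ hq
    induction q₁ using Quotient.inductionOn with
    | h a =>
    induction q₂ using Quotient.inductionOn with
    | h b =>
    have heq : a * t * a⁻¹ = b * t * b⁻¹ := congrArg Subtype.val hq
    have h1 : t * (a⁻¹ * b) = (a⁻¹ * b) * t := by
      have : t * a⁻¹ * b = a⁻¹ * (a * t * a⁻¹) * b := by group
      rw [heq] at this
      calc t * (a⁻¹ * b) = a⁻¹ * (a * t * a⁻¹) * b := by group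
        _ = a⁻¹ * (b * t * b⁻¹) * b := by rw [heq]
        _ = (a⁻¹ * b) * t := by group
    exact Quotient.sound (QuotientGroup.leftRel_apply.mpr
      (Subgroup.mem_centralizer_iff.mpr (by rintro g rfl; exact h1)))
  have : Finite (conjClassK t) := hfin
  have hfinQ : Finite (K ⧸ Z) := Finite.of_injective f' hinj
  constructor
  · have : Nonempty (K ⧸ Z) := ⟨QuotientGroup.mk 1⟩
    exact Nat.card_ne_zero.mpr ⟨this, hfinQ⟩
  · rw [← Nat.card_coe_set_eq]
    exact Nat.card_le_card_of_injective f' hinj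
end IndexBound

lemma ccb_mono {a b : ℕ} (h : a ≤ b) :
    Subgroup.cardCommutatorBound a ≤ Subgroup.cardCommutatorBound b := by
  unfold Subgroup.cardCommutatorBound
  rcases Nat.eq_zero_or_pos a with rfl | ha
  · rcases Nat.eq_zero_or_pos b with rfl | hb
    · exact le_rfl
    · norm_num
      exact Nat.one_le_iff_ne_zero.mpr (pow_ne_zero _ (pow_ne_zero _ (by omega : b ≠ 0)))
  · have hb : 0 < b := lt_of_lt_of_le ha h
    have h1 : a ^ (2 * a) ≤ b ^ (2 * b) :=
      (Nat.pow_le_pow_left h _).trans (Nat.pow_le_pow_right hb (by omega))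
    have h2 : a ^ (2 * a + 1) + 1 ≤ b ^ (2 * b + 1) + 1 := by
      have := (Nat.pow_le_pow_left h (2*a+1)).trans (Nat.pow_le_pow_right hb (by omega : 2*a+1 ≤ 2*b+1))
      omega
    calc (a ^ (2*a)) ^ (a ^ (2*a+1) + 1) ≤ (b ^ (2*b)) ^ (a ^ (2*a+1) + 1) :=
          Nat.pow_le_pow_left h1 _
      _ ≤ (b ^ (2*b)) ^ (b ^ (2*b+1) + 1) :=
          Nat.pow_le_pow_right (Nat.pow_pos hb) h2

section CenterIndex
variable {K : Type u} [Group K]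

lemma center_index_bound (T : Set K) (hT : Subgroup.closure T = ⊤) (hTfin : T.Finite)
    (n k : ℕ) (hn : 1 ≤ n) (hk : T.ncard ≤ k)
    (hc : ∀ t ∈ T, (Subgroup.centralizer {t}).index ≠ 0 ∧
        (Subgroup.centralizer {t}).index ≤ n) :
    (Subgroup.center K).index ≠ 0 ∧ (Subgroup.center K).index ≤ n ^ k := by
  classical
  have key : ∀ s : Finset K,
      (∀ t ∈ s, (Subgroup.centralizer {t}).index ≠ 0 ∧ (Subgroup.centralizer {t}).index ≤ n) →
      (⨅ g ∈ (s : Set K), Subgroup.centralizer ((Subgroup.zpowers g : Subgroup K) : Set K)).index ≠ 0 ∧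
      (⨅ g ∈ (s : Set K), Subgroup.centralizer ((Subgroup.zpowers g : Subgroup K) : Set K)).index ≤ n ^ s.card := by
    intro s
    induction s using Finset.induction_on with
    | empty => intro _; simp [Subgroup.index_top]
    | @insert a s ha ih =>
      intro hs
      have h1 := hs a (Finset.mem_insert_self a s)
      have h2 := ih (fun t ht => hs t (Finset.mem_insert_of_mem ht))
      rw [Finset.coe_insert, iInf_insert]
      have hza : (Subgroup.centralizer ((Subgroup.zpowers a : Subgroup K) : Set K)) =
          Subgroup.centralizer {a} := centralizer_zpowers_eq a
      constructor
      · apply Subgroup.index_inf_ne_zero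
        · rw [hza]; exact h1.1
        · exact h2.1
      · calc (Subgroup.centralizer ((Subgroup.zpowers a : Subgroup K) : Set K) ⊓ _).index
            ≤ (Subgroup.centralizer ((Subgroup.zpowers a : Subgroup K) : Set K)).index *
              (⨅ g ∈ (s : Set K), Subgroup.centralizer ((Subgroup.zpowers g : Subgroup K) : Set K)).index :=
              Subgroup.index_inf_le
          _ ≤ n * n ^ s.card := Nat.mul_le_mul (by rw [hza]; exact h1.2) h2.2
          _ = n ^ (insert a s).card := by
              rw [Finset.card_insert_of_notMem ha, pow_succ']
  have hcenter : Subgroup.center K =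
      ⨅ g ∈ (hTfin.toFinset : Set K), Subgroup.centralizer ((Subgroup.zpowers g : Subgroup K) : Set K) := by
    rw [Set.Finite.coe_toFinset]
    rw [Subgroup.center_eq_iInf hT]
    simp only [centralizer_zpowers_eq]
  have hkey := key hTfin.toFinset (fun t ht => hc t (hTfin.mem_toFinset.mp ht))
  rw [← hcenter] at hkey
  refine ⟨hkey.1, hkey.2.trans ?_⟩
  apply Nat.pow_le_pow_right hn
  rwa [Set.ncard_eq_toFinset_card T hTfin] at hk
end CenterIndex

section CommSet
variable {K : Type u} [Group K]

lemma commutator_central_shift (a b z w : K) (hz : z ∈ Subgroup.center K)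
    (hw : w ∈ Subgroup.center K) : ⁅a * z, b * w⁆ = ⁅a, b⁆ := by
  have hz' := Subgroup.mem_center_iff.mp hz
  have hw' := Subgroup.mem_center_iff.mp hw
  have hw'' := Subgroup.mem_center_iff.mp (inv_mem hw)
  simp only [commutatorElement_def, mul_inv_rev]
  calc a * z * (b * w) * (z⁻¹ * a⁻¹) * (w⁻¹ * b⁻¹)
      = a * ((z * b) * (w * z⁻¹)) * ((a⁻¹ * w⁻¹) * b⁻¹) := by group
    _ = a * ((b * z) * (z⁻¹ * w)) * ((w⁻¹ * a⁻¹) * b⁻¹) := by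
        rw [← hz' b, ← hw' z⁻¹, hw'' a⁻¹]
    _ = a * b * a⁻¹ * b⁻¹ := by group

lemma commutatorSet_finite_card (hZ : (Subgroup.center K).index ≠ 0) :
    Finite (commutatorSet K) ∧
      Nat.card (commutatorSet K) ≤ (Subgroup.center K).index ^ 2 := by
  have hfinQ : Finite (K ⧸ Subgroup.center K) := Nat.finite_of_card_ne_zero hZ
  set Q := K ⧸ Subgroup.center K
  let f : Q × Q → K := fun p => ⁅p.1.out, p.2.out⁆
  have hrange : commutatorSet K = Set.range f := by
    ext g
    constructor
    · rintro ⟨a, b, rfl⟩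
      refine ⟨(QuotientGroup.mk a, QuotientGroup.mk b), ?_⟩
      show ⁅(QuotientGroup.mk a : Q).out, (QuotientGroup.mk b : Q).out⁆ = ⁅a, b⁆
      obtain ⟨z, hz⟩ := QuotientGroup.mk_out_eq_mul (Subgroup.center K) a
      obtain ⟨w, hw⟩ := QuotientGroup.mk_out_eq_mul (Subgroup.center K) b
      rw [hz, hw]
      exact commutator_central_shift a b z w z.2 w.2
    · rintro ⟨p, rfl⟩
      exact ⟨p.1.out, p.2.out, rfl⟩
  constructor
  · rw [hrange]; exact Set.finite_range f
  · rw [hrange]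
    calc Nat.card (Set.range f) ≤ Nat.card (Q × Q) := Finite.card_range_le f
      _ = (Subgroup.center K).index ^ 2 := by
          rw [Nat.card_prod]; rw [sq]; rfl
end CommSet

section CommBound
variable {K : Type u} [Group K]

lemma comm_bound (T : Set K) (hT : Subgroup.closure T = ⊤) (hTfin : T.Finite)
    (n k : ℕ) (hn : 1 ≤ n) (hk : T.ncard ≤ k)
    (hc : ∀ t ∈ T, (conjClassK t).Finite ∧ (conjClassK t).ncard ≤ n) :
    Finite (commutator K) ∧
      Nat.card (commutator K) ≤ Subgroup.cardCommutatorBound ((n ^ k) ^ 2) := by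
  have hidx : ∀ t ∈ T, (Subgroup.centralizer {t}).index ≠ 0 ∧
      (Subgroup.centralizer {t}).index ≤ n := by
    intro t ht
    obtain ⟨hfin, hcard⟩ := hc t ht
    obtain ⟨h1, h2⟩ := index_centralizer_le t hfin
    exact ⟨h1, h2.trans hcard⟩
  obtain ⟨hZne, hZle⟩ := center_index_bound T hT hTfin n k hn hk hidx
  obtain ⟨hCSfin, hCSle⟩ := commutatorSet_finite_card hZne
  haveI := hCSfin
  refine ⟨inferInstance, ?_⟩
  calc Nat.card (commutator K) ≤ Subgroup.cardCommutatorBound (Nat.card (commutatorSet K)) :=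
        Subgroup.card_commutator_le_of_finite_commutatorSet K
    _ ≤ Subgroup.cardCommutatorBound ((n ^ k) ^ 2) :=
        ccb_mono (hCSle.trans (Nat.pow_le_pow_left hZle 2))

lemma commutator_elt_pow_eq_one (T : Set K) (hT : Subgroup.closure T = ⊤) (hTfin : T.Finite)
    (n k : ℕ) (hn : 1 ≤ n) (hk : T.ncard ≤ k)
    (hc : ∀ t ∈ T, (conjClassK t).Finite ∧ (conjClassK t).ncard ≤ n) (a b : K) :
    ⁅a, b⁆ ^ (Nat.factorial (Subgroup.cardCommutatorBound ((n ^ k) ^ 2))) = 1 := by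
  obtain ⟨hfin, hle⟩ := comm_bound T hT hTfin n k hn hk hc
  haveI := hfin
  set c := Nat.card (commutator K) with hcdef
  have hcpos : 0 < c := Nat.card_pos
  have hdvd : c ∣ Nat.factorial (Subgroup.cardCommutatorBound ((n ^ k) ^ 2)) :=
    Nat.dvd_factorial hcpos hle
  obtain ⟨d, hd⟩ := hdvd
  have hmem : ⁅a, b⁆ ∈ commutator K :=
    Subgroup.commutator_mem_commutator (Subgroup.mem_top a) (Subgroup.mem_top b)
  set u : ↥(commutator K) := ⟨⁅a, b⁆, hmem⟩ with hudef
  have hu : u ^ c = 1 := pow_card_eq_one'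
  have : u ^ (Nat.factorial (Subgroup.cardCommutatorBound ((n ^ k) ^ 2))) = 1 := by
    rw [hd, pow_mul, hu, one_pow]
  calc ⁅a, b⁆ ^ (Nat.factorial (Subgroup.cardCommutatorBound ((n ^ k) ^ 2)))
      = ((u ^ (Nat.factorial (Subgroup.cardCommutatorBound ((n ^ k) ^ 2))) : ↥(commutator K)) : K) := by
        rw [SubgroupClass.coe_pow]
    _ = 1 := by rw [this]; rfl
end CommBound

section AbelianBound

lemma abelian_card_bound {A : Type u} [CommGroup A] (T : Set A)
    (hT : Subgroup.closure T = ⊤) (hTfin : T.Finite)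
    (E k : ℕ) (hE : 1 ≤ E) (hk : T.ncard ≤ k) (htor : ∀ a ∈ T, a ^ E = 1) :
    Finite A ∧ Nat.card A ≤ E ^ k := by
  classical
  have key : ∀ s : Finset A, (∀ a ∈ s, a ^ E = 1) →
      ((Subgroup.closure (s : Set A) : Subgroup A) : Set A).Finite ∧
      Nat.card (Subgroup.closure (s : Set A)) ≤ E ^ s.card := by
    intro s
    induction s using Finset.induction_on with
    | empty =>
      intro _
      simp only [Finset.coe_empty, Subgroup.closure_empty, Finset.card_empty, pow_zero]
      exact ⟨by simp [Subgroup.coe_bot], le_of_eq Subgroup.card_bot⟩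
    | @insert a s ha ih =>
      intro hs
      have hA : a ^ E = 1 := hs a (Finset.mem_insert_self a s)
      obtain ⟨ihfin, ihcard⟩ := ih (fun t ht => hs t (Finset.mem_insert_of_mem ht))
      have hsplit : Subgroup.closure ((insert a s : Finset A) : Set A)
          = Subgroup.zpowers a ⊔ Subgroup.closure (s : Set A) := by
        rw [Finset.coe_insert, Set.insert_eq, Subgroup.closure_union,
          Subgroup.zpowers_eq_closure]
      have hmul : ((Subgroup.zpowers a ⊔ Subgroup.closure (s : Set A) : Subgroup A) : Set A)
          = (Subgroup.zpowers a : Set A) * (Subgroup.closure (s : Set A) : Set A) :=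
        Subgroup.mul_normal (Subgroup.zpowers a) (Subgroup.closure (s : Set A))
      have hfinz : ((Subgroup.zpowers a : Subgroup A) : Set A).Finite :=
        finite_zpowers.mpr (isOfFinOrder_iff_pow_eq_one.mpr ⟨E, hE, hA⟩)
      have hfinmul : ((Subgroup.zpowers a : Subgroup A) : Set A) *
          ((Subgroup.closure (s : Set A) : Subgroup A) : Set A) |>.Finite :=
        Set.Finite.mul hfinz ihfin
      constructor
      · rw [hsplit, hmul]; exact hfinmul
      · rw [hsplit]
        have h1 : Nat.card (Subgroup.zpowers a ⊔ Subgroup.closure (s : Set A) : Subgroup A)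
            = Nat.card ((Subgroup.zpowers a : Set A) * (Subgroup.closure (s : Set A) : Set A) : Set A) := by
          rw [← hmul]; rfl
        rw [h1]
        calc Nat.card ((Subgroup.zpowers a : Set A) * (Subgroup.closure (s : Set A) : Set A) : Set A)
            ≤ Nat.card (Subgroup.zpowers a : Set A) * Nat.card (Subgroup.closure (s : Set A) : Set A) :=
              Set.natCard_mul_le
          _ ≤ E * E ^ s.card := by
              apply Nat.mul_le_mul
              · calc Nat.card (Subgroup.zpowers a : Set A) = orderOf a := Nat.card_zpowers a
                  _ ≤ E := orderOf_le_of_pow_eq_one (by omega) hA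
              · exact ihcard
          _ = E ^ (insert a s).card := by
              rw [Finset.card_insert_of_notMem ha, pow_succ']
  obtain ⟨hfin, hcard⟩ := key hTfin.toFinset (fun t ht => htor t (hTfin.mem_toFinset.mp ht))
  rw [Set.Finite.coe_toFinset] at hfin hcard
  rw [hT] at hfin hcard
  have hfinA : Finite A := by
    rw [Subgroup.coe_top] at hfin
    exact Set.finite_univ_iff.mp hfin
  refine ⟨hfinA, ?_⟩
  rw [Subgroup.card_top] at hcard
  refine hcard.trans (Nat.pow_le_pow_right hE ?_)
  rwa [Set.ncard_eq_toFinset_card T hTfin] at hk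
end AbelianBound

section FullBound
variable {K : Type u} [Group K]

lemma full_bound (T : Set K) (hT : Subgroup.closure T = ⊤) (hTfin : T.Finite)
    (n k E : ℕ) (hn : 1 ≤ n) (hE : 1 ≤ E) (hk : T.ncard ≤ k)
    (hc : ∀ t ∈ T, (conjClassK t).Finite ∧ (conjClassK t).ncard ≤ n)
    (htor : ∀ t ∈ T, (Abelianization.of t : Abelianization K) ^ E = 1) :
    Nat.card K ≠ 0 ∧
      Nat.card K ≤ E ^ k * Subgroup.cardCommutatorBound ((n ^ k) ^ 2) := by
  obtain ⟨hcommfin, hcommle⟩ := comm_bound T hT hTfin n k hn hk hc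
  haveI := hcommfin
  have hsurj : Function.Surjective (Abelianization.of : K → Abelianization K) := by
    intro b
    exact Quotient.inductionOn' b (fun a => ⟨a, rfl⟩)
  have hgen : Subgroup.closure (Abelianization.of '' T) = (⊤ : Subgroup (Abelianization K)) := by
    rw [← MonoidHom.map_closure, hT, Subgroup.map_top_of_surjective _ hsurj]
  have himfin : (Abelianization.of '' T).Finite := hTfin.image _
  have himcard : (Abelianization.of '' T).ncard ≤ k :=
    (Set.ncard_image_le hTfin).trans hk
  have himtor : ∀ a ∈ Abelianization.of '' T, a ^ E = 1 := by
    rintro a ⟨t, ht, rfl⟩; exact htor t ht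
  obtain ⟨hAfin, hAcard⟩ :=
    abelian_card_bound (Abelianization.of '' T) hgen himfin E k hE himcard himtor
  have hformula : Nat.card K
      = Nat.card (Abelianization K) * Nat.card (commutator K) :=
    Subgroup.card_eq_card_quotient_mul_card_subgroup (commutator K)
  have hApos : 0 < Nat.card (Abelianization K) := Nat.card_pos
  have hcpos : 0 < Nat.card (commutator K) := Nat.card_pos
  constructor
  · rw [hformula]; positivity
  · rw [hformula]
    exact Nat.mul_le_mul hAcard hcommle
end FullBound

/-- bound function -/
def fBFC (m : ℕ) : ℕ :=
  (Nat.factorial (Subgroup.cardCommutatorBound ((m ^ (2 * m)) ^ 2))) ^ (m * m) *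
    Subgroup.cardCommutatorBound (((m * m) ^ (m * m)) ^ 2)

theorem stmt9 :
    ∃ f : ℕ → ℕ, ∀ (m : ℕ), 0 < m →
      ∀ (G : Type u) [Group G] (X : Set G),
        (∀ x ∈ X, ∀ g : G, g⁻¹ * x * g ∈ X) →
        (∀ x ∈ X, (Subgroup.centralizer {x}).relIndex (Subgroup.closure X) ≠ 0 ∧
          (Subgroup.centralizer {x}).relIndex (Subgroup.closure X) ≤ m) →
        ∀ x ∈ X,
          Nat.card (Subgroup.closure {g : G | ∃ h ∈ Subgroup.closure X, g = ⁅h, x⁆}) ≠ 0 ∧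
          Nat.card (Subgroup.closure {g : G | ∃ h ∈ Subgroup.closure X, g = ⁅h, x⁆}) ≤ f m := by
  refine ⟨fBFC, ?_⟩
  intro m hm G _ X hXconj hXidx x hx
  set H : Subgroup G := Subgroup.closure X with hHdef
  set E : ℕ := Nat.factorial (Subgroup.cardCommutatorBound ((m ^ (2 * m)) ^ 2)) with hEdef
  have hE1 : 1 ≤ E := Nat.one_le_iff_ne_zero.mpr (Nat.factorial_ne_zero _)
  -- conjugacy class facts
  have hCl : ∀ y ∈ X, (conjSet H y).Finite ∧ (conjSet H y).ncard ≤ m := by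
    intro y hy
    obtain ⟨hne, hle⟩ := hXidx y hy
    obtain ⟨h1, h2⟩ := conjSet_finite_card H y hne
    exact ⟨h1, h2.trans hle⟩
  have hClX : ∀ y ∈ X, conjSet H y ⊆ X := by
    rintro y hy g ⟨h, hh, rfl⟩
    have := hXconj y hy h⁻¹
    simpa using this
  have hClH : ∀ y ∈ X, conjSet H y ⊆ H := by
    rintro y hy g ⟨h, hh, rfl⟩
    exact mul_mem (mul_mem hh (Subgroup.subset_closure hy)) (inv_mem hh)
  have hClconj : ∀ y : G, ∀ h ∈ H, ∀ c ∈ conjSet H y, h * c * h⁻¹ ∈ conjSet H y := by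
    rintro y h hh c ⟨k, hk, rfl⟩
    exact ⟨h * k, mul_mem hh hk, by group⟩
  have hClself : ∀ y : G, y ∈ conjSet H y := fun y => ⟨1, one_mem H, by group⟩
  set C : Set G := conjSet H x with hCdef
  obtain ⟨hCfin, hCcard⟩ := hCl x hx
  rw [← hCdef] at hCfin hCcard
  have hCX : C ⊆ X := hClX x hx
  have hCH : C ⊆ H := hClH x hx
  -- the key base-case torsion statement
  have hbase : ∀ y ∈ X, ∀ c ∈ C, ⁅y, c⁆ ^ E = 1 := by
    intro y hy c hc
    set D : Set G := conjSet H y ∪ C with hDdef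
    have hDH : D ⊆ H := Set.union_subset (hClH y hy) hCH
    set U : Subgroup G := Subgroup.closure D with hUdef
    have hUH : U ≤ H := (Subgroup.closure_le H).mpr hDH
    set T : Set ↥U := U.subtype ⁻¹' D with hTdef
    have hTtop : Subgroup.closure T = ⊤ := Subgroup.closure_preimage_eq_top D
    obtain ⟨hClyfin, hClycard⟩ := hCl y hy
    have hDfin : D.Finite := Set.Finite.union hClyfin hCfin
    have hTfin : T.Finite := hDfin.preimage (Subtype.coe_injective.injOn)
    have hTcard : T.ncard ≤ 2 * m := by
      have h1 : T.ncard = ((U.subtype) '' T).ncard :=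
        (Set.ncard_image_of_injective T Subtype.coe_injective).symm
      have h2 : ((U.subtype) '' T).ncard ≤ D.ncard :=
        Set.ncard_le_ncard (Set.image_preimage_subset _ _) hDfin
      have h3 : D.ncard ≤ (conjSet H y).ncard + C.ncard := Set.ncard_union_le _ _
      omega
    have hconj : ∀ t ∈ T, (conjClassK t).Finite ∧ (conjClassK t).ncard ≤ m := by
      intro t ht
      have htD : (t : G) ∈ D := ht
      -- pick the class containing ↑t
      have hcase : ∃ z, ((t : G) ∈ conjSet H z) ∧ (conjSet H z).Finite ∧
          (conjSet H z).ncard ≤ m := by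
        rcases htD with h | h
        · exact ⟨y, h, hClyfin, hClycard⟩
        · exact ⟨x, h, hCfin, hCcard⟩
      obtain ⟨z, htz, hzfin, hzcard⟩ := hcase
      have himsub : (U.subtype) '' (conjClassK t) ⊆ conjSet H z := by
        rintro g ⟨w, ⟨u, rfl⟩, rfl⟩
        exact hClconj z (u : G) (hUH u.2) (t : G) htz
      have hfin : (conjClassK t).Finite :=
        Set.Finite.of_finite_image ((hzfin.subset himsub)) (Subtype.coe_injective.injOn)
      refine ⟨hfin, ?_⟩
      have h1 : (conjClassK t).ncard = ((U.subtype) '' (conjClassK t)).ncard :=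
        (Set.ncard_image_of_injective _ Subtype.coe_injective).symm
      have h2 : ((U.subtype) '' (conjClassK t)).ncard ≤ (conjSet H z).ncard :=
        Set.ncard_le_ncard himsub hzfin
      omega
    have hyU : y ∈ U := Subgroup.subset_closure (Set.mem_union_left _ (hClself y))
    have hcU : c ∈ U := Subgroup.subset_closure (Set.mem_union_right _ hc)
    have hkey := commutator_elt_pow_eq_one T hTtop hTfin m (2 * m)
      (Nat.one_le_iff_ne_zero.mpr (by omega)) hTcard hconj ⟨y, hyU⟩ ⟨c, hcU⟩
    have hcoe : ((⁅(⟨y, hyU⟩ : ↥U), (⟨c, hcU⟩ : ↥U)⁆ ^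
        (Nat.factorial (Subgroup.cardCommutatorBound ((m ^ (2 * m)) ^ 2))) : ↥U) : G)
        = ⁅y, c⁆ ^ E := by
      rw [hEdef]
      push_cast [commutatorElement_def]
      rfl
    rw [hkey] at hcoe
    simpa using hcoe.symm
  -- the set S of all commutators with C
  set S : Set G := {g : G | ∃ h ∈ H, ∃ c ∈ C, g = ⁅h, c⁆} with hSdef
  have hSsub : S ⊆ C * C⁻¹ := by
    rintro g ⟨h, hh, c, hc, rfl⟩
    have h1 : h * c * h⁻¹ ∈ C := hClconj x h hh c hc
    have h2 : c⁻¹ ∈ C⁻¹ := Set.inv_mem_inv.mpr hc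
    have : ⁅h, c⁆ = (h * c * h⁻¹) * c⁻¹ := by group
    rw [this]
    exact Set.mul_mem_mul h1 h2
  have hSfin : S.Finite := (hCfin.mul hCfin.inv).subset hSsub
  have hScard : S.ncard ≤ m * m := by
    have h1 : S.ncard ≤ (C * C⁻¹).ncard :=
      Set.ncard_le_ncard hSsub (hCfin.mul hCfin.inv)
    have h2 : (C * C⁻¹).ncard ≤ C.ncard * C⁻¹.ncard := by
      rw [← Nat.card_coe_set_eq, ← Nat.card_coe_set_eq, ← Nat.card_coe_set_eq]
      exact Set.natCard_mul_le
    have h3 : C⁻¹.ncard = C.ncard := by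
      rw [← Nat.card_coe_set_eq, ← Nat.card_coe_set_eq]
      exact Set.natCard_inv C
    calc S.ncard ≤ C.ncard * C⁻¹.ncard := h1.trans h2
      _ = C.ncard * C.ncard := by rw [h3]
      _ ≤ m * m := Nat.mul_le_mul hCcard hCcard
  have hSH : S ⊆ H := by
    rintro g ⟨h, hh, c, hc, rfl⟩
    exact mul_mem (mul_mem (mul_mem hh (hCH hc)) (inv_mem hh)) (inv_mem (hCH hc))
  have hSconj : ∀ h ∈ H, ∀ s ∈ S, h * s * h⁻¹ ∈ S := by
    rintro h hh s ⟨a, ha, c, hc, rfl⟩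
    refine ⟨h * a * h⁻¹, mul_mem (mul_mem hh ha) (inv_mem hh),
      h * c * h⁻¹, hClconj x h hh c hc, ?_⟩
    simp only [commutatorElement_def]
    group
  set F : Subgroup G := Subgroup.closure S with hFdef
  have hFH : F ≤ H := (Subgroup.closure_le H).mpr hSH
  have hmemS : ∀ h ∈ H, ∀ c ∈ C, ⁅h, c⁆ ∈ S := fun h hh c hc => ⟨h, hh, c, hc, rfl⟩
  have hmemF : ∀ h ∈ H, ∀ c ∈ C, ⁅h, c⁆ ∈ F :=
    fun h hh c hc => Subgroup.subset_closure (hmemS h hh c hc)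
  -- torsion of generators in the abelianization of F
  have claim : ∀ h (hh : h ∈ H), ∀ c, c ∈ C → ∀ (hmem : ⁅h, c⁆ ∈ F),
      (Abelianization.of (⟨⁅h, c⁆, hmem⟩ : ↥F)) ^ E = 1 := by
    intro h hh
    induction hh using Subgroup.closure_induction with
    | mem y hy =>
      intro c hc hmem
      have h1 : ⁅y, c⁆ ^ E = 1 := hbase y hy c hc
      have h2 : (⟨⁅y, c⁆, hmem⟩ : ↥F) ^ E = 1 := by
        apply Subtype.ext
        push_cast
        exact h1
      rw [← map_pow, h2, map_one]
    | one =>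
      intro c hc hmem
      have h1 : (⟨⁅(1 : G), c⁆, hmem⟩ : ↥F) = 1 := by
        apply Subtype.ext
        simp [commutatorElement_def]
      rw [h1, map_one, one_pow]
    | mul a b ha hb pa pb =>
      intro c hc hmem
      have hc1 : b * c * b⁻¹ ∈ C := hClconj x b hb c hc
      have hm1 : ⁅a, b * c * b⁻¹⁆ ∈ F := hmemF a ha _ hc1
      have hm2 : ⁅b, c⁆ ∈ F := hmemF b hb c hc
      have hid : ⁅a * b, c⁆ = ⁅a, b * c * b⁻¹⁆ * ⁅b, c⁆ := by
        simp only [commutatorElement_def]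
        group
      have helt : (⟨⁅a * b, c⁆, hmem⟩ : ↥F)
          = ⟨⁅a, b * c * b⁻¹⁆, hm1⟩ * ⟨⁅b, c⁆, hm2⟩ := Subtype.ext hid
      rw [helt, map_mul, mul_pow, pa _ hc1 hm1, pb c hc hm2, one_mul]
    | inv a ha pa =>
      intro c hc hmem
      have hc1 : a⁻¹ * c * a ∈ C := by
        have := hClconj x a⁻¹ (inv_mem ha) c hc
        simpa using this
      have hm1 : ⁅a, a⁻¹ * c * a⁆ ∈ F := hmemF a ha _ hc1
      have hid : ⁅a⁻¹, c⁆ = (⁅a, a⁻¹ * c * a⁆)⁻¹ := by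
        simp only [commutatorElement_def]
        group
      have helt : (⟨⁅a⁻¹, c⁆, hmem⟩ : ↥F) = (⟨⁅a, a⁻¹ * c * a⁆, hm1⟩ : ↥F)⁻¹ :=
        Subtype.ext hid
      rw [helt, map_inv, inv_pow, pa _ hc1 hm1, inv_one]
  -- apply the full bound to F
  set T : Set ↥F := F.subtype ⁻¹' S with hTdef
  have hTtop : Subgroup.closure T = ⊤ := Subgroup.closure_preimage_eq_top S
  have hTfin : T.Finite := hSfin.preimage (Subtype.coe_injective.injOn)
  have hTcard : T.ncard ≤ m * m := by
    have h1 : T.ncard = ((F.subtype) '' T).ncard :=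
      (Set.ncard_image_of_injective T Subtype.coe_injective).symm
    have h2 : ((F.subtype) '' T).ncard ≤ S.ncard :=
      Set.ncard_le_ncard (Set.image_preimage_subset _ _) hSfin
    omega
  have hconjF : ∀ t ∈ T, (conjClassK t).Finite ∧ (conjClassK t).ncard ≤ m * m := by
    intro t ht
    have htS : (t : G) ∈ S := ht
    have himsub : (F.subtype) '' (conjClassK t) ⊆ S := by
      rintro g ⟨w, ⟨u, rfl⟩, rfl⟩
      exact hSconj (u : G) (hFH u.2) (t : G) htS
    have hfin : (conjClassK t).Finite :=
      Set.Finite.of_finite_image (hSfin.subset himsub) (Subtype.coe_injective.injOn)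
    refine ⟨hfin, ?_⟩
    have h1 : (conjClassK t).ncard = ((F.subtype) '' (conjClassK t)).ncard :=
      (Set.ncard_image_of_injective _ Subtype.coe_injective).symm
    have h2 : ((F.subtype) '' (conjClassK t)).ncard ≤ S.ncard :=
      Set.ncard_le_ncard himsub hSfin
    omega
  have htorF : ∀ t ∈ T, (Abelianization.of t : Abelianization ↥F) ^ E = 1 := by
    intro t ht
    obtain ⟨h, hh, c, hc, hteq⟩ := ht
    have helt : t = ⟨⁅h, c⁆, by rw [← hteq]; exact t.2⟩ := Subtype.ext hteq
    rw [helt]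
    exact claim h hh c hc _
  obtain ⟨hFne, hFle⟩ := full_bound T hTtop hTfin (m * m) (m * m) E
    (Nat.one_le_iff_ne_zero.mpr (by positivity)) hE1 hTcard hconjF htorF
  haveI hFfin : Finite ↥F := Nat.finite_of_card_ne_zero hFne
  -- conclude for the target subgroup
  have hsub : Subgroup.closure {g : G | ∃ h ∈ H, g = ⁅h, x⁆} ≤ F := by
    apply (Subgroup.closure_le F).mpr
    rintro g ⟨h, hh, rfl⟩
    exact hmemF h hh x (hClself x)
  constructor
  · haveI : Finite ↥(Subgroup.closure {g : G | ∃ h ∈ H, g = ⁅h, x⁆}) :=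
      Finite.of_injective _ (Subgroup.inclusion_injective hsub)
    exact Nat.card_ne_zero.mpr ⟨⟨1⟩, this⟩
  · calc Nat.card ↥(Subgroup.closure {g : G | ∃ h ∈ H, g = ⁅h, x⁆})
        ≤ Nat.card ↥F := Subgroup.card_le_of_le hsub
      _ ≤ E ^ (m * m) * Subgroup.cardCommutatorBound ((((m * m)) ^ (m * m)) ^ 2) := hFle
      _ = fBFC m := by rw [hEdef]; rfl
end

section
/- For every 0 < ε ≤ 1 there exist positive integers l and n depending only on ε such that: if K is a closed subgroup of a compact group G with Pr(⟨g⟩,G) ≥ ε for all g ∈ K, then [G : C_G(g^l)] ≤ n for all g ∈ K. -/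
open MeasureTheory
open scoped ENNReal

universe u

open Set

section Sep
variable {X Y : Type*} [TopologicalSpace X] [TopologicalSpace Y] [T2Space X] [T2Space Y]
  [MeasurableSpace X] [MeasurableSpace Y] [OpensMeasurableSpace X] [OpensMeasurableSpace Y]

lemma sep_pp {a b : X × Y} (hab : a ≠ b) :
    ∃ P Q : Set (X × Y), IsOpen P ∧ MeasurableSet P ∧ IsOpen Q ∧ MeasurableSet Q ∧
      a ∈ P ∧ b ∈ Q ∧ Disjoint P Q := by
  by_cases h1 : a.1 = b.1
  · have h2 : a.2 ≠ b.2 := fun h2 => hab (Prod.ext h1 h2)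
    obtain ⟨u, v, hu, hv, hau, hbv, huv⟩ := t2_separation h2
    refine ⟨univ ×ˢ u, univ ×ˢ v, isOpen_univ.prod hu, MeasurableSet.univ.prod hu.measurableSet,
      isOpen_univ.prod hv, MeasurableSet.univ.prod hv.measurableSet,
      ⟨trivial, hau⟩, ⟨trivial, hbv⟩, ?_⟩
    rw [Set.disjoint_left]
    rintro ⟨x, y⟩ ⟨-, hy⟩ ⟨-, hy'⟩
    exact Set.disjoint_left.mp huv hy hy'
  · obtain ⟨u, v, hu, hv, hau, hbv, huv⟩ := t2_separation h1
    refine ⟨u ×ˢ univ, v ×ˢ univ, hu.prod isOpen_univ, hu.measurableSet.prod MeasurableSet.univ,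
      hv.prod isOpen_univ, hv.measurableSet.prod MeasurableSet.univ,
      ⟨hau, trivial⟩, ⟨hbv, trivial⟩, ?_⟩
    rw [Set.disjoint_left]
    rintro ⟨x, y⟩ ⟨hx, -⟩ ⟨hx', -⟩
    exact Set.disjoint_left.mp huv hx hx'

lemma sep_pc {L : Set (X × Y)} (hL : IsCompact L) (a : X × Y) (ha : a ∉ L) :
    ∃ P Q : Set (X × Y), IsOpen P ∧ MeasurableSet P ∧ IsOpen Q ∧ MeasurableSet Q ∧
      a ∈ P ∧ L ⊆ Q ∧ Disjoint P Q := by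
  have H : ∀ b : L, ∃ P Q : Set (X × Y), IsOpen P ∧ MeasurableSet P ∧ IsOpen Q ∧
      MeasurableSet Q ∧ a ∈ P ∧ (b : X × Y) ∈ Q ∧ Disjoint P Q :=
    fun b => sep_pp (fun h => ha (h ▸ b.2))
  choose P Q hPo hPm hQo hQm haP hbQ hPQ using H
  obtain ⟨t, ht⟩ := hL.elim_finite_subcover Q hQo
    (fun x hx => Set.mem_iUnion.2 ⟨⟨x, hx⟩, hbQ ⟨x, hx⟩⟩)
  refine ⟨⋂ b ∈ t, P b, ⋃ b ∈ t, Q b, isOpen_biInter_finset (fun b _ => hPo b),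
    MeasurableSet.biInter t.countable_toSet (fun b _ => hPm b),
    isOpen_biUnion (fun b _ => hQo b),
    MeasurableSet.biUnion t.countable_toSet (fun b _ => hQm b),
    Set.mem_iInter₂.2 (fun b _ => haP b), ht, ?_⟩
  rw [Set.disjoint_left]
  intro x hx hx'
  obtain ⟨b, hb, hxb⟩ := Set.mem_iUnion₂.1 hx'
  exact Set.disjoint_left.mp (hPQ b) (Set.mem_iInter₂.1 hx b hb) hxb

lemma sep_cc {K L : Set (X × Y)} (hK : IsCompact K) (hL : IsCompact L) (hd : Disjoint K L) :
    ∃ P Q : Set (X × Y), MeasurableSet P ∧ MeasurableSet Q ∧ K ⊆ P ∧ L ⊆ Q ∧ Disjoint P Q := by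
  have H : ∀ a : K, ∃ P Q : Set (X × Y), IsOpen P ∧ MeasurableSet P ∧ IsOpen Q ∧
      MeasurableSet Q ∧ (a : X × Y) ∈ P ∧ L ⊆ Q ∧ Disjoint P Q :=
    fun a => sep_pc hL a (fun h => Set.disjoint_left.mp hd a.2 h)
  choose P Q hPo hPm hQo hQm haP hLQ hPQ using H
  obtain ⟨t, ht⟩ := hK.elim_finite_subcover P hPo
    (fun x hx => Set.mem_iUnion.2 ⟨⟨x, hx⟩, haP ⟨x, hx⟩⟩)
  refine ⟨⋃ a ∈ t, P a, ⋂ a ∈ t, Q a,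
    MeasurableSet.biUnion t.countable_toSet (fun a _ => hPm a),
    MeasurableSet.biInter t.countable_toSet (fun a _ => hQm a),
    ht, Set.subset_iInter₂ (fun a _ => hLQ a), ?_⟩
  rw [Set.disjoint_left]
  intro x hx hx'
  obtain ⟨a, hat, hxa⟩ := Set.mem_iUnion₂.1 hx
  exact Set.disjoint_left.mp (hPQ a) hxa (Set.mem_iInter₂.1 hx' a hat)

end Sep



lemma disjointify {N : ℕ} {α : Type*} [MeasurableSpace α] (K : Fin N → Set α)
    (sep : ∀ i j : Fin N, i < j → ∃ P Q : Set α, MeasurableSet P ∧ MeasurableSet Q ∧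
      K i ⊆ P ∧ K j ⊆ Q ∧ Disjoint P Q) :
    ∃ E : Fin N → Set α, (∀ i, MeasurableSet (E i)) ∧ (∀ i, K i ⊆ E i) ∧
      Pairwise (Function.onFun Disjoint E) := by
  choose P Q hPm hQm hKP hKQ hPQ using sep
  refine ⟨fun i => (⋂ j, ⋂ h : i < j, P i j h) ∩ (⋂ j, ⋂ h : j < i, Q j i h),
    fun i => (MeasurableSet.iInter fun j => MeasurableSet.iInter fun h => hPm i j h).inter
      (MeasurableSet.iInter fun j => MeasurableSet.iInter fun h => hQm j i h),
    fun i => subset_inter (subset_iInter fun j => subset_iInter fun h => hKP i j h)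
      (subset_iInter fun j => subset_iInter fun h => hKQ j i h), ?_⟩
  intro i j hij
  rcases lt_or_gt_of_ne hij with h | h
  · refine Set.disjoint_left.mpr fun x hx hx' => ?_
    exact Set.disjoint_left.mp (hPQ i j h)
      (Set.mem_iInter.1 (Set.mem_iInter.1 hx.1 j) h)
      (Set.mem_iInter.1 (Set.mem_iInter.1 hx'.2 i) h)
  · refine Set.disjoint_left.mpr fun x hx hx' => ?_
    exact Set.disjoint_left.mp (hPQ j i h)
      (Set.mem_iInter.1 (Set.mem_iInter.1 hx'.1 i) h)
      (Set.mem_iInter.1 (Set.mem_iInter.1 hx.2 j) h)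

lemma disjointify_open {N : ℕ} {α : Type*} [TopologicalSpace α] (K : Fin N → Set α)
    (sep : ∀ i j : Fin N, i < j → ∃ P Q : Set α, IsOpen P ∧ IsOpen Q ∧
      K i ⊆ P ∧ K j ⊆ Q ∧ Disjoint P Q) :
    ∃ E : Fin N → Set α, (∀ i, IsOpen (E i)) ∧ (∀ i, K i ⊆ E i) ∧
      Pairwise (Function.onFun Disjoint E) := by
  choose P Q hPm hQm hKP hKQ hPQ using sep
  refine ⟨fun i => (⋂ j, ⋂ h : i < j, P i j h) ∩ (⋂ j, ⋂ h : j < i, Q j i h),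
    fun i => ((isOpen_iInter_of_finite fun j => isOpen_iInter_of_finite fun h => hPm i j h).inter
      (isOpen_iInter_of_finite fun j => isOpen_iInter_of_finite fun h => hQm j i h)),
    fun i => subset_inter (subset_iInter fun j => subset_iInter fun h => hKP i j h)
      (subset_iInter fun j => subset_iInter fun h => hKQ j i h), ?_⟩
  intro i j hij
  rcases lt_or_gt_of_ne hij with h | h
  · refine Set.disjoint_left.mpr fun x hx hx' => ?_
    exact Set.disjoint_left.mp (hPQ i j h)
      (Set.mem_iInter.1 (Set.mem_iInter.1 hx.1 j) h)
      (Set.mem_iInter.1 (Set.mem_iInter.1 hx'.2 i) h)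
  · refine Set.disjoint_left.mpr fun x hx hx' => ?_
    exact Set.disjoint_left.mp (hPQ j i h)
      (Set.mem_iInter.1 (Set.mem_iInter.1 hx'.1 i) h)
      (Set.mem_iInter.1 (Set.mem_iInter.1 hx.2 j) h)

lemma exists_reps {G : Type*} [Group G] (C : Subgroup G) {n : ℕ}
    (h : C.index = 0 ∨ n < C.index) :
    ∃ y : Fin (n + 1) → G, Pairwise fun i j => (y i)⁻¹ * y j ∉ C := by
  suffices hq : ∃ q : Fin (n + 1) → G ⧸ C, Function.Injective q by
    obtain ⟨q, hq⟩ := hq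
    refine ⟨fun i => (q i).out, fun i j hij hmem => hij (hq ?_)⟩
    have : QuotientGroup.mk ((q i).out) = QuotientGroup.mk ((q j).out) :=
      QuotientGroup.eq.mpr hmem
    rwa [QuotientGroup.out_eq', QuotientGroup.out_eq'] at this
  rw [Subgroup.index_eq_card] at h
  rcases h with h | h
  · rcases Nat.card_eq_zero.mp h with h' | h'
    · exact absurd (⟨QuotientGroup.mk 1⟩ : Nonempty (G ⧸ C)) (not_nonempty_iff.mpr h')
    · exact ⟨fun i => (Infinite.natEmbedding (G ⧸ C)) i,
        (Infinite.natEmbedding (G ⧸ C)).injective.comp Fin.val_injective⟩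
  · have hfin : Finite (G ⧸ C) := Nat.finite_of_card_ne_zero (by omega)
    have := Fintype.ofFinite (G ⧸ C)
    have hc : n + 1 ≤ Fintype.card (G ⧸ C) := by
      rw [← Nat.card_eq_fintype_card]; omega
    exact ⟨fun i => (Fintype.equivFin (G ⧸ C)).symm (Fin.castLE hc i),
      (Fintype.equivFin (G ⧸ C)).symm.injective.comp (Fin.castLE_injective hc)⟩



lemma exists_small_open {G : Type*} [Group G] [TopologicalSpace G] [IsTopologicalGroup G]
    [CompactSpace G] [T2Space G] [MeasurableSpace G] [BorelSpace G]
    (μ : Measure G) [μ.IsMulLeftInvariant] [IsProbabilityMeasure μ]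
    (C : Subgroup G) (hC : IsClosed (C : Set G)) {M : ℕ}
    (y : Fin M → G) (hy : Pairwise fun i j => (y i)⁻¹ * y j ∉ C) :
    ∃ U : Set G, IsOpen U ∧ (C : Set G) ⊆ U ∧ μ U ≤ (M : ℝ≥0∞)⁻¹ := by
  -- the cosets
  set A : Fin M → Set G := fun i => (fun z => (y i)⁻¹ * z) ⁻¹' (C : Set G) with hA
  have hAclosed : ∀ i, IsClosed (A i) :=
    fun i => hC.preimage (continuous_const.mul continuous_id)
  have hAdisj : Pairwise (Function.onFun Disjoint A) := by
    intro i j hij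
    refine Set.disjoint_left.mpr fun z hz hz' => hy hij ?_
    have : ((y i)⁻¹ * z) * ((y j)⁻¹ * z)⁻¹ ∈ C := C.mul_mem hz (C.inv_mem hz')
    convert this using 1
    group
  -- pairwise disjoint opens around the cosets
  obtain ⟨O, hOopen, hAO, hOdisj⟩ := disjointify_open A (fun i j hij =>
    (SeparatedNhds.of_isCompact_isCompact ((hAclosed i).isCompact) ((hAclosed j).isCompact)
      (hAdisj hij.ne)))
  -- common open neighborhood of C
  refine ⟨⋂ i, (fun z => y i * z) ⁻¹' (O i), isOpen_iInter_of_finite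
    (fun i => (hOopen i).preimage (continuous_const.mul continuous_id)), ?_, ?_⟩
  · intro c hc
    refine Set.mem_iInter.2 fun i => ?_
    have : y i * c ∈ A i := by
      simp only [hA, Set.mem_preimage]
      rwa [inv_mul_cancel_left]
    exact hAO i this
  · -- translates are disjoint, contained in O i
    set U : Set G := ⋂ i, (fun z => y i * z) ⁻¹' (O i) with hU
    set T : Fin M → Set G := fun i => (fun z => (y i)⁻¹ * z) ⁻¹' U with hT
    have hTO : ∀ i, T i ⊆ O i := by
      intro i z hz
      have := Set.mem_iInter.1 hz i
      simpa only [Set.mem_preimage, mul_inv_cancel_left] using this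
    have hTdisj : Pairwise (Function.onFun Disjoint T) :=
      fun i j hij => (hOdisj hij).mono (hTO i) (hTO j)
    have hTmeas : ∀ i, MeasurableSet (T i) := by
      intro i
      have : IsOpen (T i) := (isOpen_iInter_of_finite
        (fun j => (hOopen j).preimage (continuous_const.mul continuous_id))).preimage
        (continuous_const.mul continuous_id)
      exact this.measurableSet
    have hsum : ∑' i : Fin M, μ (T i) = μ (⋃ i, T i) := (measure_iUnion hTdisj hTmeas).symm
    have hbound : (M : ℝ≥0∞) * μ U ≤ 1 := by
      have h1 : μ (⋃ i, T i) ≤ 1 := prob_le_one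
      have h2 : ∀ i, μ (T i) = μ U := fun i => measure_preimage_mul μ ((y i)⁻¹) U
      rw [tsum_fintype] at hsum
      simp only [h2] at hsum
      rw [Finset.sum_const, Finset.card_univ, Fintype.card_fin, nsmul_eq_mul] at hsum
      rw [hsum]; exact h1
    rw [ENNReal.le_inv_iff_mul_le, mul_comm]
    exact hbound


theorem stmt12 (ε : ℝ) (hε0 : 0 < ε) (hε1 : ε ≤ 1) :
    ∃ l n : ℕ, 0 < l ∧ 0 < n ∧
      ∀ (G : Type u) [Group G] [TopologicalSpace G] [IsTopologicalGroup G]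
        [CompactSpace G] [T2Space G] [MeasurableSpace G] [BorelSpace G]
        (μ : Measure G), μ.IsHaarMeasure → IsProbabilityMeasure μ →
        ∀ (K : Subgroup G), IsClosed (K : Set G) →
        (∀ g ∈ K, ∀ (ν : Measure ((Subgroup.zpowers g).topologicalClosure)),
          ν.IsHaarMeasure → IsProbabilityMeasure ν →
          ENNReal.ofReal ε ≤ haarCommProb ((Subgroup.zpowers g).topologicalClosure) ν μ) →
        ∀ g ∈ K, (Subgroup.centralizer {g ^ l}).index ≠ 0 ∧
          (Subgroup.centralizer {g ^ l}).index ≤ n := by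
  classical
  set D : ℕ := ⌈(2:ℝ)/ε⌉₊ with hDdef
  have hD : (2:ℝ)/ε ≤ (D : ℝ) := Nat.le_ceil _
  have hD1 : 1 ≤ D := by
    have h2ε : (0:ℝ) < 2/ε := by positivity
    exact Nat.ceil_pos.mpr h2ε
  set n : ℕ := 2 * D * (D + 1) with hndef
  refine ⟨D.factorial, n, D.factorial_pos, by positivity, ?_⟩
  intro G _ _ _ _ _ _ _ μ hμHaar hμProb K hKclosed hHyp g hgK
  haveI := hμHaar
  haveI := hμProb
  by_contra hcon
  -- extract index failure
  have hcon' : (Subgroup.centralizer {g ^ D.factorial}).index = 0 ∨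
      n < (Subgroup.centralizer {g ^ D.factorial}).index := by
    rcases not_and_or.mp hcon with h | h
    · exact Or.inl (not_not.mp h)
    · exact Or.inr (lt_of_not_ge h)
  clear hcon
  -- the closed monothetic subgroup
  set H : Subgroup G := (Subgroup.zpowers g).topologicalClosure with hHdef
  have hgH : g ∈ H := Subgroup.le_topologicalClosure _ (Subgroup.mem_zpowers g)
  have hHclosed : IsClosed (H : Set G) := Subgroup.isClosed_topologicalClosure _
  haveI : CompactSpace ↥H := isCompact_iff_compactSpace.mp hHclosed.isCompact
  haveI : Nonempty ↥H := ⟨1⟩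
  haveI : BorelSpace ↥H := Subtype.borelSpace _
  -- Haar probability measure on H
  set ν : Measure ↥H := Measure.haarMeasure (⊤ : TopologicalSpace.PositiveCompacts ↥H) with hνdef
  haveI hνProb : IsProbabilityMeasure ν := by
    constructor
    rw [← TopologicalSpace.PositiveCompacts.coe_top (α := ↥H)]
    exact Measure.haarMeasure_self
  have hεS : ENNReal.ofReal ε ≤ haarCommProb H ν μ :=
    hHyp g hgK ν (Measure.isHaarMeasure_haarMeasure _) hνProb
  set π : Measure (↥H × G) := ν.prod μ with hπdef
  set S₀ : Set (↥H × G) := {p : ↥H × G | (p.1 : G) * p.2 = p.2 * (p.1 : G)} with hS₀def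
  have hεS' : ENNReal.ofReal ε ≤ π S₀ := hεS
  -- translation invariance of π in the first coordinate (for arbitrary sets)
  have key : ∀ (c : ↥H) (A : Set (↥H × G)),
      π ((fun p : ↥H × G => (c * p.1, p.2)) ⁻¹' A) ≤ π A := by
    intro c A
    have hmul : Measurable (fun x : ↥H => c * x) :=
      (continuous_const.mul continuous_id).measurable
    have hF : Measurable (fun p : ↥H × G => (c * p.1, p.2)) :=
      (hmul.comp measurable_fst).prodMk measurable_snd
    have hmap : π.map (fun p : ↥H × G => (c * p.1, p.2)) = π := by
      have hid : (fun p : ↥H × G => (c * p.1, p.2)) = Prod.map (fun x => c * x) id := rfl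
      rw [hπdef, hid, ← Measure.map_prod_map ν μ hmul measurable_id, Measure.map_id,
        MeasureTheory.map_mul_left_eq_self ν c]
    calc π ((fun p : ↥H × G => (c * p.1, p.2)) ⁻¹' A)
        ≤ π ((fun p : ↥H × G => (c * p.1, p.2)) ⁻¹' (toMeasurable π A)) :=
          measure_mono (Set.preimage_mono (subset_toMeasurable _ _))
      _ = π.map (fun p : ↥H × G => (c * p.1, p.2)) (toMeasurable π A) :=
          (Measure.map_apply hF (measurableSet_toMeasurable _ _)).symm
      _ = π (toMeasurable π A) := by rw [hmap]
      _ = π A := measure_toMeasurable _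
  have keyEq : ∀ (c : ↥H) (A : Set (↥H × G)),
      π ((fun p : ↥H × G => (c * p.1, p.2)) ⁻¹' A) = π A := by
    intro c A
    refine le_antisymm (key c A) ?_
    have h2 := key c⁻¹ ((fun p : ↥H × G => (c * p.1, p.2)) ⁻¹' A)
    have heq : (fun p : ↥H × G => (c⁻¹ * p.1, p.2)) ⁻¹'
        ((fun p : ↥H × G => (c * p.1, p.2)) ⁻¹' A) = A := by
      ext p
      simp [Set.mem_preimage, mul_inv_cancel_left]
    rwa [heq] at h2
  set gH : ↥H := ⟨g, hgH⟩ with hgHdef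
  -- translated commuting sets
  set Sk : Fin (D + 1) → Set (↥H × G) :=
    fun i => (fun p : ↥H × G => (gH ^ (i : ℕ) * p.1, p.2)) ⁻¹' S₀ with hSkdef
  have hSkμ : ∀ i, π (Sk i) = π S₀ := fun i => keyEq _ _
  have hS₀closed : IsClosed S₀ := by
    apply isClosed_eq
    · exact ((continuous_subtype_val.comp continuous_fst).mul continuous_snd)
    · exact (continuous_snd.mul (continuous_subtype_val.comp continuous_fst))
  have hSkclosed : ∀ i, IsClosed (Sk i) := by
    intro i
    apply hS₀closed.preimage
    exact ((continuous_const.mul continuous_fst).prodMk continuous_snd)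
  -- centralizers are closed
  have hCc : ∀ a : G, IsClosed ((Subgroup.centralizer {a} : Subgroup G) : Set G) := by
    intro a
    have : ((Subgroup.centralizer {a} : Subgroup G) : Set G) = {x : G | a * x = x * a} := by
      ext x
      simp [Subgroup.mem_centralizer_iff]
    rw [this]
    exact isClosed_eq (continuous_const.mul continuous_id) (continuous_id.mul continuous_const)
  -- all small-power centralizers have many cosets
  have hbig : ∀ k : ℕ, 1 ≤ k → k ≤ D → (Subgroup.centralizer {g ^ k}).index = 0 ∨
      n < (Subgroup.centralizer {g ^ k}).index := by
    intro k hk1 hkD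
    have hle : Subgroup.centralizer {g ^ k} ≤ Subgroup.centralizer {g ^ D.factorial} := by
      intro x hx
      have hcom : Commute (g ^ k) x :=
        Subgroup.mem_centralizer_iff.mp hx (g ^ k) rfl
      have hdvd : k ∣ D.factorial := Nat.dvd_factorial hk1 hkD
      have hpow : (g ^ k) ^ (D.factorial / k) = g ^ D.factorial := by
        rw [← pow_mul, Nat.mul_div_cancel' hdvd]
      refine Subgroup.mem_centralizer_iff.mpr ?_
      intro h' hh'
      rw [Set.mem_singleton_iff] at hh'
      subst hh'
      rw [← hpow]
      exact hcom.pow_left _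
    have hdvd2 : (Subgroup.centralizer {g ^ D.factorial}).index ∣
        (Subgroup.centralizer {g ^ k}).index := Subgroup.index_dvd_of_le hle
    rcases hcon' with h0 | hlt
    · rw [h0] at hdvd2
      exact Or.inl (zero_dvd_iff.mp hdvd2)
    · by_cases hm : (Subgroup.centralizer {g ^ k}).index = 0
      · exact Or.inl hm
      · exact Or.inr (lt_of_lt_of_le hlt (Nat.le_of_dvd (Nat.pos_of_ne_zero hm) hdvd2))
  -- small open neighborhoods of the centralizers
  have hUex : ∀ k ∈ Finset.Icc 1 D, ∃ U : Set G, IsOpen U ∧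
      ((Subgroup.centralizer {g ^ k} : Subgroup G) : Set G) ⊆ U ∧
      μ U ≤ (((n + 1 : ℕ) : ℝ≥0∞))⁻¹ := by
    intro k hk
    obtain ⟨y, hy⟩ := exists_reps (Subgroup.centralizer {g ^ k}) (hbig k
      (Finset.mem_Icc.mp hk).1 (Finset.mem_Icc.mp hk).2)
    exact exists_small_open μ (Subgroup.centralizer {g ^ k}) (hCc _) y hy
  choose! U hUopen hUsub hUle using hUex
  set UU : Set G := ⋃ k ∈ Finset.Icc 1 D, U k with hUUdef
  set W : Set (↥H × G) := (univ : Set ↥H) ×ˢ UU with hWdef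
  have hUUopen : IsOpen UU := isOpen_biUnion fun k hk => hUopen k hk
  have hWopen : IsOpen W := isOpen_univ.prod hUUopen
  have hWmeas : MeasurableSet W := MeasurableSet.univ.prod hUUopen.measurableSet
  have hWμ : π W = μ UU := by
    rw [hπdef, hWdef, Measure.prod_prod, measure_univ, one_mul]
  have hUUsmall : μ UU ≤ (D : ℝ≥0∞) * (((n + 1 : ℕ) : ℝ≥0∞))⁻¹ := by
    calc μ UU ≤ ∑ k ∈ Finset.Icc 1 D, μ (U k) := measure_biUnion_finset_le _ _
      _ ≤ ∑ _k ∈ Finset.Icc 1 D, (((n + 1 : ℕ) : ℝ≥0∞))⁻¹ :=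
          Finset.sum_le_sum fun k hk => hUle k hk
      _ = (D : ℝ≥0∞) * (((n + 1 : ℕ) : ℝ≥0∞))⁻¹ := by
          rw [Finset.sum_const, Nat.card_Icc, nsmul_eq_mul]
          norm_num
  -- pairwise intersections land in W
  have hSS : ∀ i j : Fin (D + 1), i < j → Sk i ∩ Sk j ⊆ W := by
    intro i j hij
    rintro ⟨h, x⟩ ⟨hi, hj⟩
    have hcoe : ∀ m : ℕ, ((gH ^ m * h : ↥H) : G) = g ^ m * (h : G) := by
      intro m
      push_cast
      rfl
    have hcomi : Commute (g ^ (i : ℕ) * (h : G)) x := by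
      have := hi
      simp only [hSkdef, Set.mem_preimage, hS₀def, Set.mem_setOf_eq, hcoe] at this
      exact this
    have hcomj : Commute (g ^ (j : ℕ) * (h : G)) x := by
      have := hj
      simp only [hSkdef, Set.mem_preimage, hS₀def, Set.mem_setOf_eq, hcoe] at this
      exact this
    have hijn : (i : ℕ) < (j : ℕ) := hij
    set k : ℕ := (j : ℕ) - (i : ℕ) with hkdef
    have hcom : Commute (g ^ k) x := by
      have h1 : Commute ((g ^ (j : ℕ) * (h : G)) * (g ^ (i : ℕ) * (h : G))⁻¹) x :=
        hcomj.mul_left hcomi.inv_left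
      have h2 : (g ^ (j : ℕ) * (h : G)) * (g ^ (i : ℕ) * (h : G))⁻¹ = g ^ k := by
        have h3 : g ^ k * g ^ (i : ℕ) = g ^ (j : ℕ) := by
          rw [← pow_add, hkdef, Nat.sub_add_cancel (le_of_lt hijn)]
        rw [mul_inv_rev,
          show g ^ (j:ℕ) * (h : G) * (((h : G))⁻¹ * (g ^ (i:ℕ))⁻¹) = g ^ (j:ℕ) * (g ^ (i:ℕ))⁻¹
            by group]
        rw [← h3]
        group
      rwa [h2] at h1
    have hxC : x ∈ (Subgroup.centralizer {g ^ k} : Subgroup G) := by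
      refine Subgroup.mem_centralizer_iff.mpr ?_
      intro h' hh'
      rw [Set.mem_singleton_iff] at hh'
      subst hh'
      exact hcom
    have hkIcc : k ∈ Finset.Icc 1 D := by
      refine Finset.mem_Icc.mpr ⟨?_, ?_⟩
      · omega
      · have := j.isLt
        omega
    refine ⟨trivial, ?_⟩
    exact Set.mem_biUnion hkIcc (hUsub k hkIcc hxC)
  -- disjoint compact pieces
  set Kc : Fin (D + 1) → Set (↥H × G) := fun i => Sk i \ W with hKcdef
  have hKcCompact : ∀ i, IsCompact (Kc i) := fun i =>
    ((hSkclosed i).sdiff hWopen).isCompact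
  have hKcdisj : ∀ i j : Fin (D + 1), i < j → Disjoint (Kc i) (Kc j) := by
    intro i j hij
    refine Set.disjoint_left.mpr fun p hp hp' => ?_
    exact hp.2 (hSS i j hij ⟨hp.1, hp'.1⟩)
  obtain ⟨E, hEmeas, hKE, hEdisj⟩ := disjointify Kc (fun i j hij =>
    sep_cc (hKcCompact i) (hKcCompact j) (hKcdisj i j hij))
  -- each piece has large measure
  have hper : ∀ i : Fin (D + 1), ENNReal.ofReal ε ≤ π (E i) + π W := by
    intro i
    calc ENNReal.ofReal ε ≤ π S₀ := hεS'
      _ = π (Sk i) := (hSkμ i).symm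
      _ ≤ π (Kc i ∪ W) := measure_mono (Set.subset_diff_union _ _)
      _ ≤ π (Kc i) + π W := measure_union_le _ _
      _ ≤ π (E i) + π W := add_le_add_left (measure_mono (hKE i)) _
  -- summing up
  have hEsum : ∑ i : Fin (D + 1), π (E i) ≤ 1 := by
    have := measure_iUnion (μ := π) hEdisj hEmeas
    rw [tsum_fintype] at this
    rw [← this]
    exact prob_le_one
  have htot : ∑ _i : Fin (D + 1), ENNReal.ofReal ε ≤
      ∑ i : Fin (D + 1), (π (E i) + π W) := Finset.sum_le_sum fun i _ => hper i
  rw [Finset.sum_add_distrib, Finset.sum_const, Finset.sum_const, Finset.card_univ,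
    Fintype.card_fin, nsmul_eq_mul, nsmul_eq_mul] at htot
  have hrhs : ((D + 1 : ℕ) : ℝ≥0∞) * ENNReal.ofReal ε ≤
      1 + ((D + 1 : ℕ) : ℝ≥0∞) * ((D : ℝ≥0∞) * (((n + 1 : ℕ) : ℝ≥0∞))⁻¹) := by
    refine le_trans htot (add_le_add hEsum ?_)
    exact mul_le_mul_right (le_trans (le_of_eq hWμ) hUUsmall) _
  -- convert to a real inequality
  have hofReal : ∀ m : ℕ, ((m : ℝ≥0∞)) = ENNReal.ofReal (m : ℝ) := by
    intro m
    rw [ENNReal.ofReal_natCast]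
  have hinv : (((n + 1 : ℕ) : ℝ≥0∞))⁻¹ = ENNReal.ofReal (((n + 1 : ℕ) : ℝ))⁻¹ := by
    rw [ENNReal.ofReal_inv_of_pos (by positivity), ENNReal.ofReal_natCast]
  have hreal : ((D + 1 : ℕ) : ℝ) * ε ≤ 1 + ((D + 1 : ℕ) : ℝ) * ((D : ℝ) * (((n + 1 : ℕ) : ℝ))⁻¹) := by
    rw [hofReal (D + 1), hofReal D, hinv, ← ENNReal.ofReal_mul (by positivity),
      ← ENNReal.ofReal_mul (by positivity), ← ENNReal.ofReal_mul (by positivity),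
      ← ENNReal.ofReal_one, ← ENNReal.ofReal_add (by norm_num) (by positivity)] at hrhs
    exact (ENNReal.ofReal_le_ofReal_iff (by positivity)).mp hrhs
  -- final numeric contradiction
  have hDε : 2 ≤ (D : ℝ) * ε := by
    rw [div_le_iff₀ hε0] at hD
    linarith
  have hfrac : ((D + 1 : ℕ) : ℝ) * ((D : ℝ) * (((n + 1 : ℕ) : ℝ))⁻¹) ≤ 1 / 2 := by
    have hnpos : (0 : ℝ) < ((n + 1 : ℕ) : ℝ) := by positivity
    rw [show ((D + 1 : ℕ) : ℝ) * ((D : ℝ) * (((n + 1 : ℕ) : ℝ))⁻¹) =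
      ((D + 1 : ℕ) : ℝ) * (D : ℝ) / ((n + 1 : ℕ) : ℝ) by ring, div_le_iff₀ hnpos]
    have : ((n : ℕ) : ℝ) = 2 * (D : ℝ) * ((D : ℝ) + 1) := by
      rw [hndef]
      push_cast
      ring
    push_cast
    push_cast at this
    nlinarith [this]
  have hcast : ((D + 1 : ℕ) : ℝ) = (D : ℝ) + 1 := by push_cast; ring
  rw [hcast] at hreal hfrac
  nlinarith [hreal, hfrac, hDε, hε0, hε1]
end

section
/- For any positive integers s, e, m there is 0 < ε ≤ 1 depending only on s, e, m with the property: if K is a closed subgroup of a compact group G and G has a closed normal subgroup T of index at most s such that [K^e, T] has order at most m, then Pr(⟨g⟩, G) ≥ ε for every g ∈ K. -/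
open MeasureTheory
open scoped ENNReal

universe u

open scoped commutatorElement

/-- Auxiliary commutator identity. -/
private lemma comm_aux {G : Type*} [Group G] {a x y : G} :
    ⁅a, x⁆ = ⁅a, y⁆ ↔ a * (x⁻¹ * y) = (x⁻¹ * y) * a := by
  constructor
  · intro h
    have h1 : x * a⁻¹ * x⁻¹ = y * a⁻¹ * y⁻¹ := by
      have h' : a * (x * a⁻¹ * x⁻¹) = a * (y * a⁻¹ * y⁻¹) := by
        simpa [commutatorElement_def, mul_assoc] using h
      exact mul_left_cancel h'
    have h2 : x * a * x⁻¹ = y * a * y⁻¹ := by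
      have := congrArg (·⁻¹) h1
      simpa [mul_assoc] using this
    calc a * (x⁻¹ * y) = x⁻¹ * (x * a * x⁻¹) * y := by group
      _ = x⁻¹ * (y * a * y⁻¹) * y := by rw [h2]
      _ = (x⁻¹ * y) * a := by group
  · intro h
    have h2 : x * a * x⁻¹ = y * a * y⁻¹ := by
      calc x * a * x⁻¹ = x * (a * (x⁻¹ * y)) * y⁻¹ := by group
        _ = x * ((x⁻¹ * y) * a) * y⁻¹ := by rw [h]
        _ = y * a * y⁻¹ := by group
    have h1 : x * a⁻¹ * x⁻¹ = y * a⁻¹ * y⁻¹ := by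
      have := congrArg (·⁻¹) h2
      simpa [mul_assoc] using this
    calc ⁅a, x⁆ = a * (x * a⁻¹ * x⁻¹) := by rw [commutatorElement_def]; group
      _ = a * (y * a⁻¹ * y⁻¹) := by rw [h1]
      _ = ⁅a, y⁆ := by rw [commutatorElement_def]; group

/-- A closed subgroup of finite index has Haar measure at least `1/index`. -/
private lemma index_inv_le_measure {G : Type*} [Group G] [MeasurableSpace G]
    [MeasurableMul G] (μ : Measure G) [IsProbabilityMeasure μ]
    [μ.IsMulLeftInvariant] (H : Subgroup G) (hH : H.index ≠ 0) :
    ((H.index : ℝ≥0∞))⁻¹ ≤ μ (H : Set G) := by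
  haveI hfin : Finite (G ⧸ H) := Nat.finite_of_card_ne_zero hH
  haveI := Fintype.ofFinite (G ⧸ H)
  have hcover : (Set.univ : Set G) ⊆ ⋃ q : G ⧸ H, (fun z => q.out * z) '' (H : Set G) := by
    intro x _
    obtain ⟨h, hh⟩ := QuotientGroup.mk_out_eq_mul H x
    refine Set.mem_iUnion.2 ⟨QuotientGroup.mk x, ⟨(h : G)⁻¹, H.inv_mem h.2, ?_⟩⟩
    rw [hh]
    group
  have hone : (1 : ℝ≥0∞) ≤ (H.index : ℝ≥0∞) * μ (H : Set G) := by
    have h1 : (1 : ℝ≥0∞) = μ Set.univ := (measure_univ).symm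
    have h2 : μ Set.univ ≤ ∑' q : G ⧸ H, μ ((fun z => q.out * z) '' (H : Set G)) :=
      le_trans (measure_mono hcover) (measure_iUnion_le _)
    have h3 : ∀ q : G ⧸ H, μ ((fun z => q.out * z) '' (H : Set G)) = μ (H : Set G) := by
      intro q
      rw [Set.image_mul_left, measure_preimage_mul]
    have h4 : ∑' q : G ⧸ H, μ ((fun z => q.out * z) '' (H : Set G))
        = (H.index : ℝ≥0∞) * μ (H : Set G) := by
      simp only [h3]
      rw [tsum_fintype]
      rw [Finset.sum_const, Finset.card_univ, nsmul_eq_mul]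
      congr 1
      rw [Subgroup.index, Nat.card_eq_fintype_card]
    rw [h1]
    rw [h4] at h2
    exact h2
  have hne : (H.index : ℝ≥0∞) ≠ 0 := by exact_mod_cast hH
  have hnt : (H.index : ℝ≥0∞) ≠ ⊤ := ENNReal.natCast_ne_top _
  calc ((H.index : ℝ≥0∞))⁻¹ = ((H.index : ℝ≥0∞))⁻¹ * 1 := (mul_one _).symm
    _ ≤ ((H.index : ℝ≥0∞))⁻¹ * ((H.index : ℝ≥0∞) * μ (H : Set G)) := by
        exact mul_le_mul_right hone _
    _ = (((H.index : ℝ≥0∞))⁻¹ * (H.index : ℝ≥0∞)) * μ (H : Set G) := by rw [mul_assoc]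
    _ = μ (H : Set G) := by rw [ENNReal.inv_mul_cancel hne hnt, one_mul]

theorem stmt14 (s e m : ℕ) (hs : 0 < s) (he : 0 < e) (hm : 0 < m) :
    ∃ ε : ℝ, 0 < ε ∧ ε ≤ 1 ∧
      ∀ (G : Type u) [Group G] [TopologicalSpace G] [IsTopologicalGroup G]
        [CompactSpace G] [T2Space G] [MeasurableSpace G] [BorelSpace G]
        (μ : Measure G), μ.IsHaarMeasure → IsProbabilityMeasure μ →
        ∀ (K T : Subgroup G), IsClosed (K : Set G) → IsClosed (T : Set G) →
        T.Normal → T.index ≠ 0 → T.index ≤ s →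
        Nat.card (⁅Subgroup.closure {x : G | ∃ k ∈ K, x = k ^ e}, T⁆ : Subgroup G) ≠ 0 →
        Nat.card (⁅Subgroup.closure {x : G | ∃ k ∈ K, x = k ^ e}, T⁆ : Subgroup G) ≤ m →
        ∀ g ∈ K, ∀ (ν : Measure ((Subgroup.zpowers g).topologicalClosure)),
          ν.IsHaarMeasure → IsProbabilityMeasure ν →
          ENNReal.ofReal ε ≤ haarCommProb ((Subgroup.zpowers g).topologicalClosure) ν μ := by
  refine ⟨((s * e * m : ℕ) : ℝ)⁻¹, by positivity, ?_, ?_⟩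
  · rw [inv_le_one_iff₀]
    right
    exact_mod_cast Nat.one_le_iff_ne_zero.2 (by positivity)
  intro G _ _ _ _ _ _ _ μ hμ hμp K T hKc hTc hTn hTi0 hTis hM0 hMm g hg ν hν hνp
  haveI := hμ; haveI := hμp; haveI := hν; haveI := hνp
  set M := (⁅Subgroup.closure {x : G | ∃ k ∈ K, x = k ^ e}, T⁆ : Subgroup G) with hMdef
  haveI hMfin : Finite M := Nat.finite_of_card_ne_zero hM0
  set C := Subgroup.centralizer {g ^ e} with hCdef
  -- Step A : C has small index
  have hge : g ^ e ∈ Subgroup.closure {x : G | ∃ k ∈ K, x = k ^ e} :=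
    Subgroup.subset_closure ⟨g, hg, rfl⟩
  let f : T → M := fun t => ⟨⁅g ^ e, (t : G)⁆, Subgroup.commutator_mem_commutator hge t.2⟩
  have hkey : ∀ t t' : T, f t = f t' ↔
      (QuotientGroup.mk t : T ⧸ C.subgroupOf T) = QuotientGroup.mk t' := by
    intro t t'
    rw [QuotientGroup.eq]
    have h1 : f t = f t' ↔ ⁅g ^ e, (t : G)⁆ = ⁅g ^ e, (t' : G)⁆ := Subtype.ext_iff
    have h2 : t⁻¹ * t' ∈ C.subgroupOf T ↔
        g ^ e * ((t : G)⁻¹ * (t' : G)) = ((t : G)⁻¹ * (t' : G)) * g ^ e := by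
      rw [Subgroup.mem_subgroupOf]
      simp only [hCdef, Subgroup.mem_centralizer_iff, Set.mem_singleton_iff,
        forall_eq, Subgroup.coe_mul, Subgroup.coe_inv]
    rw [h1, h2, comm_aux]
  let F : (T ⧸ C.subgroupOf T) → M :=
    Quotient.lift f (fun a b hab => (hkey a b).2 (Quotient.sound hab))
  have hF : Function.Injective F := by
    intro q q'
    induction q using Quotient.inductionOn
    induction q' using Quotient.inductionOn
    intro h
    exact (hkey _ _).1 h
  haveI hQfin : Finite (T ⧸ C.subgroupOf T) := Finite.of_injective F hF
  have hrel_le : (C.subgroupOf T).index ≤ m := by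
    have : Nat.card (T ⧸ C.subgroupOf T) ≤ Nat.card M := Nat.card_le_card_of_injective F hF
    exact le_trans this hMm
  have hrel_ne : (C.subgroupOf T).index ≠ 0 := by
    have : 0 < Nat.card (T ⧸ C.subgroupOf T) := Nat.card_pos
    exact this.ne'
  have hCT : (C ⊓ T).index = (C.subgroupOf T).index * T.index := by
    rw [← Subgroup.relIndex_mul_index (inf_le_right : C ⊓ T ≤ T),
      Subgroup.inf_relIndex_right]
    rfl
  have hCT_ne : (C ⊓ T).index ≠ 0 := by
    rw [hCT]
    exact Nat.mul_ne_zero hrel_ne hTi0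
  have hCdvd : C.index ∣ (C ⊓ T).index := Subgroup.index_dvd_of_le inf_le_left
  have hC_ne : C.index ≠ 0 := by
    intro h0
    rw [h0] at hCdvd
    exact hCT_ne (Nat.eq_zero_of_zero_dvd hCdvd)
  have hC_le : C.index ≤ m * s := by
    calc C.index ≤ (C ⊓ T).index := Nat.le_of_dvd (Nat.pos_of_ne_zero hCT_ne) hCdvd
      _ = (C.subgroupOf T).index * T.index := hCT
      _ ≤ m * s := Nat.mul_le_mul hrel_le hTis
  -- Step B : μ C ≥ (m*s)⁻¹
  have hμC : (((m * s : ℕ) : ℝ≥0∞))⁻¹ ≤ μ (C : Set G) := by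
    refine le_trans ?_ (index_inv_le_measure μ C hC_ne)
    exact ENNReal.inv_le_inv.2 (by exact_mod_cast hC_le)
  -- Step C : the closed subgroup generated by g
  haveI : CompactSpace ((Subgroup.zpowers g).topologicalClosure) := isCompact_iff_compactSpace.mp
    ((Subgroup.isClosed_topologicalClosure _).isCompact)
  haveI : BorelSpace ((Subgroup.zpowers g).topologicalClosure) := Subtype.borelSpace (((Subgroup.zpowers g).topologicalClosure) : Set G)
  let gK : ((Subgroup.zpowers g).topologicalClosure) := ⟨g, Subgroup.le_topologicalClosure _ (Subgroup.mem_zpowers g)⟩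
  set He := (Subgroup.zpowers (gK ^ e)).topologicalClosure with hHedef
  have hcomm : ∀ x y : ((Subgroup.zpowers g).topologicalClosure), x * y = y * x := by
    have hzc : ∀ x y : (Subgroup.zpowers g), x * y = y * x := by
      rintro ⟨x, a, rfl⟩ ⟨y, b, rfl⟩
      ext
      exact ((Commute.refl g).zpow_zpow a b).eq
    letI := Subgroup.commGroupTopologicalClosure (Subgroup.zpowers g) hzc
    intro x y
    exact mul_comm x y
  haveI hHen : He.Normal := by
    refine ⟨fun n hn a => ?_⟩
    have : a * n * a⁻¹ = n := by
      rw [hcomm a n, mul_assoc, mul_inv_cancel, mul_one]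
    rwa [this]
  haveI : IsClosed (He : Set ((Subgroup.zpowers g).topologicalClosure)) := Subgroup.isClosed_topologicalClosure _
  -- the quotient is cyclic of order dividing e
  set gbar : ((Subgroup.zpowers g).topologicalClosure) ⧸ He := QuotientGroup.mk gK with hgbardef
  have hgbar1 : gbar ^ e = 1 := by
    rw [hgbardef, ← QuotientGroup.mk_pow, QuotientGroup.eq_one_iff]
    exact Subgroup.le_topologicalClosure _ (Subgroup.mem_zpowers _)
  have horder : orderOf gbar ∣ e := orderOf_dvd_of_pow_eq_one hgbar1
  have horder0 : orderOf gbar ≠ 0 := by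
    intro h0
    rw [h0] at horder
    exact he.ne' (Nat.eq_zero_of_zero_dvd horder)
  haveI : Finite (Subgroup.zpowers gbar) := by
    apply Nat.finite_of_card_ne_zero
    rw [Nat.card_zpowers]
    exact horder0
  have hdense1 : Dense ((Subgroup.zpowers gK : Set ((Subgroup.zpowers g).topologicalClosure))) := by
    intro x
    rw [closure_subtype]
    have himg : (Subtype.val '' (Subgroup.zpowers gK : Set ((Subgroup.zpowers g).topologicalClosure))) = (Subgroup.zpowers g : Set G) := by
      ext z
      simp only [Set.mem_image, SetLike.mem_coe, Subgroup.mem_zpowers_iff]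
      constructor
      · rintro ⟨y, ⟨k, rfl⟩, rfl⟩
        exact ⟨k, by simp [gK]⟩
      · rintro ⟨k, rfl⟩
        exact ⟨gK ^ k, ⟨k, rfl⟩, by simp [gK]⟩
    rw [himg]
    have := x.2
    rwa [← Subgroup.topologicalClosure_coe]
  have hdense : Dense ((Subgroup.zpowers gbar : Set (((Subgroup.zpowers g).topologicalClosure) ⧸ He))) := by
    have himg : (Subgroup.zpowers gbar : Set (((Subgroup.zpowers g).topologicalClosure) ⧸ He))
        = (QuotientGroup.mk : ((Subgroup.zpowers g).topologicalClosure) → ((Subgroup.zpowers g).topologicalClosure) ⧸ He) '' (Subgroup.zpowers gK : Set ((Subgroup.zpowers g).topologicalClosure)) := by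
      rw [hgbardef, show (QuotientGroup.mk gK : ((Subgroup.zpowers g).topologicalClosure) ⧸ He) = QuotientGroup.mk' He gK from rfl,
        ← MonoidHom.map_zpowers, Subgroup.coe_map, QuotientGroup.coe_mk']
    rw [himg]
    intro q
    obtain ⟨x, rfl⟩ := QuotientGroup.mk_surjective (s := He) q
    exact map_mem_closure continuous_quotient_mk' (hdense1 x) (Set.mapsTo_image _ _)
  have htop : (Subgroup.zpowers gbar : Set (((Subgroup.zpowers g).topologicalClosure) ⧸ He)) = Set.univ := by
    have hfin : ((Subgroup.zpowers gbar : Subgroup (((Subgroup.zpowers g).topologicalClosure) ⧸ He)) : Set (((Subgroup.zpowers g).topologicalClosure) ⧸ He)).Finite :=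
      Set.toFinite _
    rw [← hfin.isClosed.closure_eq]
    exact hdense.closure_eq
  have hHe_index_le : He.index ≤ e := by
    have h1 : Subgroup.zpowers gbar = (⊤ : Subgroup (((Subgroup.zpowers g).topologicalClosure) ⧸ He)) := Subgroup.coe_eq_univ.1 htop
    have h2 : Nat.card (((Subgroup.zpowers g).topologicalClosure) ⧸ He) = orderOf gbar := by
      rw [← Nat.card_zpowers, h1]
      exact (Nat.card_congr Subgroup.topEquiv.toEquiv).symm
    have : He.index = orderOf gbar := by rw [Subgroup.index, h2]
    rw [this]
    exact Nat.le_of_dvd he horder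
  have hHe_index_ne : He.index ≠ 0 := by
    have h1 : Subgroup.zpowers gbar = (⊤ : Subgroup (((Subgroup.zpowers g).topologicalClosure) ⧸ He)) := Subgroup.coe_eq_univ.1 htop
    have h2 : Nat.card (((Subgroup.zpowers g).topologicalClosure) ⧸ He) = orderOf gbar := by
      rw [← Nat.card_zpowers, h1]
      exact (Nat.card_congr Subgroup.topEquiv.toEquiv).symm
    have : He.index = orderOf gbar := by rw [Subgroup.index, h2]
    rw [this]
    exact horder0
  -- Step D : ν He ≥ e⁻¹
  have hνHe : ((e : ℝ≥0∞))⁻¹ ≤ ν (He : Set ((Subgroup.zpowers g).topologicalClosure)) := by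
    refine le_trans ?_ (index_inv_le_measure ν He hHe_index_ne)
    exact ENNReal.inv_le_inv.2 (by exact_mod_cast hHe_index_le)
  -- Step E : product set is contained in the commuting set
  have hsub : ((He : Set ((Subgroup.zpowers g).topologicalClosure)) ×ˢ (C : Set G)) ⊆
      {p : ((Subgroup.zpowers g).topologicalClosure) × G | (p.1 : G) * p.2 = p.2 * (p.1 : G)} := by
    rintro ⟨y, x⟩ ⟨hy, hx⟩
    have hxc : g ^ e ∈ Subgroup.centralizer {x} := by
      rw [Subgroup.mem_centralizer_iff]
      intro h hh
      rw [Set.mem_singleton_iff] at hh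
      subst hh
      exact (Subgroup.mem_centralizer_iff.1 hx (g ^ e) rfl).symm
    have hclosed : IsClosed (Subgroup.centralizer {x} : Set G) := by
      have hset : (Subgroup.centralizer {x} : Set G) = {z : G | x * z = z * x} := by
        ext z
        simp [Subgroup.mem_centralizer_iff]
      rw [hset]
      exact isClosed_eq (continuous_const.mul continuous_id) (continuous_id.mul continuous_const)
    have hyG : (y : G) ∈ closure ((Subgroup.zpowers (g ^ e)) : Set G) := by
      have hy' : (y : ((Subgroup.zpowers g).topologicalClosure)) ∈ closure ((Subgroup.zpowers (gK ^ e)) : Set ((Subgroup.zpowers g).topologicalClosure)) := by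
        have := hy
        rwa [Subgroup.topologicalClosure_coe] at this
      have := closure_subtype.1 hy'
      refine closure_mono ?_ this
      rintro z ⟨w, ⟨k, rfl⟩, rfl⟩
      refine ⟨k, ?_⟩
      simp [gK]
    have hyc : (y : G) ∈ Subgroup.centralizer {x} := by
      have hsub2 : ((Subgroup.zpowers (g ^ e)) : Set G) ⊆ (Subgroup.centralizer {x} : Set G) :=
        Subgroup.zpowers_le.2 hxc
      exact closure_minimal hsub2 hclosed hyG
    have := Subgroup.mem_centralizer_iff.1 hyc x rfl
    exact this.symm
  -- Step F : combine
  have hprod : ν (He : Set ((Subgroup.zpowers g).topologicalClosure)) * μ (C : Set G) ≤ haarCommProb ((Subgroup.zpowers g).topologicalClosure) ν μ := by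
    rw [haarCommProb, ← Measure.prod_prod]
    exact measure_mono hsub
  have hofReal : ENNReal.ofReal (((s * e * m : ℕ) : ℝ))⁻¹ = (((s * e * m : ℕ) : ℝ≥0∞))⁻¹ := by
    rw [ENNReal.ofReal_inv_of_pos (by positivity), ENNReal.ofReal_natCast]
  rw [hofReal]
  have hsplit : (((s * e * m : ℕ) : ℝ≥0∞))⁻¹
      = ((e : ℝ≥0∞))⁻¹ * (((m * s : ℕ) : ℝ≥0∞))⁻¹ := by
    rw [← ENNReal.mul_inv (Or.inl (by exact_mod_cast he.ne'))
      (Or.inl (ENNReal.natCast_ne_top _))]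
    congr 1
    push_cast
    ring
  rw [hsplit]
  calc ((e : ℝ≥0∞))⁻¹ * (((m * s : ℕ) : ℝ≥0∞))⁻¹
      ≤ ν (He : Set ((Subgroup.zpowers g).topologicalClosure)) * μ (C : Set G) := mul_le_mul' hνHe hμC
    _ ≤ haarCommProb ((Subgroup.zpowers g).topologicalClosure) ν μ := hprod
end

section
/- Let G be a compact group with connected component of the identity G₀. If Pr(G₀, G) > 0, then the centralizer C_G(G₀) is open in G. -/
open MeasureTheory
open scoped ENNReal

open scoped Pointwise in
/-- A closed subgroup of positive Haar measure in a compact group is open (Steinhaus). -/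
private lemma subgroup_isOpen_of_pos_measure {H : Type*} [Group H] [TopologicalSpace H]
    [IsTopologicalGroup H] [CompactSpace H] [T2Space H] [MeasurableSpace H] [BorelSpace H]
    (μ : Measure H) [μ.IsHaarMeasure] (N : Subgroup H) (hc : IsClosed (N : Set H))
    (hpos : 0 < μ (N : Set H)) : IsOpen (N : Set H) := by
  have h1 : (N : Set H) / (N : Set H) ∈ nhds (1 : H) :=
    Measure.div_mem_nhds_one_of_haar_pos μ (N : Set H) hc.measurableSet hpos
  have h2 : (N : Set H) / (N : Set H) ⊆ (N : Set H) := by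
    rintro x ⟨a, ha, b, hb, rfl⟩
    exact N.div_mem ha hb
  exact Subgroup.isOpen_of_mem_nhds N (Filter.mem_of_superset h1 h2)

/-- In a compact Hausdorff space with an inner regular probability measure, any closed null set
has open supersets of arbitrarily small measure. -/
private lemma small_open_superset {X : Type*} [TopologicalSpace X] [T2Space X]
    [MeasurableSpace X] [BorelSpace X] (μ : Measure X) [IsProbabilityMeasure μ]
    [μ.InnerRegular] {C : Set X} (hC : IsClosed C) (hC0 : μ C = 0)
    {ε : ℝ≥0∞} (hε : 0 < ε) : ∃ U, IsOpen U ∧ C ⊆ U ∧ μ U ≤ ε := by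
  rcases le_or_gt 1 ε with h1 | h1
  · exact ⟨Set.univ, isOpen_univ, Set.subset_univ _, by
      simpa [measure_univ] using h1⟩
  · have hCc : μ Cᶜ = 1 := by
      rw [measure_compl hC.measurableSet (measure_ne_top μ C), hC0, measure_univ, tsub_zero]
    have hlt : (1 : ℝ≥0∞) - ε < μ Cᶜ := by
      rw [hCc]
      exact ENNReal.sub_lt_self ENNReal.one_ne_top one_ne_zero hε.ne'
    obtain ⟨F, hFC, hFcomp, hFlt⟩ := hC.measurableSet.compl.exists_lt_isCompact hlt
    refine ⟨Fᶜ, hFcomp.isClosed.isOpen_compl, ?_, ?_⟩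
    · intro x hx
      simp only [Set.mem_compl_iff]
      intro hxF
      exact (hFC hxF) hx
    · have hμF : μ Fᶜ = 1 - μ F := by
        rw [measure_compl hFcomp.isClosed.measurableSet (measure_ne_top μ F), measure_univ]
      rw [hμF, tsub_le_iff_right]
      calc (1 : ℝ≥0∞) = (1 - ε) + ε := (tsub_add_cancel_of_le h1.le).symm
        _ ≤ μ F + ε := add_le_add_left hFlt.le _
        _ = ε + μ F := add_comm _ _

/-- Covering lemma: if a set `A` is covered by finitely many sets `W i` and over each `W i`
the "fibers" `Z g` are contained in a small set `V i`, then the graph-like set sits inside a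
set of small product measure. -/
private lemma cover_aux {K G : Type*} {ι : Type*} [MeasurableSpace K] [MeasurableSpace G]
    (ν : Measure K) (μ : Measure G) [SFinite μ]
    (Z : G → Set K) (ε : ℝ≥0∞) :
    ∀ (L : List ι) (V : ι → Set K) (W : ι → Set G),
      (∀ i ∈ L, MeasurableSet (W i)) →
      (∀ i ∈ L, ν (V i) ≤ ε) →
      (∀ i ∈ L, ∀ g ∈ W i, Z g ⊆ V i) →
      ∀ (A : Set G), A ⊆ ⋃ i ∈ L, W i →
      ∃ T : Set (K × G),
        (∀ k g, g ∈ A → k ∈ Z g → (k, g) ∈ T) ∧ (ν.prod μ) T ≤ ε * μ A := by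
  intro L
  induction L with
  | nil =>
    intro V W _ _ _ A hA
    refine ⟨∅, ?_, by simp⟩
    intro k g hg _
    have : g ∈ ⋃ i ∈ ([] : List ι), W i := hA hg
    simp at this
  | cons i L ih =>
    intro V W hWm hVe hZV A hA
    have hsub : A \ W i ⊆ ⋃ j ∈ L, W j := by
      intro g hg
      have := hA hg.1
      simp only [List.mem_cons, Set.mem_iUnion, exists_prop] at this ⊢
      obtain ⟨j, hj | hj, hgj⟩ := this
      · exact absurd (hj ▸ hgj) hg.2
      · exact ⟨j, hj, hgj⟩
    obtain ⟨T', hT'mem, hT'le⟩ := ih V W (fun j hj => hWm j (List.mem_cons_of_mem i hj))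
      (fun j hj => hVe j (List.mem_cons_of_mem i hj))
      (fun j hj => hZV j (List.mem_cons_of_mem i hj)) (A \ W i) hsub
    refine ⟨(V i ×ˢ (A ∩ W i)) ∪ T', ?_, ?_⟩
    · intro k g hg hk
      by_cases hgW : g ∈ W i
      · exact Or.inl ⟨hZV i (List.mem_cons_self) g hgW hk, hg, hgW⟩
      · exact Or.inr (hT'mem k g ⟨hg, hgW⟩ hk)
    · calc (ν.prod μ) ((V i ×ˢ (A ∩ W i)) ∪ T')
          ≤ (ν.prod μ) (V i ×ˢ (A ∩ W i)) + (ν.prod μ) T' := measure_union_le _ _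
        _ = ν (V i) * μ (A ∩ W i) + (ν.prod μ) T' := by rw [Measure.prod_prod]
        _ ≤ ε * μ (A ∩ W i) + ε * μ (A \ W i) :=
            add_le_add (mul_le_mul_left (hVe i (List.mem_cons_self)) _) hT'le
        _ = ε * (μ (A ∩ W i) + μ (A \ W i)) := (mul_add _ _ _).symm
        _ = ε * μ A := by rw [measure_inter_add_diff A (hWm i (List.mem_cons_self))]

/-- Main auxiliary result, for an arbitrary closed connected subgroup. -/
private lemma main_aux {G : Type*} [Group G] [TopologicalSpace G] [IsTopologicalGroup G]
    [CompactSpace G] [T2Space G] [MeasurableSpace G] [BorelSpace G]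
    (μ : Measure G) [μ.IsHaarMeasure] [IsProbabilityMeasure μ]
    (K : Subgroup G) (hKclosed : IsClosed (K : Set G))
    (hKconn : IsPreconnected (K : Set G))
    (ν : Measure K) [ν.IsHaarMeasure] [IsProbabilityMeasure ν]
    (h : 0 < haarCommProb K ν μ) :
    IsOpen ((Subgroup.centralizer (K : Set G) : Set G)) := by
  classical
  haveI hKcs : CompactSpace K := isCompact_iff_compactSpace.mp hKclosed.isCompact
  haveI hKconn' : ConnectedSpace K :=
    Subtype.connectedSpace ⟨⟨1, K.one_mem⟩, hKconn⟩
  haveI hKbs : BorelSpace K := Subtype.borelSpace (K : Set G)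
  set C : Subgroup G := Subgroup.centralizer (K : Set G) with hCdef
  -- C is closed
  have hCclosed : IsClosed (C : Set G) := by
    have hCeq : (C : Set G) = ⋂ x ∈ (K : Set G), {g : G | x * g = g * x} := by
      ext g
      simp only [hCdef, SetLike.mem_coe, Subgroup.mem_centralizer_iff, Set.mem_iInter,
        Set.mem_setOf_eq]
    rw [hCeq]
    exact isClosed_biInter fun x _ =>
      isClosed_eq (continuous_const.mul continuous_id) (continuous_id.mul continuous_const)
  -- the fiber subgroups
  set Z : G → Set K := fun g => {k : K | g * (k : G) = (k : G) * g} with hZdef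
  have hZclosed : ∀ g, IsClosed (Z g) := fun g =>
    isClosed_eq (continuous_const.mul continuous_subtype_val)
      (continuous_subtype_val.mul continuous_const)
  -- if the fiber over g has positive measure, then g centralizes K
  have step2 : ∀ g : G, g ∉ C → ν (Z g) = 0 := by
    intro g hg
    by_contra h0
    have hpos : 0 < ν (Z g) := pos_iff_ne_zero.mpr h0
    set N : Subgroup K := (Subgroup.centralizer {g}).comap K.subtype with hNdef
    have hNcarrier : (N : Set K) = Z g := by
      ext k
      simp only [hNdef, hZdef, SetLike.mem_coe, Subgroup.mem_comap, Subgroup.mem_centralizer_iff,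
        Set.mem_singleton_iff, Set.mem_setOf_eq, Subgroup.coe_subtype]
      constructor
      · intro h'; exact h' g rfl
      · rintro h' x rfl; exact h'
    have hNopen : IsOpen (N : Set K) := by
      apply subgroup_isOpen_of_pos_measure ν N
      · rw [hNcarrier]; exact hZclosed g
      · rw [hNcarrier]; exact hpos
    have hNuniv : (N : Set K) = Set.univ :=
      IsClopen.eq_univ ⟨N.isClosed_of_isOpen hNopen, hNopen⟩ ⟨1, N.one_mem⟩
    apply hg
    rw [hCdef, Subgroup.mem_centralizer_iff]
    intro x hx
    have hxZ : (⟨x, hx⟩ : K) ∈ Z g := by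
      rw [← hNcarrier, hNuniv]; trivial
    simpa [hZdef, eq_comm] using hxZ
  -- by contradiction: if C is not open, then μ C = 0
  by_contra hCnotopen
  have hC0 : μ (C : Set G) = 0 := by
    by_contra h0
    exact hCnotopen (subgroup_isOpen_of_pos_measure μ C hCclosed (pos_iff_ne_zero.mpr h0))
  -- upper semicontinuity of g ↦ Z g
  have usc : ∀ g₀ : G, ∀ V : Set K, IsOpen V → Z g₀ ⊆ V →
      ∃ Wg : Set G, IsOpen Wg ∧ g₀ ∈ Wg ∧ ∀ g ∈ Wg, Z g ⊆ V := by
    intro g₀ V hVopen hZV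
    set F' : Set (K × G) := {p : K × G | p.2 * (p.1 : G) = (p.1 : G) * p.2} ∩
      (Prod.fst ⁻¹' Vᶜ) with hF'def
    have hF'closed : IsClosed F' := by
      apply IsClosed.inter
      · exact isClosed_eq ((continuous_snd).mul (continuous_subtype_val.comp continuous_fst))
          ((continuous_subtype_val.comp continuous_fst).mul continuous_snd)
      · exact hVopen.isClosed_compl.preimage continuous_fst
    have hEclosed : IsClosed (Prod.snd '' F') := isClosedMap_snd_of_compactSpace F' hF'closed
    refine ⟨(Prod.snd '' F')ᶜ, hEclosed.isOpen_compl, ?_, ?_⟩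
    · intro hmem
      obtain ⟨⟨k, g⟩, ⟨hcomm, hknV⟩, hEq⟩ := hmem
      simp only at hEq
      subst hEq
      exact hknV (hZV hcomm)
    · intro g hgW k hk
      by_contra hkV
      exact hgW ⟨(k, g), ⟨hk, hkV⟩, rfl⟩
  -- the commuting probability is ≤ 2ε for every ε > 0
  have key : ∀ ε : ℝ≥0∞, 0 < ε → haarCommProb K ν μ ≤ 2 * ε := by
    intro ε hε
    obtain ⟨U, hUopen, hCU, hUε⟩ := small_open_superset μ hCclosed hC0 hε
    have hch : ∀ i : {g : G // g ∉ C}, ∃ (Vi : Set K) (Wi : Set G),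
        IsOpen Wi ∧ (i : G) ∈ Wi ∧ ν Vi ≤ ε ∧ ∀ g ∈ Wi, Z g ⊆ Vi := by
      rintro ⟨g, hg⟩
      obtain ⟨Vi, hViopen, hZVi, hViε⟩ := small_open_superset ν (hZclosed g) (step2 g hg) hε
      obtain ⟨Wi, hWiopen, hgWi, hWi⟩ := usc g Vi hViopen hZVi
      exact ⟨Vi, Wi, hWiopen, hgWi, hViε, hWi⟩
    choose V W hWopen hmemW hVε hZV using hch
    have hAcomp : IsCompact Uᶜ := hUopen.isClosed_compl.isCompact
    have hAcover : Uᶜ ⊆ ⋃ i : {g : G // g ∉ C}, W i := by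
      intro g hg
      have hgC : g ∉ C := fun hgC => hg (hCU hgC)
      exact Set.mem_iUnion.mpr ⟨⟨g, hgC⟩, hmemW ⟨g, hgC⟩⟩
    obtain ⟨t, ht⟩ := hAcomp.elim_finite_subcover W (fun i => hWopen i) hAcover
    have htL : Uᶜ ⊆ ⋃ i ∈ t.toList, W i := by
      intro g hg
      have := ht hg
      simp only [Set.mem_iUnion, exists_prop] at this ⊢
      obtain ⟨i, hit, hgi⟩ := this
      exact ⟨i, Finset.mem_toList.mpr hit, hgi⟩
    obtain ⟨T, hTmem, hTle⟩ := cover_aux ν μ Z ε t.toList V W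
      (fun i _ => (hWopen i).measurableSet) (fun i _ => hVε i) (fun i _ => hZV i) Uᶜ htL
    have hS : haarCommProb K ν μ =
        (ν.prod μ) {p : K × G | (p.1 : G) * p.2 = p.2 * (p.1 : G)} := rfl
    have hsub : {p : K × G | (p.1 : G) * p.2 = p.2 * (p.1 : G)} ⊆
        (Set.univ ×ˢ U) ∪ T := by
      rintro ⟨k, g⟩ hp
      by_cases hgU : g ∈ U
      · exact Or.inl ⟨Set.mem_univ _, hgU⟩
      · exact Or.inr (hTmem k g hgU hp.symm)
    rw [hS]
    calc (ν.prod μ) {p : K × G | (p.1 : G) * p.2 = p.2 * (p.1 : G)}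
        ≤ (ν.prod μ) ((Set.univ ×ˢ U) ∪ T) := measure_mono hsub
      _ ≤ (ν.prod μ) (Set.univ ×ˢ U) + (ν.prod μ) T := measure_union_le _ _
      _ ≤ ν Set.univ * μ U + ε * μ Uᶜ := by
          rw [Measure.prod_prod]; exact add_le_add_right hTle _
      _ ≤ 1 * ε + ε * 1 :=
          add_le_add (mul_le_mul' (le_of_eq measure_univ) hUε)
            (mul_le_mul_right prob_le_one _)
      _ = 2 * ε := by ring
  -- conclude
  have hzero : haarCommProb K ν μ ≤ 0 := by
    apply ENNReal.le_of_forall_pos_le_add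
    intro ε hε _
    have hε2 : (0 : ℝ≥0∞) < (ε : ℝ≥0∞) / 2 :=
      ENNReal.div_pos (by exact_mod_cast hε.ne') ENNReal.ofNat_ne_top
    calc haarCommProb K ν μ ≤ 2 * ((ε : ℝ≥0∞) / 2) := key _ hε2
      _ = ε := ENNReal.mul_div_cancel two_ne_zero ENNReal.ofNat_ne_top
      _ = 0 + ε := (zero_add _).symm
  exact absurd (le_antisymm hzero zero_le) h.ne'

theorem stmt15 {G : Type*} [Group G] [TopologicalSpace G] [IsTopologicalGroup G]
    [CompactSpace G] [T2Space G] [MeasurableSpace G] [BorelSpace G]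
    (μ : Measure G) [μ.IsHaarMeasure] [IsProbabilityMeasure μ]
    (ν : Measure (Subgroup.connectedComponentOfOne G)) [ν.IsHaarMeasure]
    [IsProbabilityMeasure ν]
    (h : 0 < haarCommProb (Subgroup.connectedComponentOfOne G) ν μ) :
    IsOpen ((Subgroup.centralizer (Subgroup.connectedComponentOfOne G : Set G) : Set G)) := by
  exact main_aux μ (Subgroup.connectedComponentOfOne G)
    (isClosed_connectedComponent (x := (1 : G)))
    (isConnected_connectedComponent (x := (1 : G))).isPreconnected ν h
end

section
/- Let G be a compact group with identity component G₀. If the centralizer C_G(G₀) is open in G, then there exists ε > 0 such that Pr(⟨x⟩, G) ≥ ε for every x ∈ G₀; in fact one may take ε = [G : C_G(G₀)]⁻¹. -/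
open MeasureTheory
open scoped ENNReal Pointwise

theorem stmt16 {G : Type*} [Group G] [TopologicalSpace G] [IsTopologicalGroup G]
    [CompactSpace G] [T2Space G] [MeasurableSpace G] [BorelSpace G]
    (μ : Measure G) [μ.IsHaarMeasure] [IsProbabilityMeasure μ]
    (h : IsOpen ((Subgroup.centralizer (Subgroup.connectedComponentOfOne G : Set G) : Set G))) :
    (Subgroup.centralizer (Subgroup.connectedComponentOfOne G : Set G)).index ≠ 0 ∧
      ∀ x ∈ Subgroup.connectedComponentOfOne G,
        ∀ (ν : Measure ((Subgroup.zpowers x).topologicalClosure)),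
          ν.IsHaarMeasure → IsProbabilityMeasure ν →
          ((Subgroup.centralizer (Subgroup.connectedComponentOfOne G : Set G)).index :
              ℝ≥0∞)⁻¹ ≤
            haarCommProb ((Subgroup.zpowers x).topologicalClosure) ν μ := by
  set C := Subgroup.centralizer (Subgroup.connectedComponentOfOne G : Set G) with hC
  have hfin : Finite (G ⧸ C) := C.quotient_finite_of_isOpen h
  have hFI : C.FiniteIndex := Subgroup.finiteIndex_of_finite_quotient (H := C)
  have hne : C.index ≠ 0 := hFI.index_ne_zero
  -- measure of C is at least (index)⁻¹
  have hcover : (Set.univ : Set G) ⊆ ⋃ q : G ⧸ C, (Quotient.out q) • (C : Set G) := by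
    intro g _
    refine Set.mem_iUnion.mpr ⟨QuotientGroup.mk g, ?_⟩
    rw [Set.mem_smul_set_iff_inv_smul_mem]
    have : (QuotientGroup.mk (Quotient.out (QuotientGroup.mk g : G ⧸ C)) : G ⧸ C)
        = QuotientGroup.mk g := Quotient.out_eq _
    exact QuotientGroup.eq.mp this
  have hmeasC : ((C.index : ℝ≥0∞))⁻¹ ≤ μ (C : Set G) := by
    haveI : Fintype (G ⧸ C) := Fintype.ofFinite _
    have h1 : μ Set.univ ≤ ∑' q : G ⧸ C, μ ((Quotient.out q) • (C : Set G)) :=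
      le_trans (measure_mono hcover) (measure_iUnion_le _)
    have h2 : ∀ q : G ⧸ C, μ ((Quotient.out q) • (C : Set G)) = μ (C : Set G) := fun q =>
      measure_smul μ (Quotient.out q) (C : Set G)
    simp only [h2, measure_univ, tsum_fintype, Finset.sum_const, Finset.card_univ] at h1
    have hcard : (Fintype.card (G ⧸ C) : ℝ≥0∞) = (C.index : ℝ≥0∞) := by
      rw [Subgroup.index, Nat.card_eq_fintype_card]
    have h1' : (1 : ℝ≥0∞) ≤ (C.index : ℝ≥0∞) * μ (C : Set G) := by
      calc (1 : ℝ≥0∞) ≤ Fintype.card (G ⧸ C) • μ (C : Set G) := h1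
        _ = (C.index : ℝ≥0∞) * μ (C : Set G) := by rw [nsmul_eq_mul, hcard]
    rw [ENNReal.inv_le_iff_inv_le, ← one_div, ENNReal.div_le_iff_le_mul (by simp)
      (Or.inl (by simp [hne]))]
    exact h1'
  refine ⟨hne, fun x hx ν hνH hνP => ?_⟩
  have hKle : (Subgroup.zpowers x).topologicalClosure ≤ Subgroup.connectedComponentOfOne G := by
    apply Subgroup.topologicalClosure_minimal
    · rwa [Subgroup.zpowers_le]
    · exact isClosed_connectedComponent
  have hsub : (Set.univ : Set ((Subgroup.zpowers x).topologicalClosure)) ×ˢ (C : Set G) ⊆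
      {p : ((Subgroup.zpowers x).topologicalClosure) × G |
        (p.1 : G) * p.2 = p.2 * (p.1 : G)} := by
    rintro ⟨k, g⟩ ⟨-, hg⟩
    show (k : G) * g = g * (k : G)
    exact Subgroup.mem_centralizer_iff.mp hg (k : G) (hKle k.2)
  calc ((C.index : ℝ≥0∞))⁻¹ ≤ μ (C : Set G) := hmeasC
    _ = ν Set.univ * μ (C : Set G) := by rw [measure_univ, one_mul]
    _ = (ν.prod μ) ((Set.univ : Set ((Subgroup.zpowers x).topologicalClosure)) ×ˢ (C : Set G)) :=
        (Measure.prod_prod _ _).symm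
    _ ≤ haarCommProb ((Subgroup.zpowers x).topologicalClosure) ν μ := measure_mono hsub
end

section
/- Let l, n be positive integers and let K be a subgroup of a compact group G such that every conjugacy class of G containing an l-th power x^l with x ∈ K has size at most n. Then Pr(⟨g⟩, G) ≥ 1/(l·n) for every g ∈ K; that is, K is (1/(ln))-central in G. -/
open MeasureTheory
open scoped ENNReal

/-- If a probability measure on a group is left-invariant and the whole group is covered by
finitely many left translates of a set `A`, indexed by a finset `s`, then
`1 ≤ s.card * μ A`. -/
lemma one_le_card_mul_measure {G : Type*} [Group G] [MeasurableSpace G] [MeasurableMul G]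
    (μ : Measure G) [μ.IsMulLeftInvariant] [IsProbabilityMeasure μ]
    {ι : Type*} (s : Finset ι) (t : ι → G) (A : Set G)
    (hcover : ∀ x : G, ∃ i ∈ s, (t i)⁻¹ * x ∈ A) :
    1 ≤ (s.card : ℝ≥0∞) * μ A := by
  have hsub : (Set.univ : Set G) ⊆ ⋃ i ∈ s, (fun x => (t i)⁻¹ * x) ⁻¹' A := by
    intro x _
    obtain ⟨i, hi, hx⟩ := hcover x
    exact Set.mem_biUnion hi hx
  calc (1 : ℝ≥0∞) = μ Set.univ := (measure_univ).symm
    _ ≤ μ (⋃ i ∈ s, (fun x => (t i)⁻¹ * x) ⁻¹' A) := measure_mono hsub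
    _ ≤ ∑ i ∈ s, μ ((fun x => (t i)⁻¹ * x) ⁻¹' A) := measure_biUnion_finset_le s _
    _ = ∑ i ∈ s, μ A := by
        refine Finset.sum_congr rfl fun i _ => ?_
        exact measure_preimage_mul μ ((t i)⁻¹) A
    _ = (s.card : ℝ≥0∞) * μ A := by rw [Finset.sum_const, nsmul_eq_mul]

lemma inv_le_measure_of_cover {G : Type*} [Group G] [MeasurableSpace G] [MeasurableMul G]
    (μ : Measure G) [μ.IsMulLeftInvariant] [IsProbabilityMeasure μ]
    {ι : Type*} (s : Finset ι) (t : ι → G) (A : Set G)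
    (hcover : ∀ x : G, ∃ i ∈ s, (t i)⁻¹ * x ∈ A)
    {m : ℕ} (hm : 0 < m) (hcard : s.card ≤ m) :
    ((m : ℝ≥0∞))⁻¹ ≤ μ A := by
  have h1 : 1 ≤ (m : ℝ≥0∞) * μ A := by
    calc (1 : ℝ≥0∞) ≤ (s.card : ℝ≥0∞) * μ A := one_le_card_mul_measure μ s t A hcover
      _ ≤ (m : ℝ≥0∞) * μ A := by
          exact mul_le_mul_left (by exact_mod_cast Nat.cast_le.mpr hcard) _
  have hm0 : (m : ℝ≥0∞) ≠ 0 := by exact_mod_cast hm.ne'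
  have hmtop : (m : ℝ≥0∞) ≠ ⊤ := ENNReal.natCast_ne_top m
  calc ((m : ℝ≥0∞))⁻¹ = (m : ℝ≥0∞)⁻¹ * 1 := (mul_one _).symm
    _ ≤ (m : ℝ≥0∞)⁻¹ * ((m : ℝ≥0∞) * μ A) := mul_le_mul_right h1 _
    _ = μ A := by rw [← mul_assoc, ENNReal.inv_mul_cancel hm0 hmtop, one_mul]

theorem stmt19 {G : Type*} [Group G] [TopologicalSpace G] [IsTopologicalGroup G]
    [CompactSpace G] [T2Space G] [MeasurableSpace G] [BorelSpace G]
    (μ : Measure G) [μ.IsHaarMeasure] [IsProbabilityMeasure μ]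
    (l n : ℕ) (hl : 0 < l) (hn : 0 < n)
    (K : Subgroup G) (hKc : IsClosed (K : Set G))
    (h : ∀ x ∈ K, {y : G | ∃ g : G, g⁻¹ * x ^ l * g = y}.Finite ∧
      {y : G | ∃ g : G, g⁻¹ * x ^ l * g = y}.ncard ≤ n) :
    ∀ g ∈ K, ∀ (ν : Measure ((Subgroup.zpowers g).topologicalClosure)),
      ν.IsHaarMeasure → IsProbabilityMeasure ν →
      (((l * n : ℕ) : ℝ≥0∞))⁻¹ ≤
        haarCommProb ((Subgroup.zpowers g).topologicalClosure) ν μ := by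
  intro g hg ν hνHaar hνProb
  haveI : BorelSpace ((Subgroup.zpowers g).topologicalClosure : Subgroup G) :=
    Subtype.borelSpace _
  set x : G := g ^ l with hx
  -- the conjugacy class of x = g^l
  obtain ⟨hFin, hCard⟩ := h g hg
  set F : Set G := {y : G | ∃ s : G, s⁻¹ * x * s = y} with hF
  -- the centralizer of x as a set
  set C : Set G := {y : G | x * y = y * x} with hC
  -- the closure of the powers of g^l
  set Sx : Set G := closure ((Subgroup.zpowers x : Set G)) with hSx
  -- Step B : μ C ≥ 1/n
  have hchoice : ∀ y ∈ F, ∃ t : G, t * x * t⁻¹ = y := by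
    intro y hy
    obtain ⟨s, hs⟩ := hy
    exact ⟨s⁻¹, by rw [← hs]; group⟩
  classical
  choose! t ht using hchoice
  have hμC : ((n : ℝ≥0∞))⁻¹ ≤ μ C := by
    refine inv_le_measure_of_cover μ hFin.toFinset t C ?_ hn ?_
    · intro s
      have hyF : s * x * s⁻¹ ∈ F := ⟨s⁻¹, by group⟩
      refine ⟨s * x * s⁻¹, hFin.mem_toFinset.mpr hyF, ?_⟩
      have h1 : t (s * x * s⁻¹) * x * (t (s * x * s⁻¹))⁻¹ = s * x * s⁻¹ := ht _ hyF
      show x * ((t (s * x * s⁻¹))⁻¹ * s) = ((t (s * x * s⁻¹))⁻¹ * s) * x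
      set u := t (s * x * s⁻¹) with hu
      have h2 : x * u⁻¹ * s = u⁻¹ * (u * x * u⁻¹) * s := by group
      rw [h1] at h2
      calc x * (u⁻¹ * s) = x * u⁻¹ * s := by group
        _ = u⁻¹ * (s * x * s⁻¹) * s := h2
        _ = u⁻¹ * s * x := by group
    · rw [← Set.ncard_eq_toFinset_card F hFin]
      exact hCard
  -- Step A : cover of the closure of ⟨g⟩ by translates of Sx
  have hgH : g ∈ (Subgroup.zpowers g).topologicalClosure :=
    Subgroup.le_topologicalClosure _ (Subgroup.mem_zpowers g)
  set a : ((Subgroup.zpowers g).topologicalClosure : Subgroup G) := ⟨g, hgH⟩ with ha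
  have hSxClosed : IsClosed Sx := isClosed_closure
  -- every element of the closure of ⟨g⟩ lies in some g^i • Sx, i < l
  have hGcover : (((Subgroup.zpowers g).topologicalClosure : Subgroup G) : Set G) ⊆
      ⋃ i ∈ Finset.range l, (fun z => g ^ i * z) '' Sx := by
    have hclosed : IsClosed (⋃ i ∈ Finset.range l, (fun z => g ^ i * z) '' Sx) := by
      refine Set.Finite.isClosed_biUnion (Finset.finite_toSet _) fun i _ => ?_
      exact (Homeomorph.mulLeft (g ^ i)).isClosedMap Sx hSxClosed
    have hsub : (Subgroup.zpowers g : Set G) ⊆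
        ⋃ i ∈ Finset.range l, (fun z => g ^ i * z) '' Sx := by
      rintro _ ⟨k, rfl⟩
      have hl' : (0 : ℤ) < (l : ℤ) := by exact_mod_cast hl
      set r : ℤ := k % (l : ℤ) with hr
      set q : ℤ := k / (l : ℤ) with hq
      have hr0 : 0 ≤ r := Int.emod_nonneg k (by exact_mod_cast hl.ne')
      have hrl : r < (l : ℤ) := Int.emod_lt_of_pos k hl'
      have hdm : (l : ℤ) * (k / (l : ℤ)) + k % (l : ℤ) = k := Int.mul_ediv_add_emod k (l : ℤ)
      have hk : k = r + (l : ℤ) * q := by rw [hr, hq]; linarith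
      have hxq : x ^ q ∈ Sx := subset_closure ⟨q, rfl⟩
      have hiq : r.toNat ∈ Finset.range l := by
        simp only [Finset.mem_range]; omega
      refine Set.mem_biUnion hiq ⟨x ^ q, hxq, ?_⟩
      show g ^ (r.toNat) * x ^ q = g ^ k
      rw [hx, ← zpow_natCast g l, ← zpow_mul, ← zpow_natCast g r.toNat,
        Int.toNat_of_nonneg hr0, ← zpow_add, ← hk]
    exact closure_minimal hsub hclosed
  -- the subset of the closure of ⟨g⟩ corresponding to Sx
  set A : Set ((Subgroup.zpowers g).topologicalClosure : Subgroup G) :=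
    {z | (z : G) ∈ Sx} with hA
  have hνA : ((l : ℝ≥0∞))⁻¹ ≤ ν A := by
    refine inv_le_measure_of_cover ν (Finset.range l) (fun i => a ^ i) A ?_ hl (by simp)
    intro z
    have hz : (z : G) ∈ (((Subgroup.zpowers g).topologicalClosure : Subgroup G) : Set G) := z.2
    have h3 := hGcover hz
    rw [Set.mem_iUnion₂] at h3
    obtain ⟨i, hi, w, hw, hww⟩ := h3
    refine ⟨i, hi, ?_⟩
    show (((a ^ i)⁻¹ * z : ((Subgroup.zpowers g).topologicalClosure : Subgroup G)) : G) ∈ Sx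
    have hcoe : (((a ^ i)⁻¹ * z : ((Subgroup.zpowers g).topologicalClosure : Subgroup G)) : G)
        = (g ^ i)⁻¹ * (z : G) := by
      push_cast
      rfl
    rw [hcoe, ← hww]
    simpa using hw
  -- Step C : A ×ˢ C is contained in the commuting set
  have hprod : A ×ˢ C ⊆
      {p : ((Subgroup.zpowers g).topologicalClosure : Subgroup G) × G |
        (p.1 : G) * p.2 = p.2 * (p.1 : G)} := by
    rintro ⟨z, y⟩ ⟨hz, hy⟩
    have hyC : x * y = y * x := hy
    have hcent : Sx ⊆ {w : G | w * y = y * w} := by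
      refine closure_minimal ?_ (isClosed_eq (continuous_id.mul continuous_const)
        (continuous_const.mul continuous_id))
      rintro _ ⟨m, rfl⟩
      exact Commute.zpow_left hyC m
    exact hcent hz
  -- combine
  have key : (ν.prod μ) (A ×ˢ C) = ν A * μ C := Measure.prod_prod A C
  have hmono : (ν.prod μ) (A ×ˢ C) ≤
      haarCommProb ((Subgroup.zpowers g).topologicalClosure) ν μ := measure_mono hprod
  have hln : (((l * n : ℕ) : ℝ≥0∞))⁻¹ = ((l : ℝ≥0∞))⁻¹ * ((n : ℝ≥0∞))⁻¹ := by
    push_cast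
    rw [ENNReal.mul_inv (Or.inl (by exact_mod_cast hl.ne')) (Or.inl (ENNReal.natCast_ne_top l))]
  calc (((l * n : ℕ) : ℝ≥0∞))⁻¹ = ((l : ℝ≥0∞))⁻¹ * ((n : ℝ≥0∞))⁻¹ := hln
    _ ≤ ν A * μ C := mul_le_mul' hνA hμC
    _ = (ν.prod μ) (A ×ˢ C) := key.symm
    _ ≤ haarCommProb ((Subgroup.zpowers g).topologicalClosure) ν μ := hmono
end
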